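/- arXiv:1512.03198 — 6 statements merged into one kernel-verified Lean document; each statement's English description precedes it below -/
import Mathlib

section
/- Let m, k ∈ ℕ with m ≥ 2 and 1 ≤ k ≤ m−1. Let I be a positive nondecreasing function on (0,1) with ∫_0^1 ds/I(s) < ∞, and set ψ_I(t) = (∫_0^t dr/I(r))^m for t ∈ (0,1). Then there exists a constant C, depending only on m, such that for every nonincreasing function g : (0,1) → [0,∞) satisfying g(t) ≤ 1/ψ_I(t) for all t ∈ (0,1), one has H_I^k g(t) ≤ C · g(t)^{1−k/m} for all t ∈ (0,1). -/
open MeasureTheory ENNReal NNReal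

/-- The Hardy-type operator `H_I g (t) = ∫_t^1 g(r)/I(r) dr`, acting on nonnegative
measurable functions on `(0,1)`, realized as `[0,∞]`-valued functions on `ℝ`. -/
noncomputable def HI (I : ℝ → ℝ) (g : ℝ → ℝ≥0∞) : ℝ → ℝ≥0∞ :=
  fun t => ∫⁻ r in Set.Ioo t 1, g r / ENNReal.ofReal (I r)

/-- A rearrangement-invariant function norm on `(0,1)`. -/
structure RINorm where
  N : (ℝ → ℝ≥0∞) → ℝ≥0∞
  eq_zero_iff : ∀ f : ℝ → ℝ≥0∞, Measurable f →
    (N f = 0 ↔ ∀ᵐ t ∂(volume.restrict (Set.Ioo (0:ℝ) 1)), f t = 0)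
  smul_eq : ∀ f : ℝ → ℝ≥0∞, Measurable f → ∀ c : ℝ≥0,
    N (fun t => (c : ℝ≥0∞) * f t) = (c : ℝ≥0∞) * N f
  add_le : ∀ f g : ℝ → ℝ≥0∞, Measurable f → Measurable g →
    N (fun t => f t + g t) ≤ N f + N g
  mono : ∀ f g : ℝ → ℝ≥0∞, Measurable f → Measurable g →
    (∀ᵐ t ∂(volume.restrict (Set.Ioo (0:ℝ) 1)), f t ≤ g t) → N f ≤ N g
  fatou : ∀ (f : ℕ → ℝ → ℝ≥0∞) (g : ℝ → ℝ≥0∞),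
    (∀ j, Measurable (f j)) → Measurable g →
    (∀ j t, f j t ≤ f (j + 1) t) →
    (∀ᵐ t ∂(volume.restrict (Set.Ioo (0:ℝ) 1)), (⨆ j, f j t) = g t) →
    (⨆ j, N (f j)) = N g
  chi_lt_top : N ((Set.Ioo (0:ℝ) 1).indicator fun _ => 1) < ⊤
  lintegral_le : ∃ c : ℝ≥0, 0 < c ∧ ∀ f : ℝ → ℝ≥0∞, Measurable f →
    (∫⁻ t in Set.Ioo (0:ℝ) 1, f t) ≤ (c : ℝ≥0∞) * N f
  equimeasurable : ∀ f g : ℝ → ℝ≥0∞, Measurable f → Measurable g →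
    (∀ lam : ℝ≥0∞, 0 < lam →
      volume {t ∈ Set.Ioo (0:ℝ) 1 | lam < f t}
        = volume {t ∈ Set.Ioo (0:ℝ) 1 | lam < g t}) →
    N f = N g


lemma key_measure_bound (f₀ : ℝ → ℝ≥0∞)
    {E : Set ℝ} (hE0 : ∀ r ∈ E, (0:ℝ) < r) (hE1 : ∀ r ∈ E, r ≤ (1:ℝ)) {D : ℝ≥0∞}
    (hD : ∀ r ∈ E, (∫⁻ s in Set.Ioo (0:ℝ) r, f₀ s) ≤ D) :
    (∫⁻ r in E, f₀ r) ≤ D := by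
  rcases E.eq_empty_or_nonempty with rfl | hne
  · simp
  have hbdd : BddAbove E := ⟨1, fun x hx => hE1 x hx⟩
  set c := sSup E with hc
  obtain ⟨u, hu_mono, hu_tend, hu_mem⟩ := exists_seq_tendsto_sSup hne hbdd
  have hsub : E ⊆ Set.Ioo 0 c ∪ {c} := by
    intro r hr
    rcases lt_or_eq_of_le (le_csSup hbdd hr) with h | h
    · exact Or.inl ⟨hE0 r hr, h⟩
    · exact Or.inr h
  have hcov : Set.Ioo (0:ℝ) c ⊆ ⋃ n, Set.Ioo (0:ℝ) (u n) := by
    intro x hx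
    by_contra hcon
    simp only [Set.mem_iUnion, Set.mem_Ioo, not_exists, not_and] at hcon
    have hle : ∀ n, u n ≤ x := fun n => not_lt.1 (fun h => (hcon n hx.1 h).elim)
    exact absurd (le_of_tendsto hu_tend (Filter.Eventually.of_forall hle)) (not_le.2 hx.2)
  have hmonoset : Monotone fun n => Set.Ioo (0:ℝ) (u n) := by
    intro a b hab
    exact Set.Ioo_subset_Ioo le_rfl (hu_mono hab)
  have hunion : (∫⁻ r in ⋃ n, Set.Ioo (0:ℝ) (u n), f₀ r) ≤ D := by
    have happ : ∀ s : Set ℝ, MeasurableSet s →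
        (volume.withDensity f₀) s = ∫⁻ r in s, f₀ r := fun s hs => withDensity_apply f₀ hs
    rw [← happ _ (MeasurableSet.iUnion fun n => measurableSet_Ioo)]
    rw [Directed.measure_iUnion (hmonoset.directed_le)]
    refine iSup_le fun n => ?_
    rw [happ _ measurableSet_Ioo]
    exact hD (u n) (hu_mem n)
  calc (∫⁻ r in E, f₀ r) ≤ ∫⁻ r in Set.Ioo 0 c ∪ {c}, f₀ r := lintegral_mono_set hsub
    _ ≤ (∫⁻ r in Set.Ioo 0 c, f₀ r) + ∫⁻ r in ({c} : Set ℝ), f₀ r := lintegral_union_le _ _ _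
    _ = ∫⁻ r in Set.Ioo 0 c, f₀ r := by
        rw [setLIntegral_measure_zero _ _ (measure_singleton c), add_zero]
    _ ≤ ∫⁻ r in ⋃ n, Set.Ioo (0:ℝ) (u n), f₀ r := lintegral_mono_set hcov
    _ ≤ D := hunion

lemma core_estimate (f₀ : ℝ → ℝ≥0∞) (hf₀ : Measurable f₀)
    (hfin : (∫⁻ s in Set.Ioo (0:ℝ) 1, f₀ s) ≠ ⊤)
    (m : ℕ) (hm : 1 ≤ m) (θ : ℝ) (hθ : 2 ≤ (m:ℝ) * θ) (hθ0 : 0 < θ)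
    {A : ℝ≥0∞} (hA0 : A ≠ 0) (hAt : A ≠ ⊤) {t : ℝ} (ht : t ∈ Set.Ioo (0:ℝ) 1) :
    (∫⁻ r in Set.Ioo t 1,
        (min A ((∫⁻ s in Set.Ioo (0:ℝ) r, f₀ s) ^ m)⁻¹) ^ θ * f₀ r)
      ≤ 5 * A ^ (θ - 1/(m:ℝ)) := by
  have hmR : (0:ℝ) < m := Nat.cast_pos.mpr hm
  set φ : ℝ → ℝ≥0∞ := fun x => ∫⁻ s in Set.Ioo (0:ℝ) x, f₀ s with hφdef
  have hφmono : Monotone φ := fun x y hxy =>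
    lintegral_mono_set (Set.Ioo_subset_Ioo le_rfl hxy)
  have hφmeas : Measurable φ := hφmono.measurable
  set B : ℝ≥0∞ := A ^ (-(1/(m:ℝ))) with hBdef
  have hB0 : B ≠ 0 := by
    simp [hBdef, ENNReal.rpow_eq_zero_iff, hA0, hAt]
  have hBt : B ≠ ⊤ := by
    simp [hBdef, ENNReal.rpow_eq_top_iff, hA0, hAt]
  set G : ℝ → ℝ≥0∞ := fun r => (min A ((φ r ^ m)⁻¹)) ^ θ with hGdef
  set E : Set ℝ := Set.Ioo t 1 ∩ {r | φ r ≤ B} with hEdef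
  set F : ℕ → Set ℝ := fun j => Set.Ioo t 1 ∩ {r | 2^j * B < φ r ∧ φ r ≤ 2^(j+1) * B}
    with hFdef
  have hEmeas : MeasurableSet E := measurableSet_Ioo.inter (hφmeas measurableSet_Iic)
  have hFmeas : ∀ j, MeasurableSet (F j) := fun j =>
    measurableSet_Ioo.inter ((measurableSet_Ioc.preimage hφmeas))
  -- coverage
  have hcover : Set.Ioo t 1 ⊆ E ∪ ⋃ j, F j := by
    intro r hr
    by_cases h : φ r ≤ B
    · exact Or.inl ⟨hr, h⟩
    push_neg at h
    have hφrt : φ r ≠ ⊤ := by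
      refine ne_top_of_le_ne_top hfin (hφmono hr.2.le)
    have hex : ∃ n : ℕ, φ r ≤ 2^(n+1) * B := by
      obtain ⟨n, hn⟩ := ENNReal.exists_nat_gt (ENNReal.div_lt_top hφrt hB0).ne
      refine ⟨n, ?_⟩
      have h1 : φ r = φ r / B * B := (ENNReal.div_mul_cancel hB0 hBt).symm
      have h2 : ((n:ℝ≥0∞)) ≤ 2^(n+1) := by
        have : (n:ℕ) ≤ 2^(n+1) := (Nat.lt_two_pow_self (n := n)).le.trans (Nat.pow_le_pow_right (by norm_num) (Nat.le_succ n))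
        exact_mod_cast this
      calc φ r = φ r / B * B := h1
        _ ≤ (n:ℝ≥0∞) * B := mul_le_mul_left hn.le B
        _ ≤ 2^(n+1) * B := mul_le_mul_left h2 B
    right
    refine Set.mem_iUnion.2 ⟨Nat.find hex, hr, ?_, Nat.find_spec hex⟩
    rcases Nat.eq_zero_or_pos (Nat.find hex) with h0 | hpos
    · rw [h0]; simpa using h
    · obtain ⟨j', hj'⟩ := Nat.exists_eq_succ_of_ne_zero hpos.ne'
      rw [hj']
      have := Nat.find_min hex (m := j') (by omega)
      push_neg at this
      exact this
  -- bound on E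
  have hEbound : (∫⁻ r in E, G r * f₀ r) ≤ A ^ (θ - 1/(m:ℝ)) := by
    have h1 : (∫⁻ r in E, G r * f₀ r) ≤ ∫⁻ r in E, A ^ θ * f₀ r := by
      refine lintegral_mono_ae ?_
      filter_upwards [ae_restrict_mem hEmeas] with r hr
      refine mul_le_mul_left ?_ _
      exact ENNReal.rpow_le_rpow (min_le_left _ _) hθ0.le
    have h2 : (∫⁻ r in E, A ^ θ * f₀ r) = A ^ θ * ∫⁻ r in E, f₀ r :=
      lintegral_const_mul' _ _ (ENNReal.rpow_ne_top_of_nonneg hθ0.le hAt)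
    have h3 : (∫⁻ r in E, f₀ r) ≤ B := by
      refine key_measure_bound f₀ (fun r hr => ht.1.trans hr.1.1) (fun r hr => hr.1.2.le)
        (fun r hr => hr.2)
    calc (∫⁻ r in E, G r * f₀ r) ≤ A ^ θ * B :=
          (h1.trans_eq h2).trans (mul_le_mul_right h3 _)
      _ = A ^ (θ - 1/(m:ℝ)) := by
          rw [hBdef, ← ENNReal.rpow_add _ _ hA0 hAt]
          congr 1
  -- bound on each F j
  have hBpow : A ^ (θ - 1/(m:ℝ)) = B ^ (1 - (m:ℝ)*θ) := by
    rw [hBdef, ← ENNReal.rpow_mul]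
    congr 1
    field_simp
    ring
  have hFbound : ∀ j, (∫⁻ r in F j, G r * f₀ r)
      ≤ 2 * (2:ℝ≥0∞) ^ (-(j:ℝ)) * B ^ (1 - (m:ℝ)*θ) := by
    intro j
    have hx0 : (2:ℝ≥0∞)^j * B ≠ 0 := by
      exact mul_ne_zero (pow_ne_zero j (by norm_num)) hB0
    have hxt : (2:ℝ≥0∞)^j * B ≠ ⊤ := by
      exact ENNReal.mul_ne_top (by simp) hBt
    have hpt : ∀ r ∈ F j, G r ≤ (((2:ℝ≥0∞)^j * B) ^ m)⁻¹ ^ θ := by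
      intro r hr
      refine ENNReal.rpow_le_rpow ?_ hθ0.le
      refine (min_le_right _ _).trans ?_
      exact ENNReal.inv_le_inv.2 (pow_le_pow_left' hr.2.1.le m)
    have h1 : (∫⁻ r in F j, G r * f₀ r)
        ≤ (((2:ℝ≥0∞)^j * B) ^ m)⁻¹ ^ θ * ∫⁻ r in F j, f₀ r := by
      rw [← lintegral_const_mul' _ _
        (ENNReal.rpow_ne_top_of_nonneg hθ0.le (ENNReal.inv_ne_top.2 (pow_ne_zero m hx0)))]
      refine lintegral_mono_ae ?_
      filter_upwards [ae_restrict_mem (hFmeas j)] with r hr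
      exact mul_le_mul_left (hpt r hr) _
    have h2 : (∫⁻ r in F j, f₀ r) ≤ 2^(j+1) * B := by
      refine key_measure_bound f₀ (fun r hr => ht.1.trans hr.1.1) (fun r hr => hr.1.2.le)
        (fun r hr => hr.2.2)
    have h3 : (((2:ℝ≥0∞)^j * B) ^ m)⁻¹ ^ θ = ((2:ℝ≥0∞)^j * B) ^ (-((m:ℝ)*θ)) := by
      rw [← ENNReal.rpow_natCast ((2:ℝ≥0∞)^j * B) m, ← ENNReal.rpow_neg, ← ENNReal.rpow_mul,
        neg_mul]
    have h4 : ((2:ℝ≥0∞)^j * B) ^ (-((m:ℝ)*θ)) * (2^(j+1) * B)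
        ≤ 2 * (2:ℝ≥0∞) ^ (-(j:ℝ)) * B ^ (1 - (m:ℝ)*θ) := by
      rw [ENNReal.mul_rpow_of_ne_top (by simp) hBt]
      have e1 : ((2:ℝ≥0∞)^(j+1) * B) = 2 * ((2:ℝ≥0∞)^j * B) := by ring
      rw [e1]
      calc ((2:ℝ≥0∞)^j) ^ (-((m:ℝ)*θ)) * B ^ (-((m:ℝ)*θ)) * (2 * ((2:ℝ≥0∞)^j * B))
          = 2 * (((2:ℝ≥0∞)^j) ^ (-((m:ℝ)*θ)) * (2:ℝ≥0∞)^j) * (B ^ (-((m:ℝ)*θ)) * B) := by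
            ring
        _ = 2 * ((2:ℝ≥0∞)^j) ^ (1-(m:ℝ)*θ) * B ^ (1-(m:ℝ)*θ) := by
            rw [show ((2:ℝ≥0∞)^j) ^ (1-(m:ℝ)*θ)
                = ((2:ℝ≥0∞)^j) ^ (-((m:ℝ)*θ)) * (2:ℝ≥0∞)^j by
              rw [show (1-(m:ℝ)*θ) = -((m:ℝ)*θ) + 1 by ring,
                ENNReal.rpow_add _ _ (pow_ne_zero j (by norm_num)) (by simp),
                ENNReal.rpow_one]]
            rw [show B ^ (1-(m:ℝ)*θ) = B ^ (-((m:ℝ)*θ)) * B by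
              rw [show (1-(m:ℝ)*θ) = -((m:ℝ)*θ) + 1 by ring,
                ENNReal.rpow_add _ _ hB0 hBt, ENNReal.rpow_one]]
        _ ≤ 2 * (2:ℝ≥0∞) ^ (-(j:ℝ)) * B ^ (1-(m:ℝ)*θ) := by
            refine mul_le_mul_left (mul_le_mul_right ?_ 2) _
            rw [← ENNReal.rpow_natCast (2:ℝ≥0∞) j, ← ENNReal.rpow_mul]
            refine ENNReal.rpow_le_rpow_of_exponent_le (by norm_num) ?_
            have hj : (0:ℝ) ≤ (j:ℝ) := Nat.cast_nonneg j
            nlinarith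
    calc (∫⁻ r in F j, G r * f₀ r)
        ≤ (((2:ℝ≥0∞)^j * B) ^ m)⁻¹ ^ θ * (2^(j+1) * B) := h1.trans (mul_le_mul_right h2 _)
      _ = ((2:ℝ≥0∞)^j * B) ^ (-((m:ℝ)*θ)) * (2^(j+1) * B) := by rw [h3]
      _ ≤ 2 * (2:ℝ≥0∞) ^ (-(j:ℝ)) * B ^ (1 - (m:ℝ)*θ) := h4
  -- sum the F j bounds
  have hsum : (∑' j : ℕ, (2 * (2:ℝ≥0∞) ^ (-(j:ℝ)) * B ^ (1 - (m:ℝ)*θ)))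
      = 4 * B ^ (1 - (m:ℝ)*θ) := by
    have e1 : ∀ j : ℕ, 2 * (2:ℝ≥0∞) ^ (-(j:ℝ)) * B ^ (1 - (m:ℝ)*θ)
        = (2 * B ^ (1 - (m:ℝ)*θ)) * ((2:ℝ≥0∞)⁻¹)^j := by
      intro j
      rw [ENNReal.rpow_neg, ENNReal.rpow_natCast, ← ENNReal.inv_pow]
      ring
    rw [tsum_congr e1, ENNReal.tsum_mul_left, ENNReal.tsum_geometric]
    have : (1:ℝ≥0∞) - 2⁻¹ = 2⁻¹ := by
      rw [show (1:ℝ≥0∞) = 2⁻¹ + 2⁻¹ by rw [ENNReal.inv_two_add_inv_two]]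
      exact ENNReal.add_sub_cancel_right (by norm_num)
    rw [this]
    rw [show ((2:ℝ≥0∞)⁻¹)⁻¹ = 2 by simp]
    ring
  -- combine
  calc (∫⁻ r in Set.Ioo t 1, G r * f₀ r)
      ≤ ∫⁻ r in E ∪ ⋃ j, F j, G r * f₀ r := lintegral_mono_set hcover
    _ ≤ (∫⁻ r in E, G r * f₀ r) + ∫⁻ r in ⋃ j, F j, G r * f₀ r := lintegral_union_le _ _ _
    _ ≤ (∫⁻ r in E, G r * f₀ r) + ∑' j, ∫⁻ r in F j, G r * f₀ r :=
        add_le_add_right (lintegral_iUnion_le _ _) _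
    _ ≤ A ^ (θ - 1/(m:ℝ)) + ∑' j : ℕ, (2 * (2:ℝ≥0∞) ^ (-(j:ℝ)) * B ^ (1 - (m:ℝ)*θ)) :=
        add_le_add hEbound (ENNReal.tsum_le_tsum hFbound)
    _ = A ^ (θ - 1/(m:ℝ)) + 4 * A ^ (θ - 1/(m:ℝ)) := by rw [hsum, hBpow]
    _ = 5 * A ^ (θ - 1/(m:ℝ)) := by ring

/-- pointwise estimate for iterates of the Hardy-type operator `H_I`
on nonincreasing functions dominated by `1/ψ_I`. The constant depends only on `m`. -/
theorem pointwise_estimate_for_hardy_operator (m : ℕ) (hm : 2 ≤ m) :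
    ∃ C : ℝ≥0, 0 < C ∧
      ∀ k : ℕ, 1 ≤ k → k ≤ m - 1 →
        ∀ I : ℝ → ℝ, (∀ t ∈ Set.Ioo (0:ℝ) 1, 0 < I t) →
          MonotoneOn I (Set.Ioo (0:ℝ) 1) →
          (∫⁻ s in Set.Ioo (0:ℝ) 1, (ENNReal.ofReal (I s))⁻¹) < ⊤ →
          ∀ g : ℝ → ℝ≥0∞, AntitoneOn g (Set.Ioo (0:ℝ) 1) →
            (∀ t ∈ Set.Ioo (0:ℝ) 1,
              g t ≤ ((∫⁻ r in Set.Ioo (0:ℝ) t, (ENNReal.ofReal (I r))⁻¹) ^ m)⁻¹) →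
            ∀ t ∈ Set.Ioo (0:ℝ) 1,
              (HI I)^[k] g t ≤ (C : ℝ≥0∞) * g t ^ (1 - (k : ℝ) / (m : ℝ)) := by
  refine ⟨5^m, pow_pos (by norm_num) m, ?_⟩
  intro k hk1 hk2 I hIpos hImono hIfin g hg hgle t ht
  have hmR : (0:ℝ) < m := Nat.cast_pos.mpr (by omega)
  set f : ℝ → ℝ≥0∞ := fun r => (ENNReal.ofReal (I r))⁻¹ with hfdef
  have hfae : AEMeasurable f (volume.restrict (Set.Ioo (0:ℝ) 1)) := by
    have hI : AEMeasurable I (volume.restrict (Set.Ioo (0:ℝ) 1)) :=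
      aemeasurable_restrict_of_monotoneOn measurableSet_Ioo hImono
    exact (ENNReal.measurable_ofReal.inv).comp_aemeasurable hI
  set f₀ : ℝ → ℝ≥0∞ := hfae.mk f with hf₀def
  have hf₀ : Measurable f₀ := hfae.measurable_mk
  have h₀ : f =ᵐ[volume.restrict (Set.Ioo (0:ℝ) 1)] f₀ := hfae.ae_eq_mk
  have bridge : ∀ x : ℝ, x ≤ 1 →
      (∫⁻ r in Set.Ioo (0:ℝ) x, f r) = ∫⁻ r in Set.Ioo (0:ℝ) x, f₀ r := by
    intro x hx
    refine lintegral_congr_ae ?_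
    exact h₀.filter_mono (ae_mono
      (Measure.restrict_mono (Set.Ioo_subset_Ioo le_rfl hx) le_rfl))
  have hφfin : (∫⁻ r in Set.Ioo (0:ℝ) 1, f₀ r) ≠ ⊤ := by
    rw [← bridge 1 le_rfl]; exact hIfin.ne
  have hg' : ∀ r ∈ Set.Ioo (0:ℝ) 1,
      g r ≤ (((∫⁻ s in Set.Ioo (0:ℝ) r, f₀ s)) ^ m)⁻¹ := by
    intro r hr
    rw [← bridge r hr.2.le]
    exact hgle r hr
  have main : ∀ k : ℕ, k ≤ m - 1 → ∀ t ∈ Set.Ioo (0:ℝ) 1,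
      (HI I)^[k] g t ≤ 5^k * g t ^ (1 - (k:ℝ)/(m:ℝ)) := by
    intro k
    induction k with
    | zero =>
      intro _ t ht
      simp [ENNReal.rpow_one]
    | succ k IH =>
      intro hk t ht
      have hk' : k ≤ m - 1 := le_trans (Nat.le_succ k) hk
      have hkm2 : k + 2 ≤ m := by omega
      rw [Function.iterate_succ_apply']
      have hθpos : 0 < 1 - (k:ℝ)/(m:ℝ) := by
        rw [sub_pos, div_lt_one hmR]
        exact_mod_cast (by omega : k < m)
      have hθpos' : 0 < 1 - ((k+1:ℕ):ℝ)/(m:ℝ) := by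
        rw [sub_pos, div_lt_one hmR]
        exact_mod_cast (by omega : k + 1 < m)
      set A := g t with hA
      by_cases hA0 : A = 0
      · have hzero : ∀ r ∈ Set.Ioo t 1, (HI I)^[k] g r / ENNReal.ofReal (I r) = 0 := by
          intro r hr
          have hr01 : r ∈ Set.Ioo (0:ℝ) 1 := ⟨ht.1.trans hr.1, hr.2⟩
          have hgr : g r = 0 :=
            le_antisymm (hA0 ▸ hg ht hr01 hr.1.le) (zero_le)
          have h5 := IH hk' r hr01
          rw [hgr, ENNReal.zero_rpow_of_pos hθpos, mul_zero] at h5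
          rw [le_zero_iff.mp h5]
          simp
        have : HI I ((HI I)^[k] g) t = 0 := by
          rw [show HI I ((HI I)^[k] g) t
              = ∫⁻ r in Set.Ioo t 1, (HI I)^[k] g r / ENNReal.ofReal (I r) from rfl]
          rw [← lintegral_zero (μ := volume.restrict (Set.Ioo t 1))]
          refine lintegral_congr_ae ?_
          filter_upwards [ae_restrict_mem measurableSet_Ioo] with r hr
          exact hzero r hr
        rw [this]
        exact zero_le
      by_cases hAt : A = ⊤
      · have : (5:ℝ≥0∞)^(k+1) * A ^ (1 - ((k+1:ℕ):ℝ)/(m:ℝ)) = ⊤ := by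
          rw [hAt, ENNReal.top_rpow_of_pos hθpos']
          simp [ENNReal.mul_top]
        exact this ▸ le_top
      have hcore := core_estimate f₀ hf₀ hφfin m (by omega) (1 - (k:ℝ)/(m:ℝ))
        (by
          have : (m:ℝ) * (1 - (k:ℝ)/(m:ℝ)) = (m:ℝ) - (k:ℝ) := by
            field_simp
          rw [this]
          have : ((k:ℝ)) + 2 ≤ (m:ℝ) := by exact_mod_cast hkm2
          linarith)
        hθpos hA0 hAt ht
      calc HI I ((HI I)^[k] g) t
          = ∫⁻ r in Set.Ioo t 1, (HI I)^[k] g r / ENNReal.ofReal (I r) := rfl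
        _ ≤ ∫⁻ r in Set.Ioo t 1,
              (5:ℝ≥0∞)^k * ((min A ((((∫⁻ s in Set.Ioo (0:ℝ) r, f₀ s)) ^ m)⁻¹))
                ^ (1 - (k:ℝ)/(m:ℝ)) * f₀ r) := by
            refine lintegral_mono_ae ?_
            have hres : volume.restrict (Set.Ioo t 1)
                ≤ volume.restrict (Set.Ioo (0:ℝ) 1) :=
              Measure.restrict_mono (Set.Ioo_subset_Ioo ht.1.le le_rfl) le_rfl
            filter_upwards [h₀.filter_mono (ae_mono hres),
              ae_restrict_mem measurableSet_Ioo] with r hfr hr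
            have hr01 : r ∈ Set.Ioo (0:ℝ) 1 := ⟨ht.1.trans hr.1, hr.2⟩
            have h1 : (HI I)^[k] g r
                ≤ 5^k * (min A ((((∫⁻ s in Set.Ioo (0:ℝ) r, f₀ s)) ^ m)⁻¹))
                  ^ (1 - (k:ℝ)/(m:ℝ)) := by
              refine (IH hk' r hr01).trans (mul_le_mul_right ?_ _)
              refine ENNReal.rpow_le_rpow ?_ hθpos.le
              exact le_min (hg ht hr01 hr.1.le) (hg' r hr01)
            calc (HI I)^[k] g r / ENNReal.ofReal (I r)
                = (HI I)^[k] g r * f r := by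
                  rw [div_eq_mul_inv]
              _ ≤ (5^k * (min A ((((∫⁻ s in Set.Ioo (0:ℝ) r, f₀ s)) ^ m)⁻¹))
                    ^ (1 - (k:ℝ)/(m:ℝ))) * f r := mul_le_mul_left h1 _
              _ = (5:ℝ≥0∞)^k * ((min A ((((∫⁻ s in Set.Ioo (0:ℝ) r, f₀ s)) ^ m)⁻¹))
                    ^ (1 - (k:ℝ)/(m:ℝ)) * f₀ r) := by
                  rw [hfr, mul_assoc]
        _ = (5:ℝ≥0∞)^k * ∫⁻ r in Set.Ioo t 1,
              (min A ((((∫⁻ s in Set.Ioo (0:ℝ) r, f₀ s)) ^ m)⁻¹))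
                ^ (1 - (k:ℝ)/(m:ℝ)) * f₀ r :=
            lintegral_const_mul' _ _ (by simp)
        _ ≤ (5:ℝ≥0∞)^k * (5 * A ^ ((1 - (k:ℝ)/(m:ℝ)) - 1/(m:ℝ))) :=
            mul_le_mul_right hcore _
        _ = (5:ℝ≥0∞)^(k+1) * A ^ (1 - ((k+1:ℕ):ℝ)/(m:ℝ)) := by
            rw [show (1 - (k:ℝ)/(m:ℝ)) - 1/(m:ℝ) = 1 - ((k+1:ℕ):ℝ)/(m:ℝ) by
              push_cast
              field_simp
              ring]
            ring
  have hfinal := main k (by omega) t ht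
  refine hfinal.trans ?_
  gcongr
  · push_cast
    exact_mod_cast pow_le_pow_right₀ (by norm_num : (1:ℝ≥0∞) ≤ 5) (by omega : k ≤ m)
end

section
/- Let m, k ∈ ℕ with m ≥ 2 and 1 ≤ k ≤ m−1, let I be a positive nondecreasing function on (0,1), and let N be a rearrangement-invariant function norm on (0,1). If there exists a constant C > 0 such that N((H_I^k f) · (H_I^{m−k} g)) ≤ C · N(f) · N(g) for all nonnegative measurable functions f, g on (0,1), then there exists a constant C' > 0 such that (∫_0^t ds/I(s))^m ≤ C' · N(χ_{(0,t)}) for every t ∈ (0,1). -/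
open MeasureTheory ENNReal NNReal

private lemma real_pow_ineq_aux (p : ℕ) (hp : 1 ≤ p) : ((p : ℝ) + 1) ^ p ≤ 4 * (p : ℝ) ^ p := by
  have hp0 : (0:ℝ) < p := by exact_mod_cast hp
  have h2 : (1 + 1/(p:ℝ)) ≤ Real.exp (1/p) := by
    have := Real.add_one_le_exp (1/(p:ℝ)); linarith
  have h3 : (1 + 1/(p:ℝ)) ^ p ≤ Real.exp (1/p) ^ p :=
    pow_le_pow_left₀ (by positivity) h2 p
  have h4 : Real.exp (1/(p:ℝ)) ^ p = Real.exp 1 := by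
    rw [← Real.exp_nat_mul, mul_one_div, div_self (ne_of_gt hp0)]
  have h5 : (1 + 1/(p:ℝ)) ^ p ≤ 4 := by
    rw [h4] at h3
    have := Real.exp_one_lt_d9
    linarith
  have h6 : ((p:ℝ) + 1) ^ p = (p:ℝ)^p * (1 + 1/(p:ℝ))^p := by
    rw [← mul_pow]
    congr 1
    field_simp
  rw [h6]
  nlinarith [pow_nonneg (le_of_lt hp0) p]

private lemma real_theta_aux (p : ℕ) (v : ℝ) (hv : 0 < v) :
    v^(p+1) ≤ 4*((p:ℝ)+1) * (((p:ℝ)*v/((p:ℝ)+1))^p * v - ((p:ℝ)*v/((p:ℝ)+1))^(p+1)) := by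
  rcases Nat.eq_zero_or_pos p with rfl | hp
  · simp; linarith
  have hp1 : (0:ℝ) < (p:ℝ)+1 := by positivity
  have key : ((p:ℝ)+1)^p ≤ 4 * (p:ℝ)^p := real_pow_ineq_aux p hp
  have hθ : ((p:ℝ)*v/((p:ℝ)+1))^p = (p:ℝ)^p * v^p / ((p:ℝ)+1)^p := by
    rw [div_pow, mul_pow]
  have hθ1 : ((p:ℝ)*v/((p:ℝ)+1))^(p+1) = (p:ℝ)^(p+1) * v^(p+1) / ((p:ℝ)+1)^(p+1) := by
    rw [div_pow, mul_pow]
  rw [hθ, hθ1]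
  have hsub : (p:ℝ)^p * v^p / ((p:ℝ)+1)^p * v - (p:ℝ)^(p+1) * v^(p+1) / ((p:ℝ)+1)^(p+1)
      = (p:ℝ)^p * v^(p+1) / ((p:ℝ)+1)^(p+1) := by
    field_simp
    ring
  rw [hsub]
  have h7 : 4*((p:ℝ)+1) * ((p:ℝ)^p * v^(p+1) / ((p:ℝ)+1)^(p+1)) = (4*(p:ℝ)^p) * v^(p+1) / ((p:ℝ)+1)^p := by
    rw [pow_succ]
    field_simp
    ring
  rw [h7, le_div_iff₀ (by positivity)]
  nlinarith [pow_pos hv (p+1), pow_pos hp1 p]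

private lemma measure_Ioo_iSup_aux (ν : Measure ℝ) {a b : ℝ} (h : a < b) :
    ν (Set.Ioo a b) = ⨆ n : ℕ, ν (Set.Ioo (a + (b - a)/(n+2)) b) := by
  have hba : (0:ℝ) < b - a := by linarith
  have hmono : Monotone (fun n : ℕ => Set.Ioo (a + (b - a)/(n+2)) b) := by
    intro n n' hnn'
    apply Set.Ioo_subset_Ioo_left
    have h1 : (b - a)/((n':ℝ)+2) ≤ (b - a)/((n:ℝ)+2) := by
      apply div_le_div_of_nonneg_left hba.le (by positivity)
      have : (n:ℝ) ≤ (n':ℝ) := by exact_mod_cast hnn'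
      linarith
    linarith
  have hU : Set.Ioo a b = ⋃ n : ℕ, Set.Ioo (a + (b - a)/(n+2)) b := by
    ext x
    simp only [Set.mem_Ioo, Set.mem_iUnion]
    constructor
    · rintro ⟨hax, hxb⟩
      have hxa : (0:ℝ) < x - a := by linarith
      obtain ⟨n, hn⟩ := exists_nat_gt ((b - a)/(x - a))
      refine ⟨n, ?_, hxb⟩
      have h2 : (b - a)/((n:ℝ)+2) < x - a := by
        rw [div_lt_iff₀ (by positivity)]
        have h3 : b - a < (x - a) * n := by
          rw [div_lt_iff₀ hxa] at hn; linarith [hn]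
        nlinarith
      linarith
    · rintro ⟨n, hn, hxb⟩
      have : (0:ℝ) < (b - a)/((n:ℝ)+2) := by positivity
      exact ⟨by linarith, hxb⟩
  rw [hU, Directed.measure_iUnion hmono.directed_le]

private lemma iSup_pow_le_aux (a : ℕ → ℝ≥0∞) (ha : Monotone a) (p : ℕ) :
    (⨆ n, a n) ^ p ≤ ⨆ n, a n ^ p := by
  induction p with
  | zero => simp
  | succ p ih =>
    calc (⨆ n, a n)^(p+1) = (⨆ n, a n)^p * (⨆ n, a n) := by rw [pow_succ]
    _ ≤ (⨆ n, a n ^ p) * (⨆ n, a n) := mul_le_mul_left ih _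
    _ = ⨆ n, (a n ^ p * ⨆ j, a j) := by rw [ENNReal.iSup_mul]
    _ ≤ ⨆ n, a n ^ (p+1) := by
        apply iSup_le; intro n
        rw [ENNReal.mul_iSup]
        apply iSup_le; intro j
        calc a n ^ p * a j ≤ a (max n j) ^ p * a (max n j) :=
          mul_le_mul' (pow_le_pow_left' (ha (le_max_left n j)) p) (ha (le_max_right n j))
        _ = a (max n j) ^ (p+1) := (pow_succ _ _).symm
        _ ≤ ⨆ i, a i ^ (p+1) := le_iSup (fun i => a i ^(p+1)) _

private lemma key_lemma_aux (ν : Measure ℝ) (hν : ∀ x : ℝ, ν {x} = 0) (t a : ℝ) (hat : a < t) (p : ℕ) :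
    ν (Set.Ioo a t) ^ (p+1)
      ≤ ((4*(p+1) : ℕ) : ℝ≥0∞) * ∫⁻ r in Set.Ioo a t, ν (Set.Ioo r t) ^ p ∂ν := by
  set V : ℝ → ℝ≥0∞ := fun x => ν (Set.Ioo x t) with hVdef
  have hVanti : Antitone V := fun x y hxy => measure_mono (Set.Ioo_subset_Ioo_left hxy)
  have hVmeas : Measurable V := hVanti.measurable
  have htb : ∀ θ : ℝ≥0∞, θ < V a →
      θ^p * V a ≤ (∫⁻ r in Set.Ioo a t, V r ^ p ∂ν) + θ^(p+1) := by
    intro θ hθ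
    have hsup : V a = ⨆ n : ℕ, V (a + (t - a)/(n+2)) := by
      have := measure_Ioo_iSup_aux ν hat
      simpa [hVdef] using this
    obtain ⟨n, hn⟩ := lt_iSup_iff.mp (by rw [← hsup]; exact hθ)
    have hσmemIoo : a + (t - a)/((n:ℝ)+2) ∈ Set.Ioo a t := by
      have hn2 : (0:ℝ) ≤ (n:ℝ) := Nat.cast_nonneg n
      constructor
      · have : (0:ℝ) < (t - a)/((n:ℝ)+2) := div_pos (by linarith) (by positivity)
        linarith
      · have h1 : (t - a)/((n:ℝ)+2) < t - a := div_lt_self (by linarith) (by linarith)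
        linarith
    have hSne : {x : ℝ | x ∈ Set.Ioo a t ∧ θ ≤ V x}.Nonempty := ⟨_, hσmemIoo, hn.le⟩
    have hSbdd : BddAbove {x : ℝ | x ∈ Set.Ioo a t ∧ θ ≤ V x} := ⟨t, fun x hx => hx.1.2.le⟩
    have hac : a < sSup {x : ℝ | x ∈ Set.Ioo a t ∧ θ ≤ V x} :=
      lt_of_lt_of_le hσmemIoo.1 (le_csSup hSbdd ⟨hσmemIoo, hn.le⟩)
    set c := sSup {x : ℝ | x ∈ Set.Ioo a t ∧ θ ≤ V x} with hcdef
    have hct : c ≤ t := csSup_le hSne (fun x hx => hx.1.2.le)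
    have h1 : ∀ r, a < r → r < c → θ ≤ V r := by
      intro r _ hrc
      obtain ⟨x, hxS, hrx⟩ := exists_lt_of_lt_csSup hSne hrc
      exact le_trans hxS.2 (hVanti hrx.le)
    have h2 : ν (Set.Ioo c t) ≤ θ := by
      rcases eq_or_lt_of_le hct with heq | hctlt
      · rw [heq]; simp
      · rw [measure_Ioo_iSup_aux ν hctlt]
        apply iSup_le; intro n'
        have hn'2 : (0:ℝ) ≤ (n':ℝ) := Nat.cast_nonneg n'
        have hσ'mem : c < c + (t - c)/((n':ℝ)+2) ∧ c + (t - c)/((n':ℝ)+2) < t := by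
          constructor
          · have : (0:ℝ) < (t - c)/((n':ℝ)+2) := div_pos (by linarith) (by positivity)
            linarith
          · have h1' : (t - c)/((n':ℝ)+2) < t - c := div_lt_self (by linarith) (by linarith)
            linarith
        have hnotS : c + (t - c)/((n':ℝ)+2) ∉ {x : ℝ | x ∈ Set.Ioo a t ∧ θ ≤ V x} :=
          fun hmem => absurd (le_csSup hSbdd hmem) (not_le.mpr hσ'mem.1)
        have hlt : ¬ θ ≤ V (c + (t - c)/((n':ℝ)+2)) :=
          fun hh => hnotS ⟨⟨lt_trans hac hσ'mem.1, hσ'mem.2⟩, hh⟩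
        exact (not_le.mp hlt).le
    have h3 : V a ≤ ν (Set.Ioo a c) + θ := by
      have hsub : Set.Ioo a t ⊆ Set.Ioo a c ∪ Set.Ico c t := by
        intro x hx
        rcases lt_or_ge x c with h' | h'
        · exact Or.inl ⟨hx.1, h'⟩
        · exact Or.inr ⟨h', hx.2⟩
      have hico : ν (Set.Ico c t) ≤ θ := by
        have hsub2 : Set.Ico c t ⊆ {c} ∪ Set.Ioo c t := by
          intro x hx
          rcases eq_or_lt_of_le hx.1 with heq | h'
          · exact Or.inl (by simp [← heq])
          · exact Or.inr ⟨h', hx.2⟩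
        calc ν (Set.Ico c t) ≤ ν ({c} ∪ Set.Ioo c t) := measure_mono hsub2
        _ ≤ ν {c} + ν (Set.Ioo c t) := measure_union_le _ _
        _ = ν (Set.Ioo c t) := by rw [hν c, zero_add]
        _ ≤ θ := h2
      calc V a ≤ ν (Set.Ioo a c ∪ Set.Ico c t) := measure_mono hsub
      _ ≤ ν (Set.Ioo a c) + ν (Set.Ico c t) := measure_union_le _ _
      _ ≤ ν (Set.Ioo a c) + θ := add_le_add_right hico _
    have h4 : θ^p * ν (Set.Ioo a c) ≤ ∫⁻ r in Set.Ioo a t, V r ^ p ∂ν := by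
      calc θ^p * ν (Set.Ioo a c) = ∫⁻ _ in Set.Ioo a c, θ^p ∂ν := (setLIntegral_const _ _).symm
      _ ≤ ∫⁻ r in Set.Ioo a c, V r ^ p ∂ν := by
          apply setLIntegral_mono (hVmeas.pow_const p)
          intro r hr
          exact pow_le_pow_left' (h1 r hr.1 hr.2) p
      _ ≤ ∫⁻ r in Set.Ioo a t, V r ^ p ∂ν :=
          lintegral_mono_set (Set.Ioo_subset_Ioo_right hct)
    calc θ^p * V a ≤ θ^p * (ν (Set.Ioo a c) + θ) := mul_le_mul_right h3 _
    _ = θ^p * ν (Set.Ioo a c) + θ^(p+1) := by rw [mul_add, pow_succ]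
    _ ≤ _ := add_le_add_left h4 _
  rcases eq_or_ne (V a) 0 with hva0 | hva0
  · rw [show ν (Set.Ioo a t) = V a from rfl, hva0, zero_pow (Nat.succ_ne_zero p)]
    exact zero_le
  rcases eq_or_ne (V a) ⊤ with hvat | hvat
  · have h1 : (1:ℝ≥0∞) < V a := by rw [hvat]; exact ENNReal.one_lt_top
    have htop := htb 1 h1
    rw [one_pow, one_mul, hvat] at htop
    have hint : (∫⁻ r in Set.Ioo a t, V r ^ p ∂ν) = ⊤ := by
      by_contra hne
      have hfin : (∫⁻ r in Set.Ioo a t, V r ^ p ∂ν) + 1^(p+1) ≠ ⊤ := by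
        simp [ENNReal.add_ne_top, hne]
      exact hfin (top_le_iff.mp htop)
    rw [show ν (Set.Ioo a t) = V a from rfl, hint, ENNReal.mul_top (by simp)]
    exact le_top
  · set va := (V a).toNNReal with hvadef
    have hva : (va : ℝ≥0∞) = V a := ENNReal.coe_toNNReal hvat
    have hvapos : 0 < va := by
      have h0 : (0:ℝ≥0∞) < V a := pos_iff_ne_zero.mpr hva0
      rw [← hva] at h0
      exact_mod_cast h0
    set θ₀ : ℝ≥0 := (p : ℝ≥0) * va / ((p:ℝ≥0)+1) with hθ₀def
    have hθ₀le : θ₀ ≤ va := by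
      rw [hθ₀def, div_le_iff₀ (by positivity)]
      calc (p:ℝ≥0) * va = va * (p:ℝ≥0) := mul_comm _ _
      _ ≤ va * ((p:ℝ≥0)+1) := by
          apply mul_le_mul_right
          exact le_add_of_nonneg_right (zero_le)
    have hθ₀lt : θ₀ < va := by
      rw [hθ₀def, div_lt_iff₀ (by positivity)]
      calc (p:ℝ≥0) * va = va * (p:ℝ≥0) := mul_comm _ _
      _ < va * (p:ℝ≥0) + va := lt_add_of_pos_right _ hvapos
      _ = va * ((p:ℝ≥0)+1) := by ring
    have hθ₀lt' : (θ₀ : ℝ≥0∞) < V a := by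
      rw [← hva]; exact_mod_cast hθ₀lt
    have hmain := htb θ₀ hθ₀lt'
    have hsub : (θ₀:ℝ≥0∞)^p * V a - (θ₀:ℝ≥0∞)^(p+1) ≤ ∫⁻ r in Set.Ioo a t, V r ^ p ∂ν :=
      tsub_le_iff_right.mpr hmain
    have hnnsub : θ₀^(p+1) ≤ θ₀^p * va := by
      calc θ₀^(p+1) = θ₀^p * θ₀ := pow_succ _ _
      _ ≤ θ₀^p * va := mul_le_mul_right hθ₀le _
    have hnn : va^(p+1) ≤ ((4*(p+1):ℕ):ℝ≥0) * (θ₀^p * va - θ₀^(p+1)) := by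
      rw [← NNReal.coe_le_coe]
      push_cast [NNReal.coe_sub hnnsub]
      have := real_theta_aux p (va:ℝ) (by exact_mod_cast hvapos)
      convert this using 3 <;> simp [hθ₀def]
    have final : V a ^ (p+1) ≤ ((4*(p+1):ℕ):ℝ≥0∞) * ∫⁻ r in Set.Ioo a t, V r ^ p ∂ν := by
      have e1 : V a ^ (p+1) = ((va^(p+1) : ℝ≥0) : ℝ≥0∞) := by
        rw [ENNReal.coe_pow, hva]
      rw [e1]
      have e2 : ((va^(p+1) : ℝ≥0) : ℝ≥0∞)
          ≤ ((((4*(p+1):ℕ):ℝ≥0) * (θ₀^p * va - θ₀^(p+1)) : ℝ≥0) : ℝ≥0∞) :=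
        ENNReal.coe_le_coe.mpr hnn
      refine le_trans e2 ?_
      rw [ENNReal.coe_mul, ENNReal.coe_sub]
      push_cast
      rw [hva]
      exact mul_le_mul_right hsub _
    exact final

/-- if the bilinear estimate `N((H_I^k f)(H_I^{m-k} g)) ≤ C N(f) N(g)` holds,
then `(∫_0^t ds/I(s))^m ≤ C' N(χ_(0,t))` for all `t ∈ (0,1)`. -/
theorem fundamental_estimate_of_two_hardys (m k : ℕ) (hm : 2 ≤ m) (hk1 : 1 ≤ k)
    (hk2 : k ≤ m - 1) (I : ℝ → ℝ)
    (hIpos : ∀ t ∈ Set.Ioo (0:ℝ) 1, 0 < I t)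
    (hImono : MonotoneOn I (Set.Ioo (0:ℝ) 1))
    (X : RINorm) (C : ℝ≥0) (hC : 0 < C)
    (hprod : ∀ f g : ℝ → ℝ≥0∞, Measurable f → Measurable g →
      X.N (fun t => (HI I)^[k] f t * (HI I)^[m - k] g t)
        ≤ (C : ℝ≥0∞) * X.N f * X.N g) :
    ∃ C' : ℝ≥0, 0 < C' ∧ ∀ t ∈ Set.Ioo (0:ℝ) 1,
      (∫⁻ s in Set.Ioo (0:ℝ) t, (ENNReal.ofReal (I s))⁻¹) ^ m
        ≤ (C' : ℝ≥0∞) * X.N ((Set.Ioo (0:ℝ) t).indicator fun _ => 1) := by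
  -- MAIN PROOF START
  refine ⟨2*(8*(m:ℝ≥0))^m*4^m*(C+1), ?_, ?_⟩
  · have hm0 : (0:ℝ≥0) < (m:ℝ≥0) := by exact_mod_cast (by omega : 0 < m)
    positivity
  intro t ht
  obtain ⟨ht0, ht1⟩ := ht
  -- setup: measurable monotone extension of I, the weight w, the measure μ
  set t' : ℝ := (t+1)/2 with ht'def
  have htt' : t < t' := by rw [ht'def]; linarith
  have ht'1 : t' < 1 := by rw [ht'def]; linarith
  have ht'0 : (0:ℝ) < t' := by rw [ht'def]; linarith
  set J : ℝ → ℝ := fun x => if 0 < x then I (min x t') else 0 with hJdef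
  have hminmem : ∀ x : ℝ, 0 < x → min x t' ∈ Set.Ioo (0:ℝ) 1 :=
    fun x hx => ⟨lt_min hx ht'0, lt_of_le_of_lt (min_le_right _ _) ht'1⟩
  have hJmono : Monotone J := by
    intro x y hxy
    by_cases hx : 0 < x
    · have hy : 0 < y := lt_of_lt_of_le hx hxy
      simp only [hJdef, if_pos hx, if_pos hy]
      exact hImono (hminmem x hx) (hminmem y hy) (min_le_min hxy (le_refl t'))
    · by_cases hy : 0 < y
      · simp only [hJdef, if_neg hx, if_pos hy]
        exact (hIpos _ (hminmem y hy)).le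
      · simp only [hJdef, if_neg hx, if_neg hy, le_refl]
  have hJI : ∀ x ∈ Set.Ioo (0:ℝ) t, J x = I x := by
    intro x hx
    simp only [hJdef, if_pos hx.1]
    rw [min_eq_left (le_of_lt (lt_trans hx.2 htt'))]
  set w : ℝ → ℝ≥0∞ := fun x => (ENNReal.ofReal (J x))⁻¹ with hwdef
  have hwmeas : Measurable w := (hJmono.measurable.ennreal_ofReal).inv
  set μ : Measure ℝ := volume.withDensity w with hμdef
  have hμs : ∀ x : ℝ, μ {x} = 0 := by
    intro x
    exact (withDensity_absolutelyContinuous volume w) (Real.volume_singleton)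
  set V : ℝ → ℝ≥0∞ := fun x => μ (Set.Ioo x t) with hVdef
  have hVanti : Antitone V := fun x y hxy => measure_mono (Set.Ioo_subset_Ioo_left hxy)
  have hVmeas : Measurable V := hVanti.measurable
  -- basic facts about HI
  have hHIanti : ∀ g : ℝ → ℝ≥0∞, Antitone (HI I g) := by
    intro g x y hxy
    exact lintegral_mono_set (Set.Ioo_subset_Ioo_left hxy)
  have hIterMeas : ∀ (g : ℝ → ℝ≥0∞), Measurable g → ∀ i, Measurable ((HI I)^[i] g) := by
    intro g hg i
    induction i with
    | zero => simpa
    | succ i ih =>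
      rw [Function.iterate_succ_apply']
      exact (hHIanti _).measurable
  -- the test functions
  set f : ℕ → ℝ → ℝ≥0∞ := fun q => (Set.Ioo (0:ℝ) t).indicator (fun r => V r ^ q) with hfdef
  have hfmeas : ∀ q, Measurable (f q) := fun q => (hVmeas.pow_const q).indicator measurableSet_Ioo
  have hwI : ∀ r ∈ Set.Ioo (0:ℝ) t, w r = (ENNReal.ofReal (I r))⁻¹ := by
    intro r hr
    simp only [hwdef]
    rw [hJI r hr]
  -- iterated lower bound
  have hL3 : ∀ q i, ∀ s ∈ Set.Ioo (0:ℝ) t,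
      V s ^ (q+i) ≤ (((4*(q+i))^i : ℕ) : ℝ≥0∞) * (HI I)^[i] (f q) s := by
    intro q i
    induction i with
    | zero =>
      intro s hs
      simp [hfdef, Set.indicator_of_mem hs]
    | succ i ih =>
      intro s hs
      have hkey := key_lemma_aux μ hμs t s hs.2 (q+i)
      have hpw : ∫⁻ r in Set.Ioo s t, μ (Set.Ioo r t) ^ (q+i) ∂μ
          ≤ (((4*(q+i))^i : ℕ) : ℝ≥0∞) * ∫⁻ r in Set.Ioo s t, (HI I)^[i] (f q) r ∂μ := by
        rw [← lintegral_const_mul _ (hIterMeas _ (hfmeas q) i)]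
        apply setLIntegral_mono (measurable_const.mul (hIterMeas _ (hfmeas q) i))
        intro r hr
        exact ih r ⟨lt_trans hs.1 hr.1, hr.2⟩
      have htrans : ∫⁻ r in Set.Ioo s t, (HI I)^[i] (f q) r ∂μ ≤ (HI I)^[i+1] (f q) s := by
        rw [Function.iterate_succ_apply']
        have h1 : ∫⁻ r in Set.Ioo s t, (HI I)^[i] (f q) r ∂μ
            = ∫⁻ r in Set.Ioo s t, w r * (HI I)^[i] (f q) r ∂volume := by
          rw [hμdef, restrict_withDensity measurableSet_Ioo,
             lintegral_withDensity_eq_lintegral_mul _ hwmeas (hIterMeas _ (hfmeas q) i)]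
          rfl
        rw [h1]
        have h2 : ∫⁻ r in Set.Ioo s t, w r * (HI I)^[i] (f q) r ∂volume
            = ∫⁻ r in Set.Ioo s t, (HI I)^[i] (f q) r / ENNReal.ofReal (I r) ∂volume := by
          apply setLIntegral_congr_fun measurableSet_Ioo
          intro r hr
          dsimp only
          rw [hwI r ⟨lt_trans hs.1 hr.1, hr.2⟩, div_eq_mul_inv, mul_comm]
        rw [h2]
        exact lintegral_mono_set (fun x hx => ⟨hx.1, lt_trans hx.2 ht1⟩)
      have harith : ((4*(q+i+1):ℕ):ℝ≥0∞) * (((4*(q+i))^i : ℕ) : ℝ≥0∞)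
          ≤ (((4*(q+(i+1)))^(i+1) : ℕ) : ℝ≥0∞) := by
        rw [← Nat.cast_mul]
        apply Nat.cast_le.mpr
        rw [pow_succ']
        exact Nat.mul_le_mul (by omega) (Nat.pow_le_pow_left (by omega) i)
      calc V s ^ (q+(i+1)) = μ (Set.Ioo s t) ^ ((q+i)+1) := rfl
      _ ≤ ((4*((q+i)+1):ℕ):ℝ≥0∞) * ∫⁻ r in Set.Ioo s t, μ (Set.Ioo r t) ^ (q+i) ∂μ := hkey
      _ ≤ ((4*(q+i+1):ℕ):ℝ≥0∞) * ((((4*(q+i))^i : ℕ) : ℝ≥0∞)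
            * ∫⁻ r in Set.Ioo s t, (HI I)^[i] (f q) r ∂μ) := mul_le_mul_right hpw _
      _ = ((4*(q+i+1):ℕ):ℝ≥0∞) * (((4*(q+i))^i : ℕ) : ℝ≥0∞)
            * ∫⁻ r in Set.Ioo s t, (HI I)^[i] (f q) r ∂μ := by rw [mul_assoc]
      _ ≤ (((4*(q+(i+1)))^(i+1) : ℕ) : ℝ≥0∞) * (HI I)^[i+1] (f q) s :=
            mul_le_mul' harith htrans
  -- norm recursion
  set Q : ℕ → ℝ≥0∞ := fun q => X.N (f q) with hQdef
  have hkm : k ≤ m := by omega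
  have hQstep : ∀ q q' : ℕ, Q (q+q'+m) ≤ (((4*(q+q'+m))^m : ℕ) : ℝ≥0∞) * ((C:ℝ≥0∞) * Q q * Q q') := by
    intro q q'
    have hpw : ∀ s : ℝ, f (q+q'+m) s
        ≤ ((((4*(q+q'+m))^m : ℕ) : ℝ≥0) : ℝ≥0∞) * ((HI I)^[k] (f q) s * (HI I)^[m-k] (f q') s) := by
      intro s
      by_cases hs : s ∈ Set.Ioo (0:ℝ) t
      · rw [hfdef]
        simp only [Set.indicator_of_mem hs]
        have e1 : V s ^ (q+q'+m) = V s ^ (q+k) * V s ^ (q'+(m-k)) := by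
          rw [← pow_add]
          congr 1
          omega
        rw [e1]
        have b1 := hL3 q k s hs
        have b2 := hL3 q' (m-k) s hs
        calc V s ^ (q+k) * V s ^ (q'+(m-k))
            ≤ ((((4*(q+k))^k:ℕ):ℝ≥0∞) * (HI I)^[k] (f q) s)
              * ((((4*(q'+(m-k)))^(m-k):ℕ):ℝ≥0∞) * (HI I)^[m-k] (f q') s) := mul_le_mul' b1 b2
        _ = (((4*(q+k))^k:ℕ):ℝ≥0∞) * (((4*(q'+(m-k)))^(m-k):ℕ):ℝ≥0∞)
              * ((HI I)^[k] (f q) s * (HI I)^[m-k] (f q') s) := by ring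
        _ ≤ ((((4*(q+q'+m))^m : ℕ) : ℝ≥0) : ℝ≥0∞)
              * ((HI I)^[k] (f q) s * (HI I)^[m-k] (f q') s) := by
            apply mul_le_mul_left
            rw [← Nat.cast_mul]
            have hcoe : ((((4*(q+q'+m))^m : ℕ) : ℝ≥0) : ℝ≥0∞) = (((4*(q+q'+m))^m : ℕ) : ℝ≥0∞) := by
              simp
            rw [hcoe]
            apply Nat.cast_le.mpr
            calc (4*(q+k))^k * (4*(q'+(m-k)))^(m-k)
                ≤ (4*(q+q'+m))^k * (4*(q+q'+m))^(m-k) :=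
                  Nat.mul_le_mul (Nat.pow_le_pow_left (by omega) _) (Nat.pow_le_pow_left (by omega) _)
            _ = (4*(q+q'+m))^m := by rw [← pow_add]; congr 1; omega
      · rw [hfdef]
        simp [Set.indicator_of_notMem hs]
    have hprodmeas : Measurable (fun s => (HI I)^[k] (f q) s * (HI I)^[m-k] (f q') s) :=
      (hIterMeas _ (hfmeas q) k).mul (hIterMeas _ (hfmeas q') (m-k))
    have hN1 : X.N (f (q+q'+m))
        ≤ X.N (fun s => ((((4*(q+q'+m))^m : ℕ) : ℝ≥0) : ℝ≥0∞)
            * ((HI I)^[k] (f q) s * (HI I)^[m-k] (f q') s)) :=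
      X.mono _ _ (hfmeas _) (measurable_const.mul hprodmeas) (Filter.Eventually.of_forall hpw)
    rw [X.smul_eq _ hprodmeas (((4*(q+q'+m))^m : ℕ) : ℝ≥0)] at hN1
    have hN2 := hprod (f q) (f q') (hfmeas q) (hfmeas q')
    calc Q (q+q'+m) ≤ ((((4*(q+q'+m))^m : ℕ) : ℝ≥0) : ℝ≥0∞)
        * X.N (fun s => (HI I)^[k] (f q) s * (HI I)^[m-k] (f q') s) := hN1
    _ ≤ ((((4*(q+q'+m))^m : ℕ) : ℝ≥0) : ℝ≥0∞) * ((C:ℝ≥0∞) * X.N (f q) * X.N (f q')) :=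
        mul_le_mul_right hN2 _
    _ = (((4*(q+q'+m))^m : ℕ) : ℝ≥0∞) * ((C:ℝ≥0∞) * Q q * Q q') := by
        congr 1
  -- the doubling iteration
  set φt : ℝ≥0∞ := X.N ((Set.Ioo (0:ℝ) t).indicator fun _ => 1) with hφtdef
  have hQ0 : Q 0 = φt := by
    rw [hQdef, hφtdef, hfdef]
    congr 1
    simp
  have hPrec : ∀ i : ℕ, Q ((2^(i+1)-1)*m)
      ≤ (((8*m)^m * 2^(i*m) : ℕ):ℝ≥0∞) * ((C:ℝ≥0∞) * Q ((2^i-1)*m) * Q ((2^i-1)*m)) := by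
    intro i
    have h2i : 1 ≤ 2^i := Nat.one_le_two_pow
    have h2i1 : (2:ℕ)^(i+1) = 2*2^i := by rw [pow_succ]; ring
    have hidx : (2^i-1)*m + (2^i-1)*m + m = (2^(i+1)-1)*m := by
      have e : (2^i-1) + (2^i-1) + 1 = 2^(i+1)-1 := by omega
      calc (2^i-1)*m + (2^i-1)*m + m = ((2^i-1) + (2^i-1) + 1)*m := by ring
      _ = (2^(i+1)-1)*m := by rw [e]
    have hQs := hQstep ((2^i-1)*m) ((2^i-1)*m)
    rw [hidx] at hQs
    refine le_trans hQs (mul_le_mul_left ?_ _)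
    apply Nat.cast_le.mpr
    have h1 : 4*((2^(i+1)-1)*m) ≤ 8*m*2^i := by
      have : 4*(2^(i+1)-1) ≤ 8*2^i := by omega
      calc 4*((2^(i+1)-1)*m) = (4*(2^(i+1)-1))*m := by ring
      _ ≤ (8*2^i)*m := Nat.mul_le_mul_right _ this
      _ = 8*m*2^i := by ring
    calc (4*((2^(i+1)-1)*m))^m ≤ (8*m*2^i)^m := Nat.pow_le_pow_left h1 m
    _ = (8*m)^m * (2^i)^m := mul_pow _ _ _
    _ = (8*m)^m * 2^(i*m) := by rw [← pow_mul]
  set AC : ℝ≥0∞ := (((8*m)^m : ℕ):ℝ≥0∞) * ((C:ℝ≥0∞)+1) with hACdef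
  set Z : ℕ → ℝ≥0∞ := fun i => AC * 2^(m*(i+2)) * Q ((2^i-1)*m) with hZdef
  have hZstep : ∀ i, Z (i+1) ≤ Z i ^ 2 := by
    intro i
    have h1 := hPrec i
    have hexp : (2:ℝ≥0∞)^(m*(i+3)) * 2^(i*m) ≤ 2^(m*(i+2)) * 2^(m*(i+2)) := by
      rw [← pow_add, ← pow_add]
      apply pow_le_pow_right' one_le_two
      nlinarith [Nat.zero_le m, Nat.zero_le i]
    have h5 : (((8*m)^m : ℕ):ℝ≥0∞) * (C:ℝ≥0∞) ≤ AC := by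
      rw [hACdef]
      exact mul_le_mul_right le_self_add _
    calc Z (i+1) = AC * 2^(m*(i+3)) * Q ((2^(i+1)-1)*m) := by rw [hZdef]
    _ ≤ AC * 2^(m*(i+3)) * ((((8*m)^m * 2^(i*m) : ℕ):ℝ≥0∞)
          * ((C:ℝ≥0∞) * Q ((2^i-1)*m) * Q ((2^i-1)*m))) := mul_le_mul_right h1 _
    _ = (AC * ((((8*m)^m : ℕ):ℝ≥0∞) * (C:ℝ≥0∞))) * ((2:ℝ≥0∞)^(m*(i+3)) * 2^(i*m))
          * (Q ((2^i-1)*m) * Q ((2^i-1)*m)) := by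
        push_cast
        ring
    _ ≤ (AC * AC) * ((2:ℝ≥0∞)^(m*(i+2)) * 2^(m*(i+2))) * (Q ((2^i-1)*m) * Q ((2^i-1)*m)) := by
        apply mul_le_mul_left
        exact mul_le_mul' (mul_le_mul_right h5 _) hexp
    _ = Z i ^ 2 := by
        rw [hZdef]
        ring
  have hZiter : ∀ i, Z i ≤ Z 0 ^ (2^i) := by
    intro i
    induction i with
    | zero => simpa using le_refl (Z 0)
    | succ i ih =>
      calc Z (i+1) ≤ Z i ^ 2 := hZstep i
      _ ≤ (Z 0 ^ (2^i))^2 := pow_le_pow_left' ih 2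
      _ = Z 0 ^ (2^(i+1)) := by rw [← pow_mul, pow_succ]
  set G : ℝ≥0∞ := AC * 2^(m*2) * φt with hGdef
  have hZ0 : Z 0 = G := by
    rw [hZdef, hGdef]
    simp only [pow_zero]
    rw [show (1-1)*m = 0 by ring, hQ0]
  have hPbound : ∀ i, Q ((2^i-1)*m) ≤ G ^ (2^i) := by
    intro i
    have hone : (1:ℝ≥0∞) ≤ AC * 2^(m*(i+2)) := by
      have hA1 : (1:ℝ≥0∞) ≤ (((8*m)^m : ℕ):ℝ≥0∞) := by
        apply Nat.one_le_cast.mpr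
        exact Nat.one_le_pow _ _ (by omega)
      have hC1 : (1:ℝ≥0∞) ≤ (C:ℝ≥0∞)+1 := le_add_self
      have h21 : (1:ℝ≥0∞) ≤ 2^(m*(i+2)) := one_le_pow_of_one_le' one_le_two _
      calc (1:ℝ≥0∞) = (1*1)*1 := by ring
      _ ≤ ((((8*m)^m : ℕ):ℝ≥0∞) * ((C:ℝ≥0∞)+1)) * 2^(m*(i+2)) :=
          mul_le_mul' (mul_le_mul' hA1 hC1) h21
    calc Q ((2^i-1)*m) ≤ (AC * 2^(m*(i+2))) * Q ((2^i-1)*m) :=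
        le_mul_of_one_le_left (zero_le) hone
    _ = Z i := by rw [hZdef]
    _ ≤ Z 0 ^ (2^i) := hZiter i
    _ = G ^ (2^i) := by rw [hZ0]
  -- positivity and finiteness of the fundamental function
  have hφfin : ∀ s : ℝ, s < 1 → X.N ((Set.Ioo (0:ℝ) s).indicator fun _ => 1) < ⊤ := by
    intro s hs1
    refine lt_of_le_of_lt ?_ X.chi_lt_top
    apply X.mono _ _ (measurable_const.indicator measurableSet_Ioo)
      (measurable_const.indicator measurableSet_Ioo)
    apply Filter.Eventually.of_forall
    intro x
    by_cases hx : x ∈ Set.Ioo (0:ℝ) s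
    · rw [Set.indicator_of_mem hx,
        Set.indicator_of_mem (show x ∈ Set.Ioo (0:ℝ) 1 from ⟨hx.1, lt_trans hx.2 hs1⟩)]
    · rw [Set.indicator_of_notMem hx]
      exact zero_le
  have hφpos : ∀ s : ℝ, 0 < s → s < 1 → X.N ((Set.Ioo (0:ℝ) s).indicator fun _ => 1) ≠ 0 := by
    intro s hs0 hs1 h0
    have hmeas : Measurable ((Set.Ioo (0:ℝ) s).indicator (fun _ => (1:ℝ≥0∞))) :=
      measurable_const.indicator measurableSet_Ioo
    have hae := (X.eq_zero_iff _ hmeas).mp h0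
    rw [ae_iff] at hae
    have hsubs : Set.Ioo (0:ℝ) s ⊆ {x | ¬ (Set.Ioo (0:ℝ) s).indicator (fun _ => (1:ℝ≥0∞)) x = 0} := by
      intro x hx
      simp only [Set.mem_setOf_eq, Set.indicator_of_mem hx]
      exact one_ne_zero
    have h2 : (volume.restrict (Set.Ioo (0:ℝ) 1)) (Set.Ioo (0:ℝ) s) = 0 :=
      measure_mono_null hsubs hae
    rw [Measure.restrict_apply' measurableSet_Ioo,
      Set.inter_eq_self_of_subset_left (Set.Ioo_subset_Ioo_right hs1.le),
      Real.volume_Ioo] at h2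
    have : s - 0 ≤ 0 := by
      by_contra hcon
      push_neg at hcon
      exact (ENNReal.ofReal_pos.mpr hcon).ne' h2
    linarith
  -- lower bound for Q in terms of the fundamental function
  have hlow : ∀ s ∈ Set.Ioo (0:ℝ) t, ∀ c : ℝ≥0, (c:ℝ≥0∞) ≤ V s → ∀ i : ℕ,
      (c:ℝ≥0∞)^((2^i-1)*m) * X.N ((Set.Ioo (0:ℝ) s).indicator fun _ => 1) ≤ G^(2^i) := by
    intro s hs c hc i
    have hpt : ∀ r : ℝ, ((c^((2^i-1)*m) : ℝ≥0):ℝ≥0∞) * (Set.Ioo (0:ℝ) s).indicator (fun _ => 1) r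
        ≤ f ((2^i-1)*m) r := by
      intro r
      by_cases hr : r ∈ Set.Ioo (0:ℝ) s
      · rw [Set.indicator_of_mem hr, mul_one]
        have hrt : r ∈ Set.Ioo (0:ℝ) t := ⟨hr.1, lt_trans hr.2 hs.2⟩
        simp only [hfdef, Set.indicator_of_mem hrt]
        push_cast
        exact pow_le_pow_left' (le_trans hc (hVanti hr.2.le)) _
      · rw [Set.indicator_of_notMem hr, mul_zero]
        exact zero_le
    have h1 : X.N (fun r => ((c^((2^i-1)*m):ℝ≥0):ℝ≥0∞) * (Set.Ioo (0:ℝ) s).indicator (fun _ => 1) r)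
        ≤ Q ((2^i-1)*m) :=
      X.mono _ _ ((measurable_const.indicator measurableSet_Ioo).const_mul _)
        (hfmeas _) (Filter.Eventually.of_forall hpt)
    rw [X.smul_eq _ (measurable_const.indicator measurableSet_Ioo) (c^((2^i-1)*m))] at h1
    have h2 : (c:ℝ≥0∞)^((2^i-1)*m) * X.N ((Set.Ioo (0:ℝ) s).indicator fun _ => 1)
        = ((c^((2^i-1)*m):ℝ≥0):ℝ≥0∞) * X.N ((Set.Ioo (0:ℝ) s).indicator fun _ => 1) := by
      push_cast
      rfl
    rw [h2]
    exact le_trans h1 (hPbound i)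
  -- key finiteness facts about G
  have hφtfin : φt ≠ ⊤ := (hφfin t ht1).ne
  have hACfin : AC ≠ ⊤ := by
    rw [hACdef]
    exact ENNReal.mul_ne_top (ENNReal.natCast_ne_top _)
      (ENNReal.add_ne_top.mpr ⟨ENNReal.coe_ne_top, ENNReal.one_ne_top⟩)
  have hGfin : G ≠ ⊤ := by
    rw [hGdef]
    exact ENNReal.mul_ne_top (ENNReal.mul_ne_top hACfin (ENNReal.pow_ne_top ENNReal.ofNat_ne_top)) hφtfin
  have hACpos : AC ≠ 0 := by
    rw [hACdef]
    refine mul_ne_zero ?_ (lt_of_lt_of_le zero_lt_one le_add_self).ne'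
    exact Nat.cast_ne_zero.mpr (Nat.one_le_iff_ne_zero.mp (Nat.one_le_pow _ _ (by omega)))
  have hGpos : G ≠ 0 := by
    rw [hGdef]
    exact mul_ne_zero (mul_ne_zero hACpos (pow_ne_zero _ (by norm_num))) (hφpos t ht0 ht1)
  -- per-point bound
  have hVbound : ∀ s ∈ Set.Ioo (0:ℝ) t, V s ^ m ≤ 2 * G := by
    intro s hs
    by_contra hcon
    push_neg at hcon
    have h2Gfin : 2 * G ≠ ⊤ := ENNReal.mul_ne_top ENNReal.ofNat_ne_top hGfin
    obtain ⟨cnn, hcle, hcgt⟩ : ∃ cnn : ℝ≥0, (cnn:ℝ≥0∞) ≤ V s ∧ 2*G < ((cnn:ℝ≥0∞))^m := by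
      rcases eq_or_ne (V s) ⊤ with hvs | hvs
      · obtain ⟨n, hn⟩ := ENNReal.exists_nat_gt h2Gfin
        refine ⟨(n:ℝ≥0), by rw [hvs]; simp, ?_⟩
        have hn1 : 1 ≤ ((n:ℝ≥0):ℝ≥0∞) := by
          have h0 : (0:ℝ≥0∞) < ((n:ℝ≥0):ℝ≥0∞) := by
            have : (0:ℝ≥0∞) ≤ 2*G := zero_le
            have h' : 2*G < ((n:ℝ≥0):ℝ≥0∞) := by simpa using hn
            exact lt_of_le_of_lt this h'
          have : n ≠ 0 := by
            intro h
            rw [h] at h0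
            simp at h0
          exact_mod_cast Nat.one_le_iff_ne_zero.mpr this
        calc 2*G < ((n:ℕ):ℝ≥0∞) := hn
        _ = ((n:ℝ≥0):ℝ≥0∞) := by simp
        _ ≤ ((n:ℝ≥0):ℝ≥0∞)^m := le_self_pow₀ hn1 (by omega)
      · exact ⟨(V s).toNNReal, by rw [ENNReal.coe_toNNReal hvs],
          by rw [ENNReal.coe_toNNReal hvs]; exact hcon⟩
    set φs : ℝ≥0∞ := X.N ((Set.Ioo (0:ℝ) s).indicator fun _ => 1) with hφsdef
    have hφspos : φs ≠ 0 := hφpos s hs.1 (lt_trans hs.2 ht1)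
    have hφsfin : φs ≠ ⊤ := (hφfin s (lt_trans hs.2 ht1)).ne
    have hstep2 : ∀ i : ℕ, (2:ℝ≥0∞)^(2^i-1) * φs ≤ G := by
      intro i
      have h1 := hlow s hs cnn hcle i
      have e1 : (cnn:ℝ≥0∞)^((2^i-1)*m) = ((cnn:ℝ≥0∞)^m)^(2^i-1) := by
        rw [← pow_mul, Nat.mul_comm]
      have e2 : G^(2^i) = G^(2^i-1) * G := by
        rw [← pow_succ]
        congr 1
        have := Nat.one_le_two_pow (n := i)
        omega
      rw [e1, e2] at h1
      have h2 : ((2:ℝ≥0∞)*G)^(2^i-1) * φs ≤ G^(2^i-1) * G :=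
        le_trans (mul_le_mul_left (pow_le_pow_left' hcgt.le _) _) h1
      rw [mul_pow] at h2
      have h3 : G^(2^i-1) * ((2:ℝ≥0∞)^(2^i-1) * φs) ≤ G^(2^i-1) * G := by
        calc G^(2^i-1) * ((2:ℝ≥0∞)^(2^i-1) * φs)
            = (2:ℝ≥0∞)^(2^i-1) * G^(2^i-1) * φs := by ring
        _ ≤ G^(2^i-1) * G := h2
      exact (ENNReal.mul_le_mul_iff_right (pow_ne_zero _ hGpos) (ENNReal.pow_ne_top hGfin)).mp h3
    have hn2 : ∀ n : ℕ, (2:ℝ≥0∞)^n * φs ≤ G := by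
      intro n
      refine le_trans (mul_le_mul_left (pow_le_pow_right' one_le_two ?_) _) (hstep2 n)
      have := (Nat.lt_two_pow_self (n := n))
      omega
    obtain ⟨n, hn⟩ := ENNReal.exists_nat_gt (ENNReal.div_lt_top hGfin hφspos).ne
    have h4 : G < (n:ℝ≥0∞) * φs := by
      rw [ENNReal.div_lt_iff (Or.inl hφspos) (Or.inl hφsfin)] at hn
      exact hn
    have h5 : ((n:ℕ):ℝ≥0∞) ≤ (2:ℝ≥0∞)^n := by
      have hcast : ((2:ℕ):ℝ≥0∞)^n = (2:ℝ≥0∞)^n := by norm_cast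
      rw [← hcast, ← Nat.cast_pow]
      exact Nat.cast_le.mpr ((Nat.lt_two_pow_self (n := n))).le
    exact absurd (lt_of_lt_of_le h4 (le_trans (mul_le_mul_left h5 _) (hn2 n))) (lt_irrefl G)
  -- conclusion
  have hIoo : (∫⁻ x in Set.Ioo (0:ℝ) t, (ENNReal.ofReal (I x))⁻¹) = μ (Set.Ioo (0:ℝ) t) := by
    rw [hμdef, withDensity_apply _ measurableSet_Ioo]
    apply setLIntegral_congr_fun measurableSet_Ioo
    intro x hx
    exact (hwI x hx).symm
  have hsupμ : μ (Set.Ioo (0:ℝ) t) = ⨆ n : ℕ, μ (Set.Ioo (0 + (t - 0)/(n+2)) t) :=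
    measure_Ioo_iSup_aux μ ht0
  have hamono : Monotone (fun n : ℕ => μ (Set.Ioo (0 + (t - 0)/(n+2)) t)) := by
    intro n n' hnn'
    apply measure_mono
    apply Set.Ioo_subset_Ioo_left
    have h1 : (t - 0)/((n':ℝ)+2) ≤ (t - 0)/((n:ℝ)+2) := by
      apply div_le_div_of_nonneg_left (by linarith) (by positivity)
      have : (n:ℝ) ≤ (n':ℝ) := by exact_mod_cast hnn'
      linarith
    linarith
  have hmem : ∀ n : ℕ, (0 + (t - 0)/((n:ℝ)+2)) ∈ Set.Ioo (0:ℝ) t := by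
    intro n
    have hn2 : (0:ℝ) ≤ (n:ℝ) := Nat.cast_nonneg n
    have h0 : (0:ℝ) < (t - 0)/((n:ℝ)+2) := div_pos (by linarith) (by positivity)
    have h1 : (t - 0)/((n:ℝ)+2) < t - 0 := div_lt_self (by linarith) (by linarith)
    constructor <;> linarith
  have hfinal : μ (Set.Ioo (0:ℝ) t) ^ m ≤ 2 * G := by
    rw [hsupμ]
    refine le_trans (iSup_pow_le_aux _ hamono m) (iSup_le ?_)
    intro n
    exact hVbound _ (hmem n)
  rw [hIoo]
  calc (μ (Set.Ioo (0:ℝ) t)) ^ m ≤ 2*G := hfinal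
  _ = ((2*(8*(m:ℝ≥0))^m*4^m*(C+1) : ℝ≥0) : ℝ≥0∞) * X.N ((Set.Ioo (0:ℝ) t).indicator fun _ => 1) := by
      rw [hGdef, hACdef, hφtdef]
      push_cast
      have e4 : (2:ℝ≥0∞)^(m*2) = 4^m := by
        rw [mul_comm, pow_mul]
        norm_num
      rw [e4]
      ring
end

section
/- Let m, k ∈ ℕ with m ≥ 2 and 1 ≤ k ≤ m−1. Let I be a positive nondecreasing function on (0,1) with ∫_0^1 ds/I(s) < ∞, set ψ_I(t) = (∫_0^t dr/I(r))^m, and let N be a rearrangement-invariant function norm on (0,1). Assume there exists a constant C > 0 such that sup_{t∈(0,1)} g*(t) ψ_I(t) ≤ C · N(g) for every nonnegative measurable g on (0,1), where g* denotes the decreasing rearrangement of g. Then there exists a constant C' > 0 such that N((H_I^k h)^{m/(m−k)})^{(m−k)/m} ≤ C' · N(h) for every nonincreasing function h : (0,1) → [0,∞). -/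
open MeasureTheory ENNReal NNReal

/-- The decreasing rearrangement on `(0,1)` of a `[0,∞]`-valued function. -/
noncomputable def decRearr (g : ℝ → ℝ≥0∞) (s : ℝ) : ℝ≥0∞ :=
  sInf {lam : ℝ≥0∞ | volume {t ∈ Set.Ioo (0:ℝ) 1 | lam < g t} ≤ ENNReal.ofReal s}

namespace HardyAux

open Set Filter Topology

/-- measurable antitone extension of `(ofReal (I ·))⁻¹` -/
noncomputable def W (I : ℝ → ℝ) : ℝ → ℝ≥0∞ :=
  fun x => ⨅ (r : ℝ) (_ : r ∈ Set.Ioo (0:ℝ) 1 ∩ Set.Iic x), (ENNReal.ofReal (I r))⁻¹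

lemma W_anti (I : ℝ → ℝ) : Antitone (W I) := by
  intro x y hxy
  exact le_iInf₂ fun r hr => iInf₂_le r ⟨hr.1, hr.2.trans hxy⟩

lemma W_meas (I : ℝ → ℝ) : Measurable (W I) := (W_anti I).measurable

lemma W_eq (I : ℝ → ℝ) (hImono : MonotoneOn I (Set.Ioo (0:ℝ) 1)) {x : ℝ}
    (hx : x ∈ Set.Ioo (0:ℝ) 1) : W I x = (ENNReal.ofReal (I x))⁻¹ := by
  refine le_antisymm (iInf₂_le x ⟨hx, Set.mem_Iic.mpr le_rfl⟩) (le_iInf₂ fun r hr => ?_)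
  exact ENNReal.inv_le_inv.mpr (ENNReal.ofReal_le_ofReal (hImono hr.1 hx hr.2))

/-- the measure with density 1/I -/
noncomputable def mu (I : ℝ → ℝ) : Measure ℝ := volume.withDensity (W I)

lemma mu_apply (I : ℝ → ℝ) {s : Set ℝ} (hs : MeasurableSet s) :
    mu I s = ∫⁻ r in s, W I r := by
  simp [mu, withDensity_apply _ hs]

lemma mu_singleton (I : ℝ → ℝ) (x : ℝ) : mu I {x} = 0 := by
  rw [mu_apply I (measurableSet_singleton x)]
  rw [Measure.restrict_eq_zero.mpr (by simp)]
  simp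

lemma mu_eq_stmt (I : ℝ → ℝ) (hImono : MonotoneOn I (Set.Ioo (0:ℝ) 1)) {t : ℝ}
    (ht1 : t ≤ 1) :
    mu I (Set.Ioo 0 t) = ∫⁻ r in Set.Ioo (0:ℝ) t, (ENNReal.ofReal (I r))⁻¹ := by
  rw [mu_apply I measurableSet_Ioo]
  refine lintegral_congr_ae ?_
  filter_upwards [ae_restrict_mem measurableSet_Ioo] with r hr
  exact W_eq I hImono ⟨hr.1, lt_of_lt_of_le hr.2 ht1⟩

lemma mu_mono (I : ℝ → ℝ) {s t : ℝ} (h : s ≤ t) :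
    mu I (Set.Ioo 0 s) ≤ mu I (Set.Ioo 0 t) :=
  measure_mono (Set.Ioo_subset_Ioo le_rfl h)

lemma B_meas (I : ℝ → ℝ) : Measurable (fun s => mu I (Set.Ioo (0:ℝ) s)) :=
  Monotone.measurable (fun _ _ h => mu_mono I h)

lemma mu_pos (I : ℝ → ℝ) (hImono : MonotoneOn I (Set.Ioo (0:ℝ) 1)) {t : ℝ}
    (ht : t ∈ Set.Ioo (0:ℝ) 1) : 0 < mu I (Set.Ioo 0 t) := by
  have hWt : 0 < W I t := by
    rw [W_eq I hImono ht]
    simp [ENNReal.ofReal_ne_top]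
  calc (0:ℝ≥0∞) < W I t * ENNReal.ofReal t := by
        refine ENNReal.mul_pos hWt.ne' ?_
        simp [ht.1]
    _ = ∫⁻ _ in Set.Ioo (0:ℝ) t, W I t := by
        rw [setLIntegral_const, Real.volume_Ioo]
        simp
    _ ≤ ∫⁻ r in Set.Ioo (0:ℝ) t, W I r := by
        refine lintegral_mono_ae ?_
        filter_upwards [ae_restrict_mem measurableSet_Ioo] with r hr
        exact W_anti I hr.2.le
    _ = mu I (Set.Ioo 0 t) := (mu_apply I measurableSet_Ioo).symm

lemma mu_lt_top (I : ℝ → ℝ) (hImono : MonotoneOn I (Set.Ioo (0:ℝ) 1))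
    (hIint : (∫⁻ s in Set.Ioo (0:ℝ) 1, (ENNReal.ofReal (I s))⁻¹) < ⊤) {t : ℝ}
    (ht : t ≤ 1) : mu I (Set.Ioo 0 t) < ⊤ := by
  refine lt_of_le_of_lt (mu_mono I ht) ?_
  rw [mu_eq_stmt I hImono le_rfl]
  exact hIint

/-- key sub-level bound : the mu-measure of the set where `B ≤ x` is at most `x`. -/
lemma mu_sublevel (I : ℝ → ℝ) (x : ℝ≥0∞) :
    mu I {s : ℝ | s ∈ Set.Ioo (0:ℝ) 1 ∧ mu I (Set.Ioo 0 s) ≤ x} ≤ x := by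
  set T := {s : ℝ | s ∈ Set.Ioo (0:ℝ) 1 ∧ mu I (Set.Ioo 0 s) ≤ x} with hT
  rcases T.eq_empty_or_nonempty with hTe | hTne
  · simp [hTe]
  have hbdd : BddAbove T := ⟨1, fun s hs => hs.1.2.le⟩
  set σ := sSup T with hσ
  obtain ⟨u, hu_mono, hu_tendsto, hu_mem⟩ := exists_seq_tendsto_sSup hTne hbdd
  have hsub : T ⊆ Set.Ioo 0 σ ∪ {σ} := by
    intro s hs
    rcases lt_or_eq_of_le (le_csSup hbdd hs) with h | h
    · exact Or.inl ⟨hs.1.1, h⟩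
    · exact Or.inr (by simp [h, hσ])
  have hIooσ : Set.Ioo (0:ℝ) σ = ⋃ n, Set.Ioo (0:ℝ) (u n) := by
    ext v
    constructor
    · rintro ⟨hv0, hvσ⟩
      obtain ⟨n, hn⟩ := ((tendsto_order.1 hu_tendsto).1 v hvσ).exists
      exact Set.mem_iUnion.mpr ⟨n, hv0, hn⟩
    · rintro hv
      obtain ⟨n, hv0, hvn⟩ := Set.mem_iUnion.mp hv
      exact ⟨hv0, lt_of_lt_of_le hvn (le_csSup hbdd (hu_mem n))⟩
  have hmono : Monotone (fun n => Set.Ioo (0:ℝ) (u n)) :=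
    fun a b hab => Set.Ioo_subset_Ioo le_rfl (hu_mono hab)
  calc mu I T ≤ mu I (Set.Ioo 0 σ ∪ {σ}) := measure_mono hsub
    _ ≤ mu I (Set.Ioo 0 σ) + mu I {σ} := measure_union_le _ _
    _ = mu I (Set.Ioo 0 σ) := by rw [mu_singleton]; simp
    _ = ⨆ n, mu I (Set.Ioo 0 (u n)) := by rw [hIooσ, hmono.measure_iUnion]
    _ ≤ x := iSup_le fun n => (hu_mem n).2

lemma HI_anti (I : ℝ → ℝ) (g : ℝ → ℝ≥0∞) : Antitone (HI I g) := by
  intro x y hxy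
  exact lintegral_mono' (Measure.restrict_mono (Set.Ioo_subset_Ioo hxy le_rfl) le_rfl) le_rfl

lemma HI_meas (I : ℝ → ℝ) (g : ℝ → ℝ≥0∞) : Measurable (HI I g) :=
  (HI_anti I g).measurable

lemma HI_eq_mu (I : ℝ → ℝ) (hImono : MonotoneOn I (Set.Ioo (0:ℝ) 1)) (g : ℝ → ℝ≥0∞)
    (hg : Measurable g) {t : ℝ} (ht : 0 ≤ t) :
    HI I g t = ∫⁻ r in Set.Ioo t 1, g r ∂(mu I) := by
  rw [HI, mu, restrict_withDensity measurableSet_Ioo,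
    lintegral_withDensity_eq_lintegral_mul _ (W_meas I) hg]
  refine lintegral_congr_ae ?_
  filter_upwards [ae_restrict_mem measurableSet_Ioo] with r hr
  have hr01 : r ∈ Set.Ioo (0:ℝ) 1 := ⟨lt_of_le_of_lt ht hr.1, hr.2⟩
  simp only [Pi.mul_apply, W_eq I hImono hr01, div_eq_mul_inv, mul_comm]

-- rpow helpers
lemma pow_rpow_inv {x : ℝ≥0∞} {n : ℕ} (hn : n ≠ 0) : (x ^ n) ^ ((n:ℝ)⁻¹) = x := by
  rw [← ENNReal.rpow_natCast x n, ← ENNReal.rpow_mul,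
    mul_inv_cancel₀ (by exact_mod_cast hn), ENNReal.rpow_one]

lemma rpow_inv_pow {x : ℝ≥0∞} {n : ℕ} (hn : n ≠ 0) : (x ^ ((n:ℝ)⁻¹)) ^ n = x := by
  rw [← ENNReal.rpow_natCast _ n, ← ENNReal.rpow_mul,
    inv_mul_cancel₀ (by exact_mod_cast hn), ENNReal.rpow_one]

lemma pow_cancel {x y : ℝ≥0∞} {n : ℕ} (hn : n ≠ 0) (h : x ^ n ≤ y ^ n) : x ≤ y := by
  calc x = (x ^ n) ^ ((n:ℝ)⁻¹) := (pow_rpow_inv hn).symm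
    _ ≤ (y ^ n) ^ ((n:ℝ)⁻¹) := ENNReal.rpow_le_rpow h (by positivity)
    _ = y := pow_rpow_inv hn

lemma le_root {x y : ℝ≥0∞} {n : ℕ} (hn : n ≠ 0) (h : x ^ n ≤ y) : x ≤ y ^ ((n:ℝ)⁻¹) := by
  calc x = (x ^ n) ^ ((n:ℝ)⁻¹) := (pow_rpow_inv hn).symm
    _ ≤ y ^ ((n:ℝ)⁻¹) := ENNReal.rpow_le_rpow h (by positivity)

lemma dyadic_loc {y z : ℝ≥0∞} (hy0 : y ≠ 0) (hzt : z ≠ ⊤) (hyz : y < z) :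
    ∃ l : ℕ, y * 2 ^ l < z ∧ z ≤ y * 2 ^ (l + 1) := by
  have hyt' : y ≠ ⊤ := hyz.ne_top
  have hex : ∃ n : ℕ, z ≤ y * 2 ^ n := by
    obtain ⟨n, hn⟩ := ENNReal.exists_nat_gt (ENNReal.div_lt_top hzt hy0).ne
    refine ⟨n, ?_⟩
    have h2 : (n : ℝ≥0∞) ≤ 2 ^ n := by
      exact_mod_cast (Nat.lt_two_pow_self (n := n)).le
    have : z / y < 2 ^ n := lt_of_lt_of_le hn h2
    have := (ENNReal.div_lt_iff (Or.inl hy0) (Or.inl hyt')).mp this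
    calc z ≤ 2 ^ n * y := this.le
      _ = y * 2 ^ n := mul_comm _ _
  classical
  set n₀ := Nat.find hex with hn₀
  have hspec : z ≤ y * 2 ^ n₀ := Nat.find_spec hex
  have hn₀0 : n₀ ≠ 0 := by
    intro h0
    rw [h0] at hspec
    simp at hspec
    exact absurd hspec (not_le.mpr hyz)
  refine ⟨n₀ - 1, ?_, ?_⟩
  · have := Nat.find_min hex (m := n₀ - 1) (by omega)
    exact not_le.mp this
  · have : n₀ - 1 + 1 = n₀ := by omega
    rw [this]
    exact hspec

lemma const_bound {E y : ℝ≥0∞} (hy0 : y ≠ 0) (hyt : y ≠ ⊤) (M' l : ℕ) :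
    E * ((y * 2 ^ l) ^ (M' + 2))⁻¹ * (y * 2 ^ (l + 1))
      ≤ 2 * (E * (y ^ (M' + 1))⁻¹) * (2⁻¹) ^ l := by
  have h2l0 : ((2:ℝ≥0∞) ^ l) ≠ 0 := pow_ne_zero l (by norm_num)
  have h2lt : ((2:ℝ≥0∞) ^ l) ≠ ⊤ := pow_ne_top (by norm_num)
  have h1 : (y ^ (M' + 1) * y * (2 ^ l * 2 ^ l) : ℝ≥0∞) ≤ (y * 2 ^ l) ^ (M' + 2) := by
    calc y ^ (M' + 1) * y * (2 ^ l * 2 ^ l) = y ^ (M' + 2) * ((2:ℝ≥0∞) ^ l) ^ 2 := by ring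
      _ ≤ y ^ (M' + 2) * ((2:ℝ≥0∞) ^ l) ^ (M' + 2) :=
          mul_le_mul_right (pow_le_pow_right₀ (one_le_pow₀ (by norm_num)) (by omega)) _
      _ = (y * 2 ^ l) ^ (M' + 2) := (mul_pow _ _ _).symm
  have h2 : ((y * 2 ^ l) ^ (M' + 2))⁻¹ ≤ (y ^ (M' + 1) * y * (2 ^ l * 2 ^ l))⁻¹ :=
    ENNReal.inv_le_inv.mpr h1
  have h3 : (y ^ (M' + 1) * y * (2 ^ l * 2 ^ l) : ℝ≥0∞)⁻¹
      = (y ^ (M' + 1))⁻¹ * y⁻¹ * ((2 ^ l)⁻¹ * (2 ^ l)⁻¹) := by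
    rw [ENNReal.mul_inv (Or.inl (mul_ne_zero (pow_ne_zero _ hy0) hy0))
        (Or.inr (mul_ne_zero h2l0 h2l0)),
      ENNReal.mul_inv (Or.inl (pow_ne_zero _ hy0)) (Or.inr hy0),
      ENNReal.mul_inv (Or.inl h2l0) (Or.inr h2l0)]
  calc E * ((y * 2 ^ l) ^ (M' + 2))⁻¹ * (y * 2 ^ (l + 1))
      ≤ E * ((y ^ (M' + 1))⁻¹ * y⁻¹ * ((2 ^ l)⁻¹ * (2 ^ l)⁻¹)) * (y * 2 ^ (l + 1)) := by
        rw [← h3]; exact mul_le_mul_left (mul_le_mul_right h2 _) _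
    _ = 2 * (E * (y ^ (M' + 1))⁻¹) * (2⁻¹) ^ l * ((y * y⁻¹) * (2 ^ l * (2 ^ l)⁻¹)) := by
        rw [pow_succ, ENNReal.inv_pow]
        ring
    _ = 2 * (E * (y ^ (M' + 1))⁻¹) * (2⁻¹) ^ l := by
        rw [ENNReal.mul_inv_cancel hy0 hyt, ENNReal.mul_inv_cancel h2l0 h2lt, one_mul, mul_one]

lemma shells (I : ℝ → ℝ) (hImono : MonotoneOn I (Set.Ioo (0:ℝ) 1))
    (hIint : (∫⁻ s in Set.Ioo (0:ℝ) 1, (ENNReal.ofReal (I s))⁻¹) < ⊤)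
    (g : ℝ → ℝ≥0∞) {t : ℝ} (ht : t ∈ Set.Ioo (0:ℝ) 1)
    {M : ℕ} (hM : 2 ≤ M) {E y : ℝ≥0∞} (hy0 : y ≠ 0) (hyt : y ≠ ⊤)
    (hgle : ∀ s ∈ Set.Ioo t 1, g s * (mu I (Set.Ioo 0 s)) ^ M ≤ E) :
    ∫⁻ s in {s : ℝ | s ∈ Set.Ioo t 1 ∧ y < mu I (Set.Ioo 0 s)}, g s ∂(mu I)
      ≤ 4 * E * (y ^ (M - 1))⁻¹ := by
  obtain ⟨M', rfl⟩ : ∃ M', M = M' + 2 := ⟨M - 2, by omega⟩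
  set B : ℝ → ℝ≥0∞ := fun s => mu I (Set.Ioo 0 s) with hB
  set Shell : ℕ → Set ℝ := fun l =>
    {s : ℝ | s ∈ Set.Ioo t 1 ∧ y * 2 ^ l < B s ∧ B s ≤ y * 2 ^ (l + 1)} with hShell
  have hcover : {s : ℝ | s ∈ Set.Ioo t 1 ∧ y < B s} ⊆ ⋃ l, Shell l := by
    intro s hs
    have hBt : B s ≠ ⊤ := (mu_lt_top I hImono hIint hs.1.2.le).ne
    obtain ⟨l, hl1, hl2⟩ := dyadic_loc hy0 hBt hs.2
    exact Set.mem_iUnion.mpr ⟨l, hs.1, hl1, hl2⟩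
  have hstep : ∀ l : ℕ, ∫⁻ s in Shell l, g s ∂(mu I)
      ≤ 2 * (E * (y ^ (M' + 1))⁻¹) * (2⁻¹) ^ l := by
    intro l
    have h2pow_ne0 : ((2:ℝ≥0∞) ^ l) ≠ 0 := (pow_ne_zero l (by norm_num))
    have h2pow_net : ((2:ℝ≥0∞) ^ l) ≠ ⊤ := (pow_ne_top (by norm_num))
    have hc0 : y * 2 ^ l ≠ 0 := mul_ne_zero hy0 h2pow_ne0
    have hct : y * 2 ^ l ≠ ⊤ := ENNReal.mul_ne_top hyt h2pow_net
    have hpt : ∀ s ∈ Shell l, g s ≤ E * (((y * 2 ^ l) ^ (M' + 2))⁻¹) := by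
      intro s hs
      have h1 : g s * (y * 2 ^ l) ^ (M' + 2) ≤ E := by
        refine le_trans ?_ (hgle s hs.1)
        exact mul_le_mul_right (pow_le_pow_left' hs.2.1.le _) _
      have hb0 : ((y * 2 ^ l) ^ (M' + 2)) ≠ 0 := pow_ne_zero _ hc0
      have hbt : ((y * 2 ^ l) ^ (M' + 2)) ≠ ⊤ := pow_ne_top hct
      have h2 := (ENNReal.le_div_iff_mul_le (Or.inl hb0) (Or.inl hbt)).mpr h1
      rwa [div_eq_mul_inv] at h2
    have hmeasShell : mu I (Shell l) ≤ y * 2 ^ (l + 1) := by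
      refine le_trans (measure_mono ?_) (mu_sublevel I (y * 2 ^ (l + 1)))
      intro s hs
      exact ⟨⟨lt_trans ht.1 hs.1.1, hs.1.2⟩, hs.2.2⟩
    have hShellMeas : MeasurableSet (Shell l) := by
      have : Shell l = Set.Ioo t 1 ∩ (B ⁻¹' (Set.Ioi (y * 2 ^ l)) ∩ B ⁻¹' (Set.Iic (y * 2 ^ (l+1)))) := by
        ext s; simp [hShell]
      rw [this]
      exact measurableSet_Ioo.inter ((B_meas I measurableSet_Ioi).inter
        (B_meas I measurableSet_Iic))
    calc ∫⁻ s in Shell l, g s ∂(mu I)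
        ≤ ∫⁻ _ in Shell l, E * (((y * 2 ^ l) ^ (M' + 2))⁻¹) ∂(mu I) := by
          refine lintegral_mono_ae ?_
          filter_upwards [ae_restrict_mem hShellMeas] with s hs
          exact hpt s hs
      _ = E * (((y * 2 ^ l) ^ (M' + 2))⁻¹) * mu I (Shell l) := setLIntegral_const _ _
      _ ≤ E * (((y * 2 ^ l) ^ (M' + 2))⁻¹) * (y * 2 ^ (l + 1)) := by
          exact mul_le_mul_right hmeasShell _
      _ ≤ 2 * (E * (y ^ (M' + 1))⁻¹) * (2⁻¹) ^ l := const_bound hy0 hyt M' l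
  calc ∫⁻ s in {s : ℝ | s ∈ Set.Ioo t 1 ∧ y < B s}, g s ∂(mu I)
      ≤ ∫⁻ s in ⋃ l, Shell l, g s ∂(mu I) :=
        lintegral_mono' (Measure.restrict_mono hcover le_rfl) le_rfl
    _ ≤ ∑' l, ∫⁻ s in Shell l, g s ∂(mu I) := lintegral_iUnion_le _ _
    _ ≤ ∑' l : ℕ, 2 * (E * (y ^ (M' + 1))⁻¹) * (2⁻¹) ^ l :=
        ENNReal.tsum_le_tsum hstep
    _ = 2 * (E * (y ^ (M' + 1))⁻¹) * ((1 - 2⁻¹)⁻¹) := by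
        rw [ENNReal.tsum_mul_left, ENNReal.tsum_geometric]
    _ = 4 * E * (y ^ (M' + 1))⁻¹ := by
        rw [ENNReal.one_sub_inv_two, inv_inv]
        ring

lemma add_pow_le' {a b : ℝ≥0∞} (M : ℕ) : (a + b) ^ M ≤ 2 ^ M * (a ^ M + b ^ M) := by
  rcases le_total a b with h | h
  · calc (a + b) ^ M ≤ (2 * b) ^ M :=
        pow_le_pow_left' (by rw [two_mul]; exact add_le_add h le_rfl) M
      _ = 2 ^ M * b ^ M := mul_pow _ _ _
      _ ≤ 2 ^ M * (a ^ M + b ^ M) := mul_le_mul_right le_add_self _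
  · calc (a + b) ^ M ≤ (2 * a) ^ M :=
        pow_le_pow_left' (by rw [two_mul]; exact add_le_add le_rfl h) M
      _ = 2 ^ M * a ^ M := mul_pow _ _ _
      _ ≤ 2 ^ M * (a ^ M + b ^ M) := mul_le_mul_right le_self_add _

/-- the key one-step pointwise lemma -/
lemma onestep (I : ℝ → ℝ) (hImono : MonotoneOn I (Set.Ioo (0:ℝ) 1))
    (hIint : (∫⁻ s in Set.Ioo (0:ℝ) 1, (ENNReal.ofReal (I s))⁻¹) < ⊤)
    {M : ℕ} (hM : 2 ≤ M) (g : ℝ → ℝ≥0∞) (hg : Measurable g)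
    (hganti : AntitoneOn g (Set.Ioo (0:ℝ) 1)) {E : ℝ≥0∞}
    (hE : ∀ s ∈ Set.Ioo (0:ℝ) 1, g s * (mu I (Set.Ioo 0 s)) ^ M ≤ E)
    {t : ℝ} (ht : t ∈ Set.Ioo (0:ℝ) 1) :
    (HI I g t) ^ M ≤ 16 ^ M * E * (g t) ^ (M - 1) := by
  have hBt0 : mu I (Set.Ioo 0 t) ≠ 0 := (mu_pos I hImono ht).ne'
  by_cases hgt0 : g t = 0
  · have hHI : HI I g t = 0 := by
      rw [HI]
      have hz : ∀ᵐ r ∂(volume.restrict (Set.Ioo t 1)),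
          g r / ENNReal.ofReal (I r) = 0 := by
        filter_upwards [ae_restrict_mem measurableSet_Ioo] with r hr
        have hr01 : r ∈ Set.Ioo (0:ℝ) 1 := ⟨lt_trans ht.1 hr.1, hr.2⟩
        have hgr : g r ≤ g t := hganti ht hr01 hr.1.le
        rw [hgt0, le_zero_iff] at hgr
        simp [hgr]
      rw [lintegral_congr_ae hz, lintegral_zero]
    rw [hHI, zero_pow (by omega : M ≠ 0)]
    exact zero_le
  by_cases hgtT : g t = ⊤
  · have hEtop : E = ⊤ := by
      have h1 := hE t ht
      rw [hgtT, ENNReal.top_mul (pow_ne_zero _ hBt0)] at h1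
      exact top_le_iff.mp h1
    have hRHS : (16:ℝ≥0∞) ^ M * E * (g t) ^ (M - 1) = ⊤ := by
      rw [hEtop, hgtT, ENNReal.top_pow (by omega : M - 1 ≠ 0),
        ENNReal.mul_top (pow_ne_zero M (by norm_num : (16:ℝ≥0∞) ≠ 0)),
        ENNReal.top_mul_top]
    rw [hRHS]; exact le_top
  by_cases hET : E = ⊤
  · have hRHS : (16:ℝ≥0∞) ^ M * E * (g t) ^ (M - 1) = ⊤ := by
      rw [hET, ENNReal.mul_top (pow_ne_zero M (by norm_num : (16:ℝ≥0∞) ≠ 0)),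
        ENNReal.top_mul (pow_ne_zero _ hgt0)]
    rw [hRHS]; exact le_top
  have hE0 : E ≠ 0 := by
    intro h0
    have h1 := hE t ht
    rw [h0, le_zero_iff, mul_eq_zero] at h1
    rcases h1 with h | h
    · exact hgt0 h
    · exact pow_ne_zero M hBt0 h
  have hdiv0 : E / g t ≠ 0 := (ENNReal.div_pos hE0 hgtT).ne'
  have hdivT : E / g t ≠ ⊤ := (ENNReal.div_lt_top hET hgt0).ne
  set x := (E / g t) ^ ((M:ℝ)⁻¹) with hxdef
  have hx0 : x ≠ 0 := (ENNReal.rpow_pos (ENNReal.div_pos hE0 hgtT) hdivT).ne'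
  have hxT : x ≠ ⊤ := ENNReal.rpow_ne_top_of_nonneg (by positivity) hdivT
  have hxM : x ^ M = E / g t := rpow_inv_pow (by omega : M ≠ 0)
  set S1 := {s : ℝ | s ∈ Set.Ioo t 1 ∧ mu I (Set.Ioo 0 s) ≤ x} with hS1
  set S2 := {s : ℝ | s ∈ Set.Ioo t 1 ∧ x < mu I (Set.Ioo 0 s)} with hS2
  have hS1meas : MeasurableSet S1 :=
    measurableSet_Ioo.inter (B_meas I measurableSet_Iic)
  have hsplit : HI I g t ≤ (∫⁻ s in S1, g s ∂(mu I)) + ∫⁻ s in S2, g s ∂(mu I) := by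
    rw [HI_eq_mu I hImono g hg ht.1.le]
    have hcover : Set.Ioo t 1 ⊆ S1 ∪ S2 := fun s hs =>
      (le_or_gt (mu I (Set.Ioo 0 s)) x).imp (fun h => ⟨hs, h⟩) (fun h => ⟨hs, h⟩)
    calc ∫⁻ s in Set.Ioo t 1, g s ∂(mu I)
        ≤ ∫⁻ s in S1 ∪ S2, g s ∂(mu I) :=
          lintegral_mono' (Measure.restrict_mono hcover le_rfl) le_rfl
      _ ≤ _ := lintegral_union_le _ _ _
  have hterm1 : (∫⁻ s in S1, g s ∂(mu I)) ≤ g t * x := by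
    have hmono1 : (∫⁻ s in S1, g s ∂(mu I)) ≤ ∫⁻ _ in S1, g t ∂(mu I) := by
      refine lintegral_mono_ae ?_
      filter_upwards [ae_restrict_mem hS1meas] with s hs
      exact hganti ht ⟨lt_trans ht.1 hs.1.1, hs.1.2⟩ hs.1.1.le
    have hconst : (∫⁻ _ in S1, g t ∂(mu I)) = g t * mu I S1 := setLIntegral_const _ _
    have hsub : mu I S1 ≤ x := by
      refine le_trans (measure_mono ?_) (mu_sublevel I x)
      exact fun s hs => ⟨⟨lt_trans ht.1 hs.1.1, hs.1.2⟩, hs.2⟩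
    exact hmono1.trans (hconst.le.trans (mul_le_mul_right hsub _))
  have hterm2 : (∫⁻ s in S2, g s ∂(mu I)) ≤ 4 * E * (x ^ (M - 1))⁻¹ :=
    shells I hImono hIint g ht hM hx0 hxT
      (fun s hs => hE s ⟨lt_trans ht.1 hs.1, hs.2⟩)
  have hHIle : HI I g t ≤ g t * x + 4 * E * (x ^ (M - 1))⁻¹ :=
    hsplit.trans (add_le_add hterm1 hterm2)
  have hA : (g t * x) ^ M = E * g t ^ (M - 1) := by
    rw [mul_pow, hxM, div_eq_mul_inv]
    have hgM : g t ^ M = g t ^ (M - 1) * g t := by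
      rw [← pow_succ]; congr 1; omega
    calc g t ^ M * (E * (g t)⁻¹) = E * g t ^ (M - 1) * (g t * (g t)⁻¹) := by
          rw [hgM]; ring
      _ = E * g t ^ (M - 1) := by rw [ENNReal.mul_inv_cancel hgt0 hgtT, mul_one]
  have hB' : (4 * E * (x ^ (M - 1))⁻¹) ^ M = 4 ^ M * (E * g t ^ (M - 1)) := by
    have hstep1 : (x ^ (M - 1)) ^ M = E ^ (M - 1) * (g t ^ (M - 1))⁻¹ := by
      rw [← pow_mul, Nat.mul_comm, pow_mul, hxM, div_eq_mul_inv, mul_pow,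
        ← ENNReal.inv_pow]
    have hEM : E ^ M = E ^ (M - 1) * E := by
      rw [← pow_succ]; congr 1; omega
    rw [mul_pow, mul_pow, ← ENNReal.inv_pow, hstep1,
      ENNReal.mul_inv (Or.inl (pow_ne_zero _ hE0)) (Or.inl (pow_ne_top hET)), inv_inv, hEM]
    calc 4 ^ M * (E ^ (M - 1) * E) * ((E ^ (M - 1))⁻¹ * g t ^ (M - 1))
        = 4 ^ M * (E * g t ^ (M - 1)) * (E ^ (M - 1) * (E ^ (M - 1))⁻¹) := by ring
      _ = 4 ^ M * (E * g t ^ (M - 1)) := by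
          rw [ENNReal.mul_inv_cancel (pow_ne_zero _ hE0) (pow_ne_top hET), mul_one]
  have h2M : (2:ℝ≥0∞) ≤ 2 ^ M := le_self_pow₀ (by norm_num) (by omega)
  calc (HI I g t) ^ M
      ≤ (g t * x + 4 * E * (x ^ (M - 1))⁻¹) ^ M := pow_le_pow_left' hHIle M
    _ ≤ 2 ^ M * ((g t * x) ^ M + (4 * E * (x ^ (M - 1))⁻¹) ^ M) := add_pow_le' M
    _ = 2 ^ M * (1 + 4 ^ M) * (E * g t ^ (M - 1)) := by rw [hA, hB']; ring
    _ ≤ 2 ^ M * (4 ^ M + 4 ^ M) * (E * g t ^ (M - 1)) := by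
        refine mul_le_mul_left (mul_le_mul_right ?_ _) _
        exact add_le_add_left (one_le_pow₀ (by norm_num : (1:ℝ≥0∞) ≤ 4)) _
    _ = (2 ^ M * 2) * 4 ^ M * (E * g t ^ (M - 1)) := by ring
    _ ≤ (2 ^ M * 2 ^ M) * 4 ^ M * (E * g t ^ (M - 1)) := by
        exact mul_le_mul_left (mul_le_mul_left (mul_le_mul_right h2M _) _) _
    _ = 16 ^ M * E * g t ^ (M - 1) := by
        rw [← mul_pow, ← mul_pow]
        norm_num
        ring

lemma onestep_pow (I : ℝ → ℝ) (hImono : MonotoneOn I (Set.Ioo (0:ℝ) 1))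
    (hIint : (∫⁻ s in Set.Ioo (0:ℝ) 1, (ENNReal.ofReal (I s))⁻¹) < ⊤)
    {M m' : ℕ} (hM : 2 ≤ M) (hm' : m' ≠ 0) (g : ℝ → ℝ≥0∞) (hg : Measurable g)
    (hganti : AntitoneOn g (Set.Ioo (0:ℝ) 1)) {Eh : ℝ≥0∞}
    (hE : ∀ s ∈ Set.Ioo (0:ℝ) 1, (g s) ^ m' * (mu I (Set.Ioo 0 s)) ^ (M * m') ≤ Eh)
    {t : ℝ} (ht : t ∈ Set.Ioo (0:ℝ) 1) :
    (HI I g t) ^ (M * m') ≤ 16 ^ (M * m') * Eh * (g t) ^ ((M - 1) * m') := by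
  have hE' : ∀ s ∈ Set.Ioo (0:ℝ) 1,
      g s * (mu I (Set.Ioo 0 s)) ^ M ≤ Eh ^ ((m':ℝ)⁻¹) := by
    intro s hs
    refine le_root hm' ?_
    calc (g s * (mu I (Set.Ioo 0 s)) ^ M) ^ m'
        = (g s) ^ m' * (mu I (Set.Ioo 0 s)) ^ (M * m') := by
          rw [mul_pow, ← pow_mul]
      _ ≤ Eh := hE s hs
  have h1 := onestep I hImono hIint hM g hg hganti hE' ht
  calc (HI I g t) ^ (M * m') = ((HI I g t) ^ M) ^ m' := pow_mul _ _ _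
    _ ≤ (16 ^ M * Eh ^ ((m':ℝ)⁻¹) * (g t) ^ (M - 1)) ^ m' := pow_le_pow_left' h1 m'
    _ = 16 ^ (M * m') * Eh * (g t) ^ ((M - 1) * m') := by
        rw [mul_pow, mul_pow, ← pow_mul, ← pow_mul, rpow_inv_pow hm']

lemma exp_juggle {A : ℝ≥0∞} (hA : 1 ≤ A) (D v : ℝ≥0∞) (i j : ℕ) :
    A ^ ((j + 2) * (i + 2 + j)) *
      (A ^ ((i + 2 + j) * (i + 2 + j) * i) * D ^ i * D ^ (j + 2)) *
      ((A ^ ((i + 2 + j) * (i + 2 + j) * i) * D ^ i * v ^ (j + 2)) ^ (j + 1))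
    ≤ (A ^ ((i + 2 + j) * (i + 2 + j) * (i + 1)) * D ^ (i + 1) * v ^ (j + 1)) ^ (j + 2) := by
  have key : (A ^ ((i + 2 + j) * (i + 2 + j) * (i + 1)) * D ^ (i + 1) *
        v ^ (j + 1)) ^ (j + 2)
      = A ^ ((j + 2) * (i + 2 + j)) *
        (A ^ ((i + 2 + j) * (i + 2 + j) * i) * D ^ i * D ^ (j + 2)) *
        ((A ^ ((i + 2 + j) * (i + 2 + j) * i) * D ^ i * v ^ (j + 2)) ^ (j + 1)) *
        A ^ ((j + 2) * (i + 2 + j) * (i + 1 + j)) := by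
    ring
  rw [key]
  exact le_mul_of_one_le_right' (one_le_pow₀ hA)

lemma iter_bound (I : ℝ → ℝ) (hImono : MonotoneOn I (Set.Ioo (0:ℝ) 1))
    (hIint : (∫⁻ s in Set.Ioo (0:ℝ) 1, (ENNReal.ofReal (I s))⁻¹) < ⊤)
    {m : ℕ} (h : ℝ → ℝ≥0∞) (hh : Measurable h)
    (hhanti : AntitoneOn h (Set.Ioo (0:ℝ) 1)) {D : ℝ≥0∞}
    (hD : ∀ s ∈ Set.Ioo (0:ℝ) 1, h s * (mu I (Set.Ioo 0 s)) ^ m ≤ D) :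
    ∀ i, i + 1 ≤ m → ∀ t ∈ Set.Ioo (0:ℝ) 1,
      ((HI I)^[i] h t) ^ m ≤ 16 ^ (m * m * i) * D ^ i * (h t) ^ (m - i) := by
  intro i
  induction i with
  | zero => intro _ t _; simp
  | succ i ih =>
    intro hi1 t ht
    have hi : i + 1 ≤ m := by omega
    have hganti : AntitoneOn ((HI I)^[i] h) (Set.Ioo (0:ℝ) 1) := by
      cases i with
      | zero => simpa using hhanti
      | succ n =>
        rw [Function.iterate_succ_apply']
        exact (HI_anti I _).antitoneOn _
    have hgmeas : Measurable ((HI I)^[i] h) := by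
      cases i with
      | zero => simpa using hh
      | succ n => rw [Function.iterate_succ_apply']; exact HI_meas I _
    obtain ⟨j, hj⟩ : ∃ j, m = i + 2 + j := ⟨m - (i + 2), by omega⟩
    have hMsub : m - i = j + 2 := by omega
    have hMsub1 : m - (i + 1) = j + 1 := by omega
    have hMsub2 : m - i - 1 = j + 1 := by omega
    have hE : ∀ s ∈ Set.Ioo (0:ℝ) 1,
        ((HI I)^[i] h s) ^ m * (mu I (Set.Ioo 0 s)) ^ ((m - i) * m)
          ≤ 16 ^ (m * m * i) * D ^ i * D ^ (m - i) := by
      intro s hs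
      calc ((HI I)^[i] h s) ^ m * (mu I (Set.Ioo 0 s)) ^ ((m - i) * m)
          ≤ 16 ^ (m * m * i) * D ^ i * (h s) ^ (m - i) *
              (mu I (Set.Ioo 0 s)) ^ ((m - i) * m) :=
            mul_le_mul_left (ih hi s hs) _
        _ = 16 ^ (m * m * i) * D ^ i * (h s * (mu I (Set.Ioo 0 s)) ^ m) ^ (m - i) := by
            rw [mul_pow, Nat.mul_comm (m - i) m, pow_mul]
            ring
        _ ≤ 16 ^ (m * m * i) * D ^ i * D ^ (m - i) :=
            mul_le_mul_right (pow_le_pow_left' (hD s hs) _) _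
    have hkey := onestep_pow I hImono hIint (M := m - i) (m' := m)
      (by omega : 2 ≤ m - i) (by omega : m ≠ 0) ((HI I)^[i] h) hgmeas hganti hE ht
    refine pow_cancel (n := m - i) (by omega : m - i ≠ 0) ?_
    have hgoal_pow : (((HI I)^[i + 1] h t) ^ m) ^ (m - i)
        = (HI I ((HI I)^[i] h) t) ^ ((m - i) * m) := by
      rw [Function.iterate_succ_apply', ← pow_mul, Nat.mul_comm]
    rw [hgoal_pow]
    refine hkey.trans ?_
    have hgt : ((HI I)^[i] h t) ^ ((m - i - 1) * m)
        ≤ (16 ^ (m * m * i) * D ^ i * (h t) ^ (m - i)) ^ (m - i - 1) := by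
      rw [Nat.mul_comm, pow_mul]
      exact pow_le_pow_left' (ih hi t ht) _
    calc 16 ^ ((m - i) * m) * (16 ^ (m * m * i) * D ^ i * D ^ (m - i)) *
          ((HI I)^[i] h t) ^ ((m - i - 1) * m)
        ≤ 16 ^ ((m - i) * m) * (16 ^ (m * m * i) * D ^ i * D ^ (m - i)) *
            (16 ^ (m * m * i) * D ^ i * (h t) ^ (m - i)) ^ (m - i - 1) :=
          mul_le_mul_right hgt _
      _ ≤ (16 ^ (m * m * (i + 1)) * D ^ (i + 1) * h t ^ (m - (i + 1))) ^ (m - i) := by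
          rw [hMsub2, hMsub, hMsub1, hj]
          exact exp_juggle (by norm_num) D (h t) i j
  
lemma antitone_le_decRearr (h : ℝ → ℝ≥0∞) (hhanti : AntitoneOn h (Set.Ioo (0:ℝ) 1))
    {s t : ℝ} (hs : s ∈ Set.Ioo (0:ℝ) 1) (ht : t ∈ Set.Ioo (0:ℝ) 1) (hst : s < t) :
    h t ≤ decRearr h s := by
  refine le_sInf fun lam hlam => ?_
  by_contra hcon
  push_neg at hcon
  have hsub : Set.Ioo (0:ℝ) t ⊆ {x | x ∈ Set.Ioo (0:ℝ) 1 ∧ lam < h x} := by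
    intro x hx
    have hx01 : x ∈ Set.Ioo (0:ℝ) 1 := ⟨hx.1, lt_trans hx.2 ht.2⟩
    exact ⟨hx01, lt_of_lt_of_le hcon (hhanti hx01 ht hx.2.le)⟩
  have h1 : ENNReal.ofReal t ≤ ENNReal.ofReal s := by
    calc ENNReal.ofReal t = volume (Set.Ioo (0:ℝ) t) := by
          rw [Real.volume_Ioo]; norm_num
      _ ≤ volume {x | x ∈ Set.Ioo (0:ℝ) 1 ∧ lam < h x} := measure_mono hsub
      _ ≤ ENNReal.ofReal s := hlam
  have h2 : t ≤ s := (ENNReal.ofReal_le_ofReal_iff hs.1.le).mp h1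
  linarith

lemma pointwise_marc (I : ℝ → ℝ) (hImono : MonotoneOn I (Set.Ioo (0:ℝ) 1))
    {m : ℕ} (h : ℝ → ℝ≥0∞) (hhanti : AntitoneOn h (Set.Ioo (0:ℝ) 1))
    {a : ℝ≥0∞} (haT : a ≠ ⊤)
    (hm0 : ∀ s ∈ Set.Ioo (0:ℝ) 1, decRearr h s * (mu I (Set.Ioo 0 s)) ^ m ≤ a) :
    ∀ t ∈ Set.Ioo (0:ℝ) 1, h t * (mu I (Set.Ioo 0 t)) ^ m ≤ a := by
  intro t ht
  have ht2 : (t/2) ∈ Set.Ioo (0:ℝ) 1 := ⟨by linarith [ht.1], by linarith [ht.1, ht.2]⟩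
  have ht2t : t / 2 < t := by linarith [ht.1]
  have hle : h t ≤ decRearr h (t/2) := antitone_le_decRearr h hhanti ht2 ht ht2t
  have hBpos : (mu I (Set.Ioo 0 (t/2))) ^ m ≠ 0 := pow_ne_zero _ (mu_pos I hImono ht2).ne'
  have hDRneT : decRearr h (t/2) ≠ ⊤ := by
    intro htop
    have := hm0 (t/2) ht2
    rw [htop, ENNReal.top_mul hBpos] at this
    exact haT (top_le_iff.mp this)
  have hhtT : h t ≠ ⊤ := fun htop => hDRneT (top_le_iff.mp (htop ▸ hle))
  -- approximating sequence
  set u : ℕ → ℝ := fun n => t * ((n + 1 : ℝ) / (n + 2)) with hu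
  have hu_mem : ∀ n, u n ∈ Set.Ioo (0:ℝ) t := by
    intro n
    constructor
    · have : (0:ℝ) < (n + 1 : ℝ) / (n + 2) := by positivity
      exact mul_pos ht.1 this
    · have h1 : ((n:ℝ) + 1) / (n + 2) < 1 := by
        rw [div_lt_one (by positivity)]
        linarith
      calc t * ((n + 1 : ℝ) / (n + 2)) < t * 1 := by
            exact mul_lt_mul_of_pos_left h1 ht.1
        _ = t := mul_one t
  have hu_mono : Monotone u := by
    intro p q hpq
    have h1 : ((p:ℝ) + 1) / (p + 2) ≤ ((q:ℝ) + 1) / (q + 2) := by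
      rw [div_le_div_iff₀ (by positivity) (by positivity)]
      have : (p:ℝ) ≤ q := Nat.cast_le.mpr hpq
      nlinarith
    exact mul_le_mul_of_nonneg_left h1 ht.1.le
  have hUnion : Set.Ioo (0:ℝ) t = ⋃ n, Set.Ioo (0:ℝ) (u n) := by
    ext v
    constructor
    · rintro ⟨hv0, hvt⟩
      have hvt' : 0 < t - v := by linarith
      obtain ⟨n, hn⟩ := exists_nat_gt ((2 * v - t) / (t - v))
      refine Set.mem_iUnion.mpr ⟨n, hv0, ?_⟩
      have h2 : (2 * v - t) < n * (t - v) := by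
        calc 2 * v - t = ((2 * v - t) / (t - v)) * (t - v) := by field_simp
          _ < n * (t - v) := mul_lt_mul_of_pos_right hn hvt'
      have hgoal : v * ((n:ℝ) + 2) < t * ((n:ℝ) + 1) := by nlinarith
      have h3 := (lt_div_iff₀ (by positivity : (0:ℝ) < (n:ℝ) + 2)).mpr hgoal
      simpa [mul_div_assoc] using h3
    · rintro hv
      obtain ⟨n, hv0, hvn⟩ := Set.mem_iUnion.mp hv
      exact ⟨hv0, lt_trans hvn (hu_mem n).2⟩
  have hsets_mono : Monotone (fun n => Set.Ioo (0:ℝ) (u n)) :=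
    fun p q hpq => Set.Ioo_subset_Ioo le_rfl (hu_mono hpq)
  have hBlim : mu I (Set.Ioo 0 t) = ⨆ n, mu I (Set.Ioo 0 (u n)) := by
    rw [hUnion, hsets_mono.measure_iUnion]
  have hx_mono : Monotone (fun n => mu I (Set.Ioo 0 (u n))) :=
    fun p q hpq => measure_mono (hsets_mono hpq)
  have htend : Tendsto (fun n => h t * (mu I (Set.Ioo 0 (u n))) ^ m) atTop
      (𝓝 (h t * (mu I (Set.Ioo 0 t)) ^ m)) := by
    refine ENNReal.Tendsto.const_mul ?_ (Or.inr hhtT)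
    rw [hBlim]
    exact ENNReal.Tendsto.pow (tendsto_atTop_iSup hx_mono)
  refine le_of_tendsto htend (Eventually.of_forall fun n => ?_)
  calc h t * (mu I (Set.Ioo 0 (u n))) ^ m
      ≤ decRearr h (u n) * (mu I (Set.Ioo 0 (u n))) ^ m := by
        refine mul_le_mul_left ?_ _
        exact antitone_le_decRearr h hhanti
          ⟨(hu_mem n).1, lt_trans (hu_mem n).2 ht.2⟩ ht (hu_mem n).2
    _ ≤ a := hm0 (u n) ⟨(hu_mem n).1, lt_trans (hu_mem n).2 ht.2⟩

end HardyAux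

open HardyAux Set Filter in
/-- if `sup_t g*(t) ψ_I(t) ≤ C N(g)`, then
`N((H_I^k h)^{m/(m-k)})^{(m-k)/m} ≤ C' N(h)` for nonincreasing `h`. -/
theorem hardy_iterate_into_power_space (m k : ℕ) (hm : 2 ≤ m) (hk1 : 1 ≤ k)
    (hk2 : k ≤ m - 1) (I : ℝ → ℝ)
    (hIpos : ∀ t ∈ Set.Ioo (0:ℝ) 1, 0 < I t)
    (hImono : MonotoneOn I (Set.Ioo (0:ℝ) 1))
    (hIint : (∫⁻ s in Set.Ioo (0:ℝ) 1, (ENNReal.ofReal (I s))⁻¹) < ⊤)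
    (X : RINorm) (C : ℝ≥0) (hC : 0 < C)
    (hmarc : ∀ g : ℝ → ℝ≥0∞, Measurable g → ∀ t ∈ Set.Ioo (0:ℝ) 1,
      decRearr g t * (∫⁻ r in Set.Ioo (0:ℝ) t, (ENNReal.ofReal (I r))⁻¹) ^ m
        ≤ (C : ℝ≥0∞) * X.N g) :
    ∃ C' : ℝ≥0, 0 < C' ∧
      ∀ h : ℝ → ℝ≥0∞, Measurable h → AntitoneOn h (Set.Ioo (0:ℝ) 1) →
        (X.N fun t => ((HI I)^[k] h t) ^ ((m : ℝ) / ((m : ℝ) - (k : ℝ)))) ^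
            (((m : ℝ) - (k : ℝ)) / (m : ℝ))
          ≤ (C' : ℝ≥0∞) * X.N h := by
  classical
  have hkm : k < m := by omega
  have hmk_pos : (0:ℝ) < (m:ℝ) - (k:ℝ) := by
    have : (k:ℝ) < (m:ℝ) := by exact_mod_cast hkm
    linarith
  have hm_pos : (0:ℝ) < (m:ℝ) := by
    have : (0:ℕ) < m := by omega
    exact_mod_cast this
  set p : ℝ := (m : ℝ) / ((m : ℝ) - (k : ℝ)) with hp
  set sc : ℝ := ((m : ℝ) - (k : ℝ)) / (m : ℝ) with hsc
  set r : ℝ := ((m:ℝ) - (k:ℝ))⁻¹ with hr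
  have hr_pos : 0 < r := by rw [hr]; positivity
  have hsc_pos : 0 < sc := by rw [hsc]; positivity
  have hmr : (m:ℝ) * r = p := by
    rw [hr, hp]; field_simp
  have hkr1sc : ((k:ℝ) * r + 1) * sc = 1 := by
    rw [hr, hsc]; field_simp; ring
  set c₁ : ℝ≥0∞ := (16:ℝ≥0∞) ^ (m * m * k) with hc₁
  have hc₁0 : c₁ ≠ 0 := by rw [hc₁]; exact pow_ne_zero _ (by norm_num)
  have hc₁T : c₁ ≠ ⊤ := by rw [hc₁]; exact pow_ne_top (by norm_num)
  set Cinf : ℝ≥0∞ := (c₁ ^ r * (C:ℝ≥0∞) ^ ((k:ℝ) * r)) ^ sc with hCinf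
  have hC0 : (C:ℝ≥0∞) ≠ 0 := ENNReal.coe_ne_zero.mpr hC.ne'
  have hbase0 : c₁ ^ r * (C:ℝ≥0∞) ^ ((k:ℝ) * r) ≠ 0 := by
    refine mul_ne_zero ?_ ?_
    · exact (ENNReal.rpow_pos (pos_iff_ne_zero.mpr hc₁0) hc₁T).ne'
    · exact (ENNReal.rpow_pos (pos_iff_ne_zero.mpr hC0) ENNReal.coe_ne_top).ne'
  have hbaseT : c₁ ^ r * (C:ℝ≥0∞) ^ ((k:ℝ) * r) ≠ ⊤ := by
    exact ENNReal.mul_ne_top (ENNReal.rpow_ne_top_of_nonneg hr_pos.le hc₁T)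
      (ENNReal.rpow_ne_top_of_nonneg (by positivity) ENNReal.coe_ne_top)
  have hCinf0 : Cinf ≠ 0 := by
    rw [hCinf]
    exact (ENNReal.rpow_pos (pos_iff_ne_zero.mpr hbase0) hbaseT).ne'
  have hCinfT : Cinf ≠ ⊤ := by
    rw [hCinf]
    exact ENNReal.rpow_ne_top_of_nonneg hsc_pos.le hbaseT
  refine ⟨Cinf.toNNReal, ENNReal.toNNReal_pos hCinf0 hCinfT, ?_⟩
  intro h hh hhanti
  have hcoeC' : ((Cinf.toNNReal : ℝ≥0) : ℝ≥0∞) = Cinf := ENNReal.coe_toNNReal hCinfT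
  set a := X.N h with ha
  by_cases haT : a = ⊤
  · rw [haT, ENNReal.mul_top]
    · exact le_top
    · rw [hcoeC']; exact hCinf0
  -- the pointwise Marcinkiewicz bound
  have hm0 : ∀ s' ∈ Set.Ioo (0:ℝ) 1,
      decRearr h s' * (mu I (Set.Ioo 0 s')) ^ m ≤ (C:ℝ≥0∞) * a := by
    intro s' hs'
    rw [mu_eq_stmt I hImono hs'.2.le]
    exact hmarc h hh s' hs'
  have hCaT : (C:ℝ≥0∞) * a ≠ ⊤ := ENNReal.mul_ne_top ENNReal.coe_ne_top haT
  have hD := pointwise_marc I hImono h hhanti hCaT hm0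
  have hPk := iter_bound I hImono hIint h hh hhanti hD k (by omega)
  -- measurability and antitonicity of the target function
  obtain ⟨k', hk'⟩ : ∃ k', k = k' + 1 := ⟨k - 1, by omega⟩
  have hFanti : Antitone (fun t => ((HI I)^[k] h t) ^ p) := by
    intro x y hxy
    refine ENNReal.rpow_le_rpow ?_ (by rw [hp]; positivity)
    rw [hk', Function.iterate_succ_apply']
    exact HI_anti I _ hxy
  have hFmeas : Measurable (fun t => ((HI I)^[k] h t) ^ p) := hFanti.measurable
  -- the pointwise bound F ≤ c₂ * h
  have hc₂T : c₁ ^ r * ((C:ℝ≥0∞) * a) ^ ((k:ℝ) * r) ≠ ⊤ := by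
    exact ENNReal.mul_ne_top (ENNReal.rpow_ne_top_of_nonneg hr_pos.le hc₁T)
      (ENNReal.rpow_ne_top_of_nonneg (by positivity) hCaT)
  set c₂ : ℝ≥0 := (c₁ ^ r * ((C:ℝ≥0∞) * a) ^ ((k:ℝ) * r)).toNNReal with hc₂
  have hcoe₂ : (c₂ : ℝ≥0∞) = c₁ ^ r * ((C:ℝ≥0∞) * a) ^ ((k:ℝ) * r) :=
    ENNReal.coe_toNNReal hc₂T
  have hFle : ∀ t ∈ Set.Ioo (0:ℝ) 1,
      ((HI I)^[k] h t) ^ p ≤ (c₂ : ℝ≥0∞) * h t := by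
    intro t ht
    have h1 := hPk t ht
    have h2 := ENNReal.rpow_le_rpow h1 hr_pos.le
    have hL : (((HI I)^[k] h t ^ m : ℝ≥0∞)) ^ r = ((HI I)^[k] h t) ^ p := by
      rw [← ENNReal.rpow_natCast ((HI I)^[k] h t) m, ← ENNReal.rpow_mul, hmr]
    have hcast : ((m - k : ℕ) : ℝ) = (m:ℝ) - (k:ℝ) := by
      rw [Nat.cast_sub hkm.le]
    have hR : ((16:ℝ≥0∞) ^ (m * m * k) * ((C:ℝ≥0∞) * a) ^ k * h t ^ (m - k)) ^ r
        = (c₂ : ℝ≥0∞) * h t := by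
      rw [ENNReal.mul_rpow_of_nonneg _ _ hr_pos.le,
        ENNReal.mul_rpow_of_nonneg _ _ hr_pos.le]
      rw [← ENNReal.rpow_natCast ((C:ℝ≥0∞) * a) k, ← ENNReal.rpow_mul]
      rw [← ENNReal.rpow_natCast (h t) (m - k), ← ENNReal.rpow_mul, hcast]
      rw [hr]
      rw [mul_inv_cancel₀ hmk_pos.ne', ENNReal.rpow_one]
      rw [hcoe₂, hc₁, hr]
    rw [hL] at h2
    rw [hR] at h2
    exact h2
  -- apply the norm axioms
  have hae : ∀ᵐ t ∂(volume.restrict (Set.Ioo (0:ℝ) 1)),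
      ((HI I)^[k] h t) ^ p ≤ (c₂ : ℝ≥0∞) * h t := by
    rw [ae_restrict_iff' measurableSet_Ioo]
    exact ae_of_all _ fun t ht => hFle t ht
  have hNle : X.N (fun t => ((HI I)^[k] h t) ^ p) ≤ (c₂ : ℝ≥0∞) * a := by
    have h1 := X.mono _ (fun t => (c₂ : ℝ≥0∞) * h t) hFmeas
      (measurable_const.mul hh) hae
    rw [X.smul_eq h hh c₂] at h1
    exact h1
  -- conclude
  calc (X.N fun t => ((HI I)^[k] h t) ^ p) ^ sc
      ≤ ((c₂ : ℝ≥0∞) * a) ^ sc := ENNReal.rpow_le_rpow hNle hsc_pos.le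
    _ ≤ Cinf * a := by
        by_cases ha0 : a = 0
        · rw [ha0, mul_zero, ENNReal.zero_rpow_of_pos hsc_pos, mul_zero]
        · have hexp : ((c₂ : ℝ≥0∞) * a) = (c₁ ^ r * (C:ℝ≥0∞) ^ ((k:ℝ) * r)) *
              a ^ ((k:ℝ) * r + 1) := by
            rw [hcoe₂, ENNReal.mul_rpow_of_nonneg _ _ (by positivity),
              ENNReal.rpow_add _ _ ha0 haT, ENNReal.rpow_one]
            ring
          rw [hexp, ENNReal.mul_rpow_of_nonneg _ _ hsc_pos.le,
            ← ENNReal.rpow_mul, hkr1sc, ENNReal.rpow_one, hCinf]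
    _ = (Cinf.toNNReal : ℝ≥0∞) * a := by rw [hcoeC']
end

section
/- Let n ∈ ℕ, n ≥ 2, and n' = n/(n−1). Let I : (0,1) → (0,∞) be nondecreasing, and suppose there exist a nondecreasing function ς : (0,1) → (0,∞) and constants 0 < c₁ ≤ c₂ such that c₁ ς(s) ≤ I(s)^{n'}/s ≤ c₂ ς(s) for every s ∈ (0,1). Then there exists a nondecreasing, continuously differentiable function Î : (0,1) → (0,∞) such that Î^{n'} is convex on (0,1), and there exist constants κ₁, κ₂ > 0 and a ∈ (0,1] such that κ₁ · I(a·s) ≤ Î(s) ≤ κ₂ · I(s) for every s ∈ (0,1). -/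
open Set

/-- if `I^{n'}(s)/s` is equivalent to a nondecreasing function, then `I` is
equivalent to a nondecreasing `C¹` function `Î` with `Î^{n'}` convex. -/
theorem smooth_equivalent_isoperimetric_profile (n : ℕ) (hn : 2 ≤ n) (I ς : ℝ → ℝ)
    (hImono : MonotoneOn I (Set.Ioo (0:ℝ) 1))
    (hIpos : ∀ s ∈ Set.Ioo (0:ℝ) 1, 0 < I s)
    (hςmono : MonotoneOn ς (Set.Ioo (0:ℝ) 1))
    (hςpos : ∀ s ∈ Set.Ioo (0:ℝ) 1, 0 < ς s)
    (c₁ c₂ : ℝ) (hc₁ : 0 < c₁) (hc₁₂ : c₁ ≤ c₂)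
    (hlow : ∀ s ∈ Set.Ioo (0:ℝ) 1, c₁ * ς s ≤ I s ^ ((n : ℝ) / ((n : ℝ) - 1)) / s)
    (hup : ∀ s ∈ Set.Ioo (0:ℝ) 1, I s ^ ((n : ℝ) / ((n : ℝ) - 1)) / s ≤ c₂ * ς s) :
    ∃ Ihat : ℝ → ℝ,
      MonotoneOn Ihat (Set.Ioo (0:ℝ) 1) ∧
      (∀ s ∈ Set.Ioo (0:ℝ) 1, 0 < Ihat s) ∧
      ContDiffOn ℝ 1 Ihat (Set.Ioo (0:ℝ) 1) ∧
      ConvexOn ℝ (Set.Ioo (0:ℝ) 1) (fun s => Ihat s ^ ((n : ℝ) / ((n : ℝ) - 1))) ∧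
      ∃ κ₁ κ₂ : ℝ, 0 < κ₁ ∧ 0 < κ₂ ∧ ∃ a ∈ Set.Ioc (0:ℝ) 1,
        ∀ s ∈ Set.Ioo (0:ℝ) 1, κ₁ * I (a * s) ≤ Ihat s ∧ Ihat s ≤ κ₂ * I s := by
  classical
  have hc₂ : 0 < c₂ := lt_of_lt_of_le hc₁ hc₁₂
  set q : ℝ := (n : ℝ) / ((n : ℝ) - 1) with hq_def
  set p : ℝ := ((n : ℝ) - 1) / (n : ℝ) with hp_def
  have hn2 : (2:ℝ) ≤ (n:ℝ) := by exact_mod_cast hn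
  have hn1 : (0:ℝ) < (n:ℝ) - 1 := by linarith
  have hn0 : (0:ℝ) < (n:ℝ) := by linarith
  have hqpos : 0 < q := div_pos hn0 hn1
  have hppos : 0 < p := div_pos hn1 hn0
  have hqp : q * p = 1 := by
    rw [hq_def, hp_def, div_mul_div_comm, mul_comm ((n:ℝ)-1), div_self (mul_ne_zero hn0.ne' hn1.ne')]
  have hpq : p * q = 1 := by rw [mul_comm]; exact hqp
  -- extended versions of the functions
  set ςe : ℝ → ℝ := fun t => if t ≤ 0 then 0 else ς t with hςe_def
  -- basic monotonicity of ςe below 1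
  have hςe_nonneg : ∀ t : ℝ, t < 1 → 0 ≤ ςe t := by
    intro t ht
    by_cases h : t ≤ 0
    · simp [hςe_def, h]
    · push_neg at h
      simp only [hςe_def, if_neg (not_le.mpr h)]
      exact (hςpos t ⟨h, ht⟩).le
  have hςe_mono : ∀ x y : ℝ, x ≤ y → y < 1 → ςe x ≤ ςe y := by
    intro x y hxy hy1
    by_cases hx : x ≤ 0
    · simp only [hςe_def, if_pos hx]
      exact hςe_nonneg y hy1
    · push_neg at hx
      have hy : 0 < y := lt_of_lt_of_le hx hxy
      simp only [hςe_def, if_neg (not_le.mpr hx), if_neg (not_le.mpr hy)]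
      exact hςmono ⟨hx, lt_of_le_of_lt hxy hy1⟩ ⟨hy, hy1⟩ hxy
  have hςe_int : ∀ x y : ℝ, x ≤ y → y < 1 → IntervalIntegrable ςe MeasureTheory.volume x y := by
    intro x y hxy hy1
    apply MonotoneOn.intervalIntegrable
    rw [uIcc_of_le hxy]
    intro a ha b hb hab
    exact hςe_mono a b hab (lt_of_le_of_lt hb.2 hy1)
  set Φ : ℝ → ℝ := fun t => ∫ u in (0:ℝ)..t, ςe u with hΦ_def
  have hΦ_add : ∀ x y : ℝ, 0 ≤ x → x ≤ y → y < 1 → Φ y = Φ x + ∫ u in x..y, ςe u := by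
    intro x y hx hxy hy1
    rw [hΦ_def]
    exact (intervalIntegral.integral_add_adjacent_intervals
      (hςe_int 0 x hx (lt_of_le_of_lt hxy hy1)) (hςe_int x y hxy hy1)).symm
  have hΦ_nonneg : ∀ t : ℝ, 0 ≤ t → t < 1 → 0 ≤ Φ t := by
    intro t ht ht1
    apply intervalIntegral.integral_nonneg ht
    intro u hu
    exact hςe_nonneg u (lt_of_le_of_lt hu.2 ht1)
  have hΦ_ub : ∀ t : ℝ, t ∈ Ioo (0:ℝ) 1 → Φ t ≤ t * ς t := by
    intro t ht
    have h1 : Φ t ≤ ∫ _ in (0:ℝ)..t, ς t := by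
      apply intervalIntegral.integral_mono_on ht.1.le (hςe_int 0 t ht.1.le ht.2)
        intervalIntegrable_const
      intro u hu
      have : ςe u ≤ ςe t := hςe_mono u t hu.2 ht.2
      simpa [hςe_def, not_le.mpr ht.1] using this
    rw [intervalIntegral.integral_const, smul_eq_mul, sub_zero] at h1
    exact h1
  have hΦ_lb : ∀ t : ℝ, t ∈ Ioo (0:ℝ) 1 → t / 2 * ς (t / 2) ≤ Φ t := by
    intro t ht
    have ht2 : t / 2 ∈ Ioo (0:ℝ) 1 := ⟨by linarith [ht.1], by linarith [ht.2]⟩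
    have hadd := hΦ_add (t/2) t ht2.1.le (by linarith [ht.1]) ht.2
    have h2 : ∫ _ in (t/2)..t, ς (t/2) ≤ ∫ u in (t/2)..t, ςe u := by
      apply intervalIntegral.integral_mono_on (by linarith [ht.1]) intervalIntegrable_const
        (hςe_int (t/2) t (by linarith [ht.1]) ht.2)
      intro u hu
      have : ςe (t/2) ≤ ςe u := hςe_mono (t/2) u hu.1 (lt_of_le_of_lt hu.2 ht.2)
      simpa [hςe_def, not_le.mpr ht2.1] using this
    rw [intervalIntegral.integral_const, smul_eq_mul] at h2
    have h3 : t - t/2 = t/2 := by ring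
    rw [h3] at h2
    have h4 := hΦ_nonneg (t/2) ht2.1.le ht2.2
    linarith [hadd]
  -- slope monotonicity of Φ
  have hΦ_slope : ∀ x y : ℝ, 0 < x → x ≤ y → y < 1 → Φ x / x ≤ Φ y / y := by
    intro x y hx hxy hy1
    have hy : 0 < y := lt_of_lt_of_le hx hxy
    rw [div_le_div_iff₀ hx hy]
    have hadd := hΦ_add x y hx.le hxy hy1
    have h2 : ∫ _ in x..y, ςe x ≤ ∫ u in x..y, ςe u := by
      apply intervalIntegral.integral_mono_on hxy intervalIntegrable_const
        (hςe_int x y hxy hy1)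
      intro u hu
      exact hςe_mono x u hu.1 (lt_of_le_of_lt hu.2 hy1)
    rw [intervalIntegral.integral_const, smul_eq_mul] at h2
    have hΦx : Φ x ≤ x * ςe x := by
      have := hΦ_ub x ⟨hx, lt_of_le_of_lt hxy hy1⟩
      simpa [hςe_def, not_le.mpr hx] using this
    -- Φ y ≥ Φ x + (y - x) * ςe x, and x * ςe x ≥ Φ x
    nlinarith [hΦ_nonneg x hx.le (lt_of_le_of_lt hxy hy1), sub_nonneg.mpr hxy]
  set φe : ℝ → ℝ := fun t => if t ≤ 0 then 0 else Φ t / t with hφe_def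
  have hφe_nonneg : ∀ t : ℝ, t < 1 → 0 ≤ φe t := by
    intro t ht
    by_cases h : t ≤ 0
    · simp [hφe_def, h]
    · push_neg at h
      simp only [hφe_def, if_neg (not_le.mpr h)]
      exact div_nonneg (hΦ_nonneg t h.le ht) h.le
  have hφe_mono : ∀ x y : ℝ, x ≤ y → y < 1 → φe x ≤ φe y := by
    intro x y hxy hy1
    by_cases hx : x ≤ 0
    · simp only [hφe_def, if_pos hx]
      exact hφe_nonneg y hy1
    · push_neg at hx
      have hy : 0 < y := lt_of_lt_of_le hx hxy
      simp only [hφe_def, if_neg (not_le.mpr hx), if_neg (not_le.mpr hy)]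
      exact hΦ_slope x y hx hxy hy1
  have hφe_int : ∀ x y : ℝ, x ≤ y → y < 1 → IntervalIntegrable φe MeasureTheory.volume x y := by
    intro x y hxy hy1
    apply MonotoneOn.intervalIntegrable
    rw [uIcc_of_le hxy]
    intro a ha b hb hab
    exact hφe_mono a b hab (lt_of_le_of_lt hb.2 hy1)
  -- pointwise bounds relating φe, ςe, Φ
  have hφe_le_ςe : ∀ t : ℝ, t < 1 → φe t ≤ ςe t := by
    intro t ht
    by_cases h : t ≤ 0
    · simp [hφe_def, hςe_def, h]
    · push_neg at h
      simp only [hφe_def, hςe_def, if_neg (not_le.mpr h)]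
      rw [div_le_iff₀ h]
      have := hΦ_ub t ⟨h, ht⟩
      linarith [this]
  set Ψ : ℝ → ℝ := fun t => ∫ u in (0:ℝ)..t, φe u with hΨ_def
  have hΨ_add : ∀ x y : ℝ, 0 ≤ x → x ≤ y → y < 1 → Ψ y = Ψ x + ∫ u in x..y, φe u := by
    intro x y hx hxy hy1
    rw [hΨ_def]
    exact (intervalIntegral.integral_add_adjacent_intervals
      (hφe_int 0 x hx (lt_of_le_of_lt hxy hy1)) (hφe_int x y hxy hy1)).symm
  have hΨ_ub : ∀ s : ℝ, s ∈ Ioo (0:ℝ) 1 → Ψ s ≤ Φ s := by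
    intro s hs
    apply intervalIntegral.integral_mono_on hs.1.le (hφe_int 0 s hs.1.le hs.2)
      (hςe_int 0 s hs.1.le hs.2)
    intro u hu
    exact hφe_le_ςe u (lt_of_le_of_lt hu.2 hs.2)
  have hΨ_lb : ∀ s : ℝ, s ∈ Ioo (0:ℝ) 1 → Φ (s/2) ≤ Ψ s := by
    intro s hs
    have hs2 : s / 2 ∈ Ioo (0:ℝ) 1 := ⟨by linarith [hs.1], by linarith [hs.2]⟩
    have hadd := hΨ_add (s/2) s hs2.1.le (by linarith [hs.1]) hs.2
    have h2 : ∫ _ in (s/2)..s, φe (s/2) ≤ ∫ u in (s/2)..s, φe u := by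
      apply intervalIntegral.integral_mono_on (by linarith [hs.1]) intervalIntegrable_const
        (hφe_int (s/2) s (by linarith [hs.1]) hs.2)
      intro u hu
      exact hφe_mono (s/2) u hu.1 (lt_of_le_of_lt hu.2 hs.2)
    rw [intervalIntegral.integral_const, smul_eq_mul] at h2
    have h3 : s - s/2 = s/2 := by ring
    rw [h3] at h2
    have h4 : φe (s/2) = Φ (s/2) / (s/2) := by
      simp [hφe_def, not_le.mpr hs2.1]
    rw [h4] at h2
    have hsne : s ≠ 0 := ne_of_gt hs.1
    have h5 : s/2 * (Φ (s/2) / (s/2)) = Φ (s/2) := by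
      field_simp
    rw [h5] at h2
    have h6 : 0 ≤ Ψ (s/2) := by
      apply intervalIntegral.integral_nonneg hs2.1.le
      intro u hu
      exact hφe_nonneg u (lt_of_le_of_lt hu.2 hs2.2)
    linarith [hadd]
  have hΨ_pos : ∀ s : ℝ, s ∈ Ioo (0:ℝ) 1 → 0 < Ψ s := by
    intro s hs
    have hs2 : s / 2 ∈ Ioo (0:ℝ) 1 := ⟨by linarith [hs.1], by linarith [hs.2]⟩
    have h1 := hΦ_lb (s/2) hs2
    have hs4 : s / 2 / 2 ∈ Ioo (0:ℝ) 1 := ⟨by linarith [hs.1], by linarith [hs.2]⟩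
    have h2 : 0 < s/2/2 * ς (s/2/2) := mul_pos hs4.1 (hςpos _ hs4)
    have h3 := hΨ_lb s hs
    linarith
  have hΨ_mono : ∀ x y : ℝ, x ∈ Ioo (0:ℝ) 1 → y ∈ Ioo (0:ℝ) 1 → x ≤ y → Ψ x ≤ Ψ y := by
    intro x y hx hy hxy
    have hadd := hΨ_add x y hx.1.le hxy hy.2
    have h2 : 0 ≤ ∫ u in x..y, φe u := by
      apply intervalIntegral.integral_nonneg hxy
      intro u hu
      exact hφe_nonneg u (lt_of_le_of_lt hu.2 hy.2)
    linarith
  -- continuity of Φ on Ioo 0 1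
  have hΦ_contAt : ∀ s : ℝ, s ∈ Ioo (0:ℝ) 1 → ContinuousAt Φ s := by
    intro s hs
    set b : ℝ := (s + 1) / 2 with hb_def
    have hsb : s < b := by rw [hb_def]; linarith [hs.2]
    have hb1 : b < 1 := by rw [hb_def]; linarith [hs.2]
    have hb0 : (0:ℝ) ≤ b := by rw [hb_def]; linarith [hs.1]
    have hcont : ContinuousOn Φ (uIcc (0:ℝ) b) := by
      apply intervalIntegral.continuousOn_primitive_interval'
        (hςe_int 0 b hb0 hb1) left_mem_uIcc
    have hmem : uIcc (0:ℝ) b ∈ nhds s := by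
      rw [uIcc_of_le hb0]
      exact Icc_mem_nhds hs.1 hsb
    exact hcont.continuousAt hmem
  have hφe_contAt : ∀ s : ℝ, s ∈ Ioo (0:ℝ) 1 → ContinuousAt φe s := by
    intro s hs
    have h1 : ContinuousAt (fun t => Φ t / t) s :=
      (hΦ_contAt s hs).div continuousAt_id (ne_of_gt hs.1)
    apply h1.congr
    filter_upwards [IsOpen.mem_nhds isOpen_Ioi hs.1] with t ht
    simp [hφe_def, not_le.mpr (mem_Ioi.mp ht)]
  have hφe_contOn : ContinuousOn φe (Ioo (0:ℝ) 1) := fun s hs =>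
    (hφe_contAt s hs).continuousWithinAt
  -- derivative of Ψ
  have hΨ_deriv : ∀ s : ℝ, s ∈ Ioo (0:ℝ) 1 → HasDerivAt Ψ (φe s) s := by
    intro s hs
    apply intervalIntegral.integral_hasDerivAt_right (hφe_int 0 s hs.1.le hs.2)
    · exact (hφe_contOn.stronglyMeasurableAtFilter isOpen_Ioo s hs)
    · exact hφe_contAt s hs
  have hΨ_diff : DifferentiableOn ℝ Ψ (Ioo (0:ℝ) 1) := fun s hs =>
    (hΨ_deriv s hs).differentiableAt.differentiableWithinAt
  have hΨ_deriv_eq : ∀ s ∈ Ioo (0:ℝ) 1, deriv Ψ s = φe s := fun s hs =>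
    (hΨ_deriv s hs).deriv
  have hΨ_cd : ContDiffOn ℝ 1 Ψ (Ioo (0:ℝ) 1) := by
    rw [show (1 : WithTop ℕ∞) = (0 : WithTop ℕ∞) + 1 by norm_num,
      contDiffOn_succ_iff_deriv_of_isOpen isOpen_Ioo]
    refine ⟨hΨ_diff, by simp, ?_⟩
    rw [contDiffOn_zero]
    exact hφe_contOn.congr hΨ_deriv_eq
  have hΨ_convex : ConvexOn ℝ (Ioo (0:ℝ) 1) Ψ := by
    apply MonotoneOn.convexOn_of_deriv (convex_Ioo 0 1) (hΨ_cd.continuousOn)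
    · rw [isOpen_Ioo.interior_eq]
      exact hΨ_diff
    · rw [isOpen_Ioo.interior_eq]
      intro x hx y hy hxy
      rw [hΨ_deriv_eq x hx, hΨ_deriv_eq y hy]
      exact hφe_mono x y hxy hy.2
  -- the candidate function
  refine ⟨fun s => Ψ s ^ p, ?_, ?_, ?_, ?_, ?_⟩
  · -- monotone
    intro x hx y hy hxy
    exact Real.rpow_le_rpow (hΨ_pos x hx).le (hΨ_mono x y hx hy hxy) hppos.le
  · -- positive
    intro s hs
    exact Real.rpow_pos_of_pos (hΨ_pos s hs) p
  · -- C¹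
    exact hΨ_cd.rpow_const_of_ne (fun s hs => ne_of_gt (hΨ_pos s hs))
  · -- convexity of (Ψ^p)^q = Ψ
    apply hΨ_convex.congr
    intro s hs
    simp only
    rw [← Real.rpow_mul (hΨ_pos s hs).le, hpq, Real.rpow_one]
  · -- the comparison constants
    refine ⟨(c₂ ^ p)⁻¹, (c₁ ^ p)⁻¹, inv_pos.mpr (Real.rpow_pos_of_pos hc₂ p),
      inv_pos.mpr (Real.rpow_pos_of_pos hc₁ p), 1/4, ⟨by norm_num, by norm_num⟩, ?_⟩
    intro s hs
    have hs4 : s / 4 ∈ Ioo (0:ℝ) 1 := ⟨by linarith [hs.1], by linarith [hs.2]⟩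
    have hI4 := hIpos (s/4) hs4
    have hIs := hIpos s hs
    constructor
    · -- lower bound
      have h1 : I (s/4) ^ q / c₂ ≤ Ψ s := by
        have hup4 := hup (s/4) hs4
        have h2 : I (s/4) ^ q ≤ c₂ * (s/4 * ς (s/4)) := by
          rw [div_le_iff₀ hs4.1] at hup4
          nlinarith [hup4]
        have h3 : s/4 * ς (s/4) ≤ Φ (s/2) := by
          have hs2 : s / 2 ∈ Ioo (0:ℝ) 1 := ⟨by linarith [hs.1], by linarith [hs.2]⟩
          have := hΦ_lb (s/2) hs2
          have he : s/2/2 = s/4 := by ring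
          rw [he] at this
          exact this
        have h4 := hΨ_lb s hs
        rw [div_le_iff₀ hc₂]
        nlinarith
      have h2 : (I (s/4) ^ q / c₂) ^ p ≤ Ψ s ^ p :=
        Real.rpow_le_rpow (div_nonneg (Real.rpow_nonneg hI4.le q) hc₂.le) h1 hppos.le
      have h3 : (I (s/4) ^ q / c₂) ^ p = I (s/4) / c₂ ^ p := by
        rw [Real.div_rpow (Real.rpow_nonneg hI4.le q) hc₂.le,
          ← Real.rpow_mul hI4.le, hqp, Real.rpow_one]
      have h4 : (1:ℝ)/4 * s = s/4 := by ring
      rw [h4]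
      calc (c₂ ^ p)⁻¹ * I (s/4) = I (s/4) / c₂ ^ p := by ring
        _ = (I (s/4) ^ q / c₂) ^ p := h3.symm
        _ ≤ Ψ s ^ p := h2
    · -- upper bound
      have h1 : Ψ s ≤ I s ^ q / c₁ := by
        have hlows := hlow s hs
        rw [le_div_iff₀ hs.1] at hlows
        have h2 : s * ς s ≤ I s ^ q / c₁ := by
          rw [le_div_iff₀ hc₁]
          nlinarith
        have h3 := hΨ_ub s hs
        have h4 := hΦ_ub s hs
        linarith
      have h2 : Ψ s ^ p ≤ (I s ^ q / c₁) ^ p :=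
        Real.rpow_le_rpow (hΨ_pos s hs).le h1 hppos.le
      have h3 : (I s ^ q / c₁) ^ p = I s / c₁ ^ p := by
        rw [Real.div_rpow (Real.rpow_nonneg hIs.le q) hc₁.le,
          ← Real.rpow_mul hIs.le, hqp, Real.rpow_one]
      calc Ψ s ^ p ≤ (I s ^ q / c₁) ^ p := h2
        _ = I s / c₁ ^ p := h3
        _ = (c₁ ^ p)⁻¹ * I s := by ring
end

section
/- Let n ∈ ℕ, n ≥ 2, and n' = n/(n−1). Let I : (0,1] → (0,∞) be nondecreasing and continuously differentiable with I^{n'} convex on (0,1]. Let L = ∫_0^1 dr/I(r) ∈ (0,∞] and let M : [0,L) → (0,1] be the function determined by ∫_{M(t)}^1 dr/I(r) = t. Let ω_{n−1} denote the Lebesgue measure of the unit ball in ℝ^{n−1}. Then the function η(r) = (I(M(r))/ω_{n−1})^{1/(n−1)}, r ∈ (0,L), is convex on (0,L), its derivative satisfies ω_{n−1}^{1/(n−1)} η'(r) = −(1/(n−1)) I'(M(r)) I(M(r))^{1/(n−1)} for r ∈ (0,L), and η has a finite right derivative at 0, namely η'(0⁺) = −(1/(n−1)) ω_{n−1}^{−1/(n−1)}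 I'(1) I(1)^{1/(n−1)}. -/
set_option maxHeartbeats 1000000


open MeasureTheory ENNReal NNReal Topology Filter

/-- `L = ∫_0^1 dr / I(r)`, with values in `(0,∞]`. -/
noncomputable def Lint (I : ℝ → ℝ) : ℝ≥0∞ :=
  ∫⁻ r in Set.Ioo (0:ℝ) 1, ENNReal.ofReal (1 / I r)

/-- The Lebesgue measure of the unit ball in `ℝ^d`. -/
noncomputable def omegaBall (d : ℕ) : ℝ :=
  (volume (Metric.ball (0 : EuclideanSpace ℝ (Fin d)) 1)).toReal

/-- convexity and derivative formulas for
`η(r) = (I(M(r))/ω_{n-1})^{1/(n-1)}` on `(0,L)`, together with the finite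
right derivative of `η` at `0`. -/
theorem eta_convex_and_deriv (n : ℕ) (hn : 2 ≤ n) (I : ℝ → ℝ)
    (hImono : MonotoneOn I (Set.Ioc (0:ℝ) 1))
    (hIpos : ∀ t ∈ Set.Ioc (0:ℝ) 1, 0 < I t)
    (hIC1 : ContDiffOn ℝ 1 I (Set.Ioc (0:ℝ) 1))
    (hIconv : ConvexOn ℝ (Set.Ioc (0:ℝ) 1)
      (fun s => I s ^ ((n : ℝ) / ((n : ℝ) - 1))))
    (M : ℝ → ℝ)
    (hM : ∀ t : ℝ, 0 ≤ t → ENNReal.ofReal t < Lint I →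
      M t ∈ Set.Ioc (0:ℝ) 1 ∧ ∫ r in (M t)..1, 1 / I r = t) :
    ConvexOn ℝ {r : ℝ | 0 < r ∧ ENNReal.ofReal r < Lint I}
      (fun r => (I (M r) / omegaBall (n - 1)) ^ (1 / ((n : ℝ) - 1))) ∧
    (∀ r : ℝ, 0 < r → ENNReal.ofReal r < Lint I →
      HasDerivAt (fun r => (I (M r) / omegaBall (n - 1)) ^ (1 / ((n : ℝ) - 1)))
        (-(1 / ((n : ℝ) - 1)) * derivWithin I (Set.Ioc (0:ℝ) 1) (M r) *
            I (M r) ^ (1 / ((n : ℝ) - 1)) / omegaBall (n - 1) ^ (1 / ((n : ℝ) - 1))) r) ∧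
    HasDerivWithinAt (fun r => (I (M r) / omegaBall (n - 1)) ^ (1 / ((n : ℝ) - 1)))
      (-(1 / ((n : ℝ) - 1)) * omegaBall (n - 1) ^ (-(1 / ((n : ℝ) - 1))) *
          derivWithin I (Set.Ioc (0:ℝ) 1) 1 * I 1 ^ (1 / ((n : ℝ) - 1)))
      (Set.Ici (0:ℝ)) 0 := by
  classical
  have hn2 : (2:ℝ) ≤ (n:ℝ) := by exact_mod_cast hn
  have hn1 : (0:ℝ) < (n:ℝ) - 1 := by linarith
  set p : ℝ := 1 / ((n:ℝ) - 1) with hpdef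
  have hppos : 0 < p := by positivity
  set ω : ℝ := omegaBall (n - 1) with hωdef
  have hωpos : 0 < ω := by
    rw [hωdef, omegaBall]
    have h1 : (0:ℝ≥0∞) < volume (Metric.ball (0 : EuclideanSpace ℝ (Fin (n-1))) 1) :=
      Metric.measure_ball_pos _ _ one_pos
    have h2 : volume (Metric.ball (0 : EuclideanSpace ℝ (Fin (n-1))) 1) < ⊤ :=
      measure_ball_lt_top
    exact ENNReal.toReal_pos h1.ne' h2.ne
  have h1mem : (1:ℝ) ∈ Set.Ioc (0:ℝ) 1 := ⟨one_pos, le_rfl⟩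
  have hI1pos : 0 < I 1 := hIpos 1 h1mem
  have hIcont : ContinuousOn I (Set.Ioc (0:ℝ) 1) := hIC1.continuousOn
  have hinvcont : ContinuousOn (fun x => 1 / I x) (Set.Ioc (0:ℝ) 1) :=
    continuousOn_const.div hIcont (fun x hx => (hIpos x hx).ne')
  have hIxle : ∀ x ∈ Set.Ioc (0:ℝ) 1, I x ≤ I 1 := fun x hx => hImono hx h1mem hx.2
  have hinteg : ∀ a b : ℝ, a ∈ Set.Ioc (0:ℝ) 1 → b ∈ Set.Ioc (0:ℝ) 1 →
      IntervalIntegrable (fun x => 1 / I x) volume a b := by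
    intro a b ha hb
    refine (hinvcont.mono ?_).intervalIntegrable
    intro x hx
    rcases Set.mem_uIcc.mp hx with h | h
    · exact ⟨lt_of_lt_of_le ha.1 h.1, le_trans h.2 hb.2⟩
    · exact ⟨lt_of_lt_of_le hb.1 h.1, le_trans h.2 ha.2⟩
  have hlow : ∀ a b : ℝ, a ∈ Set.Ioc (0:ℝ) 1 → b ∈ Set.Ioc (0:ℝ) 1 → a ≤ b →
      (b - a) * (1 / I 1) ≤ ∫ x in a..b, 1 / I x := by
    intro a b ha hb hab
    have h := intervalIntegral.integral_mono_on hab intervalIntegrable_const (hinteg a b ha hb)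
      (by
        intro x hx
        have hxm : x ∈ Set.Ioc (0:ℝ) 1 := ⟨lt_of_lt_of_le ha.1 hx.1, le_trans hx.2 hb.2⟩
        exact one_div_le_one_div_of_le (hIpos x hxm) (hIxle x hxm))
    simpa [intervalIntegral.integral_const, smul_eq_mul] using h
  have hhigh : ∀ a b : ℝ, a ∈ Set.Ioc (0:ℝ) 1 → b ∈ Set.Ioc (0:ℝ) 1 → a ≤ b →
      (∫ x in a..b, 1 / I x) ≤ (b - a) * (1 / I a) := by
    intro a b ha hb hab
    have h := intervalIntegral.integral_mono_on hab (hinteg a b ha hb) intervalIntegrable_const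
      (by
        intro x hx
        have hxm : x ∈ Set.Ioc (0:ℝ) 1 := ⟨lt_of_lt_of_le ha.1 hx.1, le_trans hx.2 hb.2⟩
        exact one_div_le_one_div_of_le (hIpos a ha) (hImono ha hxm hx.1))
    simpa [intervalIntegral.integral_const, smul_eq_mul] using h
  have hLintpos : (0:ℝ≥0∞) < Lint I := by
    have hle : ENNReal.ofReal (1 / I 1) ≤ Lint I := by
      rw [Lint]
      have h0 : ENNReal.ofReal (1 / I 1)
          = ∫⁻ _ in Set.Ioo (0:ℝ) 1, ENNReal.ofReal (1 / I 1) := by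
        rw [setLIntegral_const, Real.volume_Ioo]
        simp
      rw [h0]
      refine lintegral_mono_ae ?_
      refine (ae_restrict_iff' measurableSet_Ioo).mpr (ae_of_all _ ?_)
      intro x hx
      have hxm : x ∈ Set.Ioc (0:ℝ) 1 := ⟨hx.1, hx.2.le⟩
      exact ENNReal.ofReal_le_ofReal (one_div_le_one_div_of_le (hIpos x hxm) (hIxle x hxm))
    exact lt_of_lt_of_le (ENNReal.ofReal_pos.mpr (by positivity)) hle
  set S : Set ℝ := {r : ℝ | 0 < r ∧ ENNReal.ofReal r < Lint I} with hSdef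
  have hSopen : IsOpen S := by
    have h : S = Set.Ioi 0 ∩ ENNReal.ofReal ⁻¹' (Set.Iio (Lint I)) := rfl
    rw [h]
    exact isOpen_Ioi.inter (isOpen_Iio.preimage ENNReal.continuous_ofReal)
  -- F and its properties
  have hFsub : ∀ a b : ℝ, a ∈ Set.Ioc (0:ℝ) 1 → b ∈ Set.Ioc (0:ℝ) 1 →
      (∫ u in a..1, 1 / I u) - (∫ u in b..1, 1 / I u) = ∫ x in a..b, 1 / I x := by
    intro a b ha hb
    have h := intervalIntegral.integral_add_adjacent_intervals (hinteg a b ha hb)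
      (hinteg b 1 hb h1mem)
    linarith
  have h0mem : ENNReal.ofReal (0:ℝ) < Lint I := by simpa using hLintpos
  obtain ⟨hM0mem, hM0int⟩ := hM 0 le_rfl h0mem
  have hM01 : M 0 = 1 := by
    by_contra hne
    have hlt : M 0 < 1 := lt_of_le_of_ne hM0mem.2 hne
    have h := hlow (M 0) 1 hM0mem h1mem hM0mem.2
    rw [hM0int] at h
    have hpos : 0 < (1 - M 0) * (1 / I 1) := mul_pos (by linarith) (by positivity)
    linarith
  -- key monotonicity / Lipschitz estimate for M
  have hkey : ∀ t s : ℝ, 0 ≤ t → ENNReal.ofReal t < Lint I → 0 ≤ s → ENNReal.ofReal s < Lint I →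
      t ≤ s → M s ≤ M t ∧ M t - M s ≤ I 1 * (s - t) := by
    intro t s ht hlt hs hls hts
    obtain ⟨hmt, hit⟩ := hM t ht hlt
    obtain ⟨hms, his⟩ := hM s hs hls
    have hle : M s ≤ M t := by
      by_contra h
      push_neg at h
      have hb := hlow (M t) (M s) hmt hms h.le
      have hd := hFsub (M t) (M s) hmt hms
      rw [hit, his] at hd
      have hq : 0 < (M s - M t) * (1 / I 1) := by
        have : 0 < M s - M t := by linarith
        positivity
      linarith
    have hb := hlow (M s) (M t) hms hmt hle
    have hd := hFsub (M s) (M t) hms hmt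
    rw [hit, his] at hd
    constructor
    · exact hle
    · have h1 : (M t - M s) * (1 / I 1) ≤ s - t := by linarith
      rw [mul_one_div, div_le_iff₀ hI1pos] at h1
      linarith [h1]
  -- continuity of M on S
  have hMcontAt : ∀ r ∈ S, ContinuousAt M r := by
    intro r hr
    obtain ⟨δ₀, hδ₀pos, hδ₀⟩ := Metric.isOpen_iff.mp hSopen r hr
    rw [Metric.continuousAt_iff]
    intro ε hε
    refine ⟨min δ₀ (ε / (I 1 + 1)), lt_min hδ₀pos (by positivity), ?_⟩
    intro s hs
    have hsS : s ∈ S := hδ₀ (Metric.mem_ball.mpr (lt_of_lt_of_le hs (min_le_left _ _)))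
    have hsr : dist s r < ε / (I 1 + 1) := lt_of_lt_of_le hs (min_le_right _ _)
    have habs : |M s - M r| ≤ I 1 * |s - r| := by
      rcases le_total s r with h | h
      · obtain ⟨h1, h2⟩ := hkey s r hsS.1.le hsS.2 hr.1.le hr.2 h
        rw [abs_of_nonneg (by linarith : (0:ℝ) ≤ M s - M r),
          abs_of_nonpos (by linarith : s - r ≤ 0)]
        linarith
      · obtain ⟨h1, h2⟩ := hkey r s hr.1.le hr.2 hsS.1.le hsS.2 h
        rw [abs_of_nonpos (by linarith : M s - M r ≤ 0),
          abs_of_nonneg (by linarith : (0:ℝ) ≤ s - r)]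
        linarith
    have hd : dist (M s) (M r) ≤ I 1 * dist s r := by
      rw [Real.dist_eq, Real.dist_eq]; exact habs
    calc dist (M s) (M r) ≤ I 1 * dist s r := hd
      _ < I 1 * (ε / (I 1 + 1)) + (ε / (I 1 + 1)) := by
          have hdn : 0 ≤ dist s r := dist_nonneg
          nlinarith [div_pos hε (by positivity : (0:ℝ) < I 1 + 1)]
      _ = ε := by field_simp
  -- FTC for F
  have hFderiv : ∀ x ∈ Set.Ioo (0:ℝ) 1, HasDerivAt (fun u => ∫ v in u..1, 1 / I v)
      (-(1 / I x)) x := by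
    intro x hx
    have hco : ContinuousOn (fun u => 1 / I u) (Set.Ioo (0:ℝ) 1) :=
      hinvcont.mono Set.Ioo_subset_Ioc_self
    exact intervalIntegral.integral_hasDerivAt_left
      (hinteg x 1 ⟨hx.1, hx.2.le⟩ h1mem)
      (hco.stronglyMeasurableAtFilter isOpen_Ioo x hx)
      (hco.continuousAt (isOpen_Ioo.mem_nhds hx))
  have hMIoo : ∀ r ∈ S, M r ∈ Set.Ioo (0:ℝ) 1 := by
    intro r hr
    obtain ⟨hmem, hint⟩ := hM r hr.1.le hr.2
    refine ⟨hmem.1, lt_of_le_of_ne hmem.2 ?_⟩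
    intro h1
    rw [h1, intervalIntegral.integral_same] at hint
    exact hr.1.ne hint
  have hMhasDeriv : ∀ r ∈ S, HasDerivAt M (-(I (M r))) r := by
    intro r hr
    have hmx := hMIoo r hr
    have hIMpos : 0 < I (M r) := hIpos _ ⟨hmx.1, hmx.2.le⟩
    have hf := hFderiv (M r) hmx
    have h := HasDerivAt.of_local_left_inverse (hMcontAt r hr) hf
      (by
        intro hc
        have : (0:ℝ) < 1 / I (M r) := by positivity
        rw [neg_eq_zero] at hc
        linarith)
      (by
        filter_upwards [hSopen.mem_nhds hr] with y hy
        exact (hM y hy.1.le hy.2).2)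
    have heq : (-(1 / I (M r)))⁻¹ = -(I (M r)) := by
      field_simp
    rwa [heq] at h
  have hIderivAt : ∀ x ∈ Set.Ioo (0:ℝ) 1,
      HasDerivAt I (derivWithin I (Set.Ioc (0:ℝ) 1) x) x := by
    intro x hx
    have hnb : Set.Ioc (0:ℝ) 1 ∈ 𝓝 x :=
      Filter.mem_of_superset (isOpen_Ioo.mem_nhds hx) Set.Ioo_subset_Ioc_self
    have hd := (hIC1.differentiableOn one_ne_zero x (Set.Ioo_subset_Ioc_self hx)).differentiableAt hnb
    rw [derivWithin_of_mem_nhds hnb]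
    exact hd.hasDerivAt
  have hrpow : ∀ a : ℝ, a ≠ 0 → HasDerivAt (fun y : ℝ => (y / ω) ^ p)
      (p * (a / ω) ^ (p - 1) * ω⁻¹) a := by
    intro a ha
    have h1 : HasDerivAt (fun y : ℝ => y / ω) ω⁻¹ a := by
      simpa [one_div] using (hasDerivAt_id a).div_const ω
    have h2 := Real.hasDerivAt_rpow_const (x := a / ω) (p := p)
      (Or.inl (div_ne_zero ha hωpos.ne'))
    have h3 := h2.comp a h1
    simpa [Function.comp_def, mul_assoc] using h3
  have halg : ∀ a d : ℝ, 0 < a →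
      p * (a / ω) ^ (p - 1) * ω⁻¹ * (d * (-a)) = -p * d * a ^ p / ω ^ p := by
    intro a d ha
    have hωp : (0:ℝ) < ω ^ p := Real.rpow_pos_of_pos hωpos p
    have hap : (0:ℝ) < a ^ p := Real.rpow_pos_of_pos ha p
    rw [Real.rpow_sub_one (div_ne_zero ha.ne' hωpos.ne'), Real.div_rpow ha.le hωpos.le]
    field_simp
  -- derivative of η on S
  have hη : ∀ r ∈ S, HasDerivAt (fun r => (I (M r) / ω) ^ p)
      (-p * derivWithin I (Set.Ioc (0:ℝ) 1) (M r) * I (M r) ^ p / ω ^ p) r := by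
    intro r hr
    have hmx := hMIoo r hr
    have hIMpos : 0 < I (M r) := hIpos _ ⟨hmx.1, hmx.2.le⟩
    have h1 := (hIderivAt (M r) hmx).comp r (hMhasDeriv r hr)
    have h2 := (hrpow (I (M r)) hIMpos.ne').comp r h1
    rw [halg _ _ hIMpos] at h2
    simpa [Function.comp_def] using h2
  -- convexity of S
  have hSconv : Convex ℝ S := by
    rw [convex_iff_ordConnected]
    constructor
    intro x hx y hy z hz
    exact ⟨lt_of_lt_of_le hx.1 hz.1, lt_of_le_of_lt (ENNReal.ofReal_le_ofReal hz.2) hy.2⟩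
  -- monotonicity of G = I' * I^p
  have hq : (n:ℝ) / ((n:ℝ) - 1) = p + 1 := by
    rw [hpdef]; field_simp; ring
  have hφderiv : ∀ x ∈ Set.Ioo (0:ℝ) 1,
      HasDerivAt (fun s => I s ^ ((n:ℝ) / ((n:ℝ) - 1)))
        ((n:ℝ) / ((n:ℝ) - 1) * I x ^ p * derivWithin I (Set.Ioc (0:ℝ) 1) x) x := by
    intro x hx
    have hIx : 0 < I x := hIpos x ⟨hx.1, hx.2.le⟩
    have h2 := Real.hasDerivAt_rpow_const (x := I x) (p := (n:ℝ) / ((n:ℝ) - 1))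
      (Or.inl hIx.ne')
    have h3 := h2.comp x (hIderivAt x hx)
    have he : (n:ℝ) / ((n:ℝ) - 1) - 1 = p := by rw [hq]; ring
    rw [he] at h3
    simpa [Function.comp_def, mul_assoc] using h3
  have hGmono : MonotoneOn (fun x => derivWithin I (Set.Ioc (0:ℝ) 1) x * I x ^ p)
      (Set.Ioo (0:ℝ) 1) := by
    have hconv2 : ConvexOn ℝ (Set.Ioo (0:ℝ) 1) (fun s => I s ^ ((n:ℝ) / ((n:ℝ) - 1))) :=
      hIconv.subset Set.Ioo_subset_Ioc_self (convex_Ioo _ _)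
    have hmono := hconv2.monotoneOn_deriv (fun x hx => (hφderiv x hx).differentiableAt)
    intro x hx y hy hxy
    have hdx := (hφderiv x hx).deriv
    have hdy := (hφderiv y hy).deriv
    have h := hmono hx hy hxy
    rw [hdx, hdy] at h
    have hqpos : 0 < (n:ℝ) / ((n:ℝ) - 1) := by positivity
    have h2 : (n:ℝ) / ((n:ℝ) - 1) * (derivWithin I (Set.Ioc (0:ℝ) 1) x * I x ^ p)
        ≤ (n:ℝ) / ((n:ℝ) - 1) * (derivWithin I (Set.Ioc (0:ℝ) 1) y * I y ^ p) := by
      nlinarith [h]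
    exact (mul_le_mul_iff_right₀ hqpos).mp h2
  -- monotone derivative of η
  have hderivmono : MonotoneOn (deriv (fun r => (I (M r) / ω) ^ p)) S := by
    intro r hrS s hsS hrs
    rw [(hη r hrS).deriv, (hη s hsS).deriv]
    have hMsr := (hkey r s hrS.1.le hrS.2 hsS.1.le hsS.2 hrs).1
    have hG := hGmono (hMIoo s hsS) (hMIoo r hrS) hMsr
    have hωp : (0:ℝ) < ω ^ p := Real.rpow_pos_of_pos hωpos p
    rw [div_le_div_iff₀ hωp hωp]
    have hG' : derivWithin I (Set.Ioc (0:ℝ) 1) (M s) * I (M s) ^ p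
        ≤ derivWithin I (Set.Ioc (0:ℝ) 1) (M r) * I (M r) ^ p := hG
    nlinarith [mul_le_mul_of_nonneg_left hG' (mul_pos hppos hωp).le]
  refine ⟨?_, ?_, ?_⟩
  · refine MonotoneOn.convexOn_of_deriv hSconv ?_ ?_ ?_
    · exact fun r hr => (hη r hr).continuousAt.continuousWithinAt
    · rw [hSopen.interior_eq]
      exact fun r hr => (hη r hr).differentiableAt.differentiableWithinAt
    · rw [hSopen.interior_eq]
      exact hderivmono
  · intro r hr0 hrL
    exact hη r ⟨hr0, hrL⟩
  · -- endpoint derivative at 0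
    set T : Set ℝ := Set.Ici (0:ℝ) ∩ {t : ℝ | ENNReal.ofReal t < Lint I} with hTdef
    have hUopen : IsOpen {t : ℝ | ENNReal.ofReal t < Lint I} :=
      isOpen_Iio.preimage ENNReal.continuous_ofReal
    have hTnhds : T ∈ 𝓝[Set.Ici (0:ℝ)] 0 := by
      refine Filter.inter_mem self_mem_nhdsWithin
        (mem_nhdsWithin_of_mem_nhds (hUopen.mem_nhds ?_))
      simpa using hLintpos
    have hTspec : ∀ t ∈ T \ {(0:ℝ)}, 0 < t ∧ ENNReal.ofReal t < Lint I := by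
      intro t ht
      exact ⟨lt_of_le_of_ne ht.1.1 (Ne.symm ht.2), ht.1.2⟩
    -- M has right derivative -I 1 at 0 within T
    have hslope : HasDerivWithinAt M (-(I 1)) T 0 := by
      rw [hasDerivWithinAt_iff_tendsto_slope]
      have hev : ∀ᶠ t in 𝓝[T \ {(0:ℝ)}] 0, t ∈ T \ {(0:ℝ)} := eventually_mem_nhdsWithin
      have hM1 : Filter.Tendsto M (𝓝[T \ {(0:ℝ)}] 0) (𝓝 1) := by
        have h1 : Filter.Tendsto (fun t : ℝ => 1 - I 1 * t) (𝓝[T \ {(0:ℝ)}] 0) (𝓝 1) := by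
          have hc : Continuous (fun t : ℝ => 1 - I 1 * t) := continuous_const.sub (continuous_const.mul continuous_id)
          have h2 : Filter.Tendsto (fun t : ℝ => 1 - I 1 * t) (𝓝[T \ {(0:ℝ)}] 0)
              (𝓝 (1 - I 1 * 0)) := (hc.tendsto 0).mono_left nhdsWithin_le_nhds
          simpa using h2
        refine tendsto_of_tendsto_of_tendsto_of_le_of_le' h1 tendsto_const_nhds ?_ ?_
        · filter_upwards [hev] with t ht
          obtain ⟨ht0, htL⟩ := hTspec t ht
          have hk := hkey 0 t le_rfl h0mem ht0.le htL ht0.le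
          rw [hM01] at hk
          linarith [hk.2]
        · filter_upwards [hev] with t ht
          obtain ⟨ht0, htL⟩ := hTspec t ht
          exact (hM t ht0.le htL).1.2
      have hIM : Filter.Tendsto (fun t => I (M t)) (𝓝[T \ {(0:ℝ)}] 0) (𝓝 (I 1)) := by
        have hc : ContinuousWithinAt I (Set.Ioc (0:ℝ) 1) 1 := hIcont 1 h1mem
        refine hc.tendsto.comp ?_
        rw [tendsto_nhdsWithin_iff]
        refine ⟨hM1, ?_⟩
        filter_upwards [hev] with t ht
        obtain ⟨ht0, htL⟩ := hTspec t ht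
        exact (hM t ht0.le htL).1
      refine tendsto_of_tendsto_of_tendsto_of_le_of_le' tendsto_const_nhds hIM.neg ?_ ?_
      · filter_upwards [hev] with t ht
        obtain ⟨ht0, htL⟩ := hTspec t ht
        have hk := hkey 0 t le_rfl h0mem ht0.le htL ht0.le
        rw [hM01] at hk
        have h2 := hk.2
        rw [slope_def_field, hM01, sub_zero]
        rw [le_div_iff₀ ht0]
        nlinarith [h2]
      · filter_upwards [hev] with t ht
        obtain ⟨ht0, htL⟩ := hTspec t ht
        obtain ⟨hmt, hit⟩ := hM t ht0.le htL
        have hIMt : 0 < I (M t) := hIpos _ hmt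
        have hh := hhigh (M t) 1 hmt h1mem hmt.2
        rw [hit] at hh
        rw [slope_def_field, hM01, sub_zero]
        rw [div_le_iff₀ ht0]
        rw [mul_one_div, le_div_iff₀ hIMt] at hh
        nlinarith [hh]
    have hMT : Set.MapsTo M T (Set.Ioc (0:ℝ) 1) := by
      intro t ht
      exact (hM t ht.1 ht.2).1
    have hI1d' : HasDerivWithinAt I (derivWithin I (Set.Ioc (0:ℝ) 1) 1)
        (Set.Ioc (0:ℝ) 1) (M 0) := by
      rw [hM01]
      exact (hIC1.differentiableOn one_ne_zero 1 h1mem).hasDerivWithinAt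
    have hIM0 : HasDerivWithinAt (fun t => I (M t))
        (derivWithin I (Set.Ioc (0:ℝ) 1) 1 * -(I 1)) T 0 := by
      have h := hI1d'.comp (0:ℝ) hslope hMT
      simpa [Function.comp_def] using h
    have hrp : HasDerivAt (fun y : ℝ => (y / ω) ^ p)
        (p * (I 1 / ω) ^ (p - 1) * ω⁻¹) ((fun t => I (M t)) 0) := by
      simp only [hM01]
      exact hrpow (I 1) hI1pos.ne'
    have hfinal := hrp.comp_hasDerivWithinAt (0:ℝ) hIM0
    have heq : p * (I 1 / ω) ^ (p - 1) * ω⁻¹ * (derivWithin I (Set.Ioc (0:ℝ) 1) 1 * -(I 1))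
        = -p * ω ^ (-p) * derivWithin I (Set.Ioc (0:ℝ) 1) 1 * I 1 ^ p := by
      rw [halg _ _ hI1pos, Real.rpow_neg hωpos.le, div_eq_mul_inv]
      ring
    rw [heq] at hfinal
    have hfinal2 : HasDerivWithinAt (fun r => (I (M r) / ω) ^ p)
        (-p * ω ^ (-p) * derivWithin I (Set.Ioc (0:ℝ) 1) 1 * I 1 ^ p) T 0 := by
      simpa [Function.comp_def] using hfinal
    exact hfinal2.mono_of_mem_nhdsWithin hTnhds
end

section
/- Let n ∈ ℕ, n ≥ 2. Let I : (0,1] → (0,∞) be continuous and nondecreasing, L = ∫_0^1 dr/I(r) ∈ (0,∞], M as determined by ∫_{M(t)}^1 dr/I(r) = t, and η(r) = (I(M(r))/ω_{n−1})^{1/(n−1)}. Define Ω_I = {x = (x', x_n) ∈ ℝ^{n−1} × ℝ : 0 < x_n < L, |x'| < η(x_n)}. Then for every t ∈ [0, L), the n-dimensional Lebesgue measure of {x ∈ Ω_I : x_n > t} equals M(t); in particular, the Lebesgue measure of Ω_I equals 1. -/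
open MeasureTheory ENNReal NNReal

/-- One-dimensional change of variables for the Lebesgue integral. -/
theorem lintegral_image_eq_lintegral_abs_deriv_mul' {s : Set ℝ} {f : ℝ → ℝ} {f' : ℝ → ℝ}
    (hs : MeasurableSet s) (hf' : ∀ x ∈ s, HasDerivWithinAt f (f' x) s x)
    (hf : Set.InjOn f s) (g : ℝ → ℝ≥0∞) :
    ∫⁻ x in f '' s, g x = ∫⁻ x in s, ENNReal.ofReal |f' x| * g (f x) := by
  simpa only [ContinuousLinearMap.det_toSpanSingleton] using
    lintegral_image_eq_lintegral_abs_det_fderiv_mul volume hs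
      (fun x hx => (hf' x hx).hasFDerivWithinAt) hf g

/-- the layers `{x ∈ Ω_I : x_n > t}` of the domain
`Ω_I = {(x',x_n) : 0 < x_n < L, |x'| < η(x_n)}` have measure `M(t)`;
in particular `|Ω_I| = 1`. -/
theorem measure_of_layers_of_OmegaI (n : ℕ) (hn : 2 ≤ n) (I : ℝ → ℝ)
    (hIc : ContinuousOn I (Set.Ioc (0:ℝ) 1))
    (hImono : MonotoneOn I (Set.Ioc (0:ℝ) 1))
    (hIpos : ∀ t ∈ Set.Ioc (0:ℝ) 1, 0 < I t)
    (M : ℝ → ℝ)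
    (hM : ∀ t : ℝ, 0 ≤ t → ENNReal.ofReal t < Lint I →
      M t ∈ Set.Ioc (0:ℝ) 1 ∧ ∫ r in (M t)..1, 1 / I r = t) :
    (∀ t : ℝ, 0 ≤ t → ENNReal.ofReal t < Lint I →
      volume {p : EuclideanSpace ℝ (Fin (n - 1)) × ℝ |
          (0 < p.2 ∧ ENNReal.ofReal p.2 < Lint I ∧
            ‖p.1‖ < (I (M p.2) / omegaBall (n - 1)) ^ (1 / ((n : ℝ) - 1))) ∧ t < p.2}
        = ENNReal.ofReal (M t)) ∧
    volume {p : EuclideanSpace ℝ (Fin (n - 1)) × ℝ |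
        0 < p.2 ∧ ENNReal.ofReal p.2 < Lint I ∧
          ‖p.1‖ < (I (M p.2) / omegaBall (n - 1)) ^ (1 / ((n : ℝ) - 1))} = 1 := by
  classical
  -- Notation
  set F : ℝ → ℝ := fun x => ∫ r in x..1, 1 / I r with hFdef
  have hFapp : ∀ x, F x = ∫ r in x..1, 1 / I r := fun x => rfl
  -- continuity of 1 / I
  have hinvc : ContinuousOn (fun r => 1 / I r) (Set.Ioc (0:ℝ) 1) :=
    continuousOn_const.div hIc (fun r hr => (hIpos r hr).ne')
  have hinv_int : ∀ x : ℝ, 0 < x → x ≤ 1 →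
      IntervalIntegrable (fun r => 1 / I r) volume x 1 := by
    intro x hx hx1
    apply ContinuousOn.intervalIntegrable
    rw [Set.uIcc_of_le hx1]
    exact hinvc.mono (fun r hr => ⟨lt_of_lt_of_le hx hr.1, hr.2⟩)
  -- splitting F
  have hF_split : ∀ a b : ℝ, 0 < a → a ≤ b → b ≤ 1 →
      F a = (∫ r in a..b, 1 / I r) + F b := by
    intro a b ha hab hb1
    have h1 : IntervalIntegrable (fun r => 1 / I r) volume a b :=
      (hinv_int a ha (hab.trans hb1)).mono_set
        (by rw [Set.uIcc_of_le hab, Set.uIcc_of_le (hab.trans hb1)]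
            exact Set.Icc_subset_Icc le_rfl hb1)
    have h2 : IntervalIntegrable (fun r => 1 / I r) volume b 1 :=
      hinv_int b (ha.trans_le hab) hb1
    rw [hFapp, hFapp]
    exact (intervalIntegral.integral_add_adjacent_intervals h1 h2).symm
  -- F is strictly antitone on (0,1]
  have hFanti : StrictAntiOn F (Set.Ioc (0:ℝ) 1) := by
    intro a ha b hb hab
    rw [hF_split a b ha.1 hab.le hb.2]
    have hpos : 0 < ∫ r in a..b, 1 / I r := by
      apply intervalIntegral.intervalIntegral_pos_of_pos_on
      · exact (hinv_int a ha.1 (hab.le.trans hb.2)).mono_set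
          (by rw [Set.uIcc_of_le hab.le, Set.uIcc_of_le (hab.le.trans hb.2)]
              exact Set.Icc_subset_Icc le_rfl hb.2)
      · intro r hr
        exact one_div_pos.mpr (hIpos r ⟨ha.1.trans hr.1, hr.2.le.trans hb.2⟩)
      · exact hab
    linarith
  have hF1 : F 1 = 0 := by rw [hFapp]; exact intervalIntegral.integral_same
  -- positive lower bound for pieces of Lint
  have hlow : ∀ a b : ℝ, 0 ≤ a → a < b → b ≤ 1 →
      0 < ∫⁻ r in Set.Ioo a b, ENNReal.ofReal (1 / I r) := by
    intro a b ha hab hb1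
    have hIb : 0 < I b := hIpos b ⟨ha.trans_lt hab, hb1⟩
    have hmono : ∀ r ∈ Set.Ioo a b,
        ENNReal.ofReal (1 / I b) ≤ ENNReal.ofReal (1 / I r) := by
      intro r hr
      have hrm : r ∈ Set.Ioc (0:ℝ) 1 := ⟨ha.trans_lt hr.1, hr.2.le.trans hb1⟩
      exact ENNReal.ofReal_le_ofReal
        (one_div_le_one_div_of_le (hIpos r hrm)
          (hImono hrm ⟨ha.trans_lt hab, hb1⟩ hr.2.le))
    calc (0:ℝ≥0∞) < ENNReal.ofReal (1 / I b) * volume (Set.Ioo a b) := by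
          refine ENNReal.mul_pos ?_ ?_
          · exact (ENNReal.ofReal_pos.mpr (one_div_pos.mpr hIb)).ne'
          · rw [Real.volume_Ioo]
            exact (ENNReal.ofReal_pos.mpr (by linarith)).ne'
      _ = ∫⁻ _ in Set.Ioo a b, ENNReal.ofReal (1 / I b) :=
          (setLIntegral_const _ _).symm
      _ ≤ ∫⁻ r in Set.Ioo a b, ENNReal.ofReal (1 / I r) :=
          lintegral_mono_ae ((ae_restrict_iff' measurableSet_Ioo).2 (.of_forall hmono))
  have hLpos : 0 < Lint I := hlow 0 1 le_rfl one_pos le_rfl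
  -- `ofReal (F x)` as a lower Lebesgue integral
  have hof : ∀ x : ℝ, 0 < x → x ≤ 1 →
      ENNReal.ofReal (F x) = ∫⁻ r in Set.Ioo x 1, ENNReal.ofReal (1 / I r) := by
    intro x hx hx1
    have hint : IntegrableOn (fun r => 1 / I r) (Set.Ioc x 1) := (hinv_int x hx hx1).1
    have hnn : 0 ≤ᵐ[volume.restrict (Set.Ioc x 1)] fun r => 1 / I r :=
      (ae_restrict_iff' measurableSet_Ioc).2 (.of_forall fun r hr =>
        (one_div_pos.mpr (hIpos r ⟨hx.trans_le hr.1.le, hr.2⟩)).le)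
    rw [hFapp, intervalIntegral.integral_of_le hx1,
      ofReal_integral_eq_lintegral_ofReal hint hnn,
      setLIntegral_congr (Ioo_ae_eq_Ioc (μ := volume) (a := x) (b := 1))]
  -- Lint dominates ofReal (F x) strictly on the interior
  have hFlt : ∀ x : ℝ, 0 < x → x < 1 → ENNReal.ofReal (F x) < Lint I := by
    intro x hx hx1
    have hsplit : Lint I = ENNReal.ofReal (F x)
        + ∫⁻ r in Set.Ioo 0 x, ENNReal.ofReal (1 / I r) := by
      rw [hof x hx hx1.le, Lint,
        ← Set.Ioo_union_Ico_eq_Ioo hx hx1.le,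
        lintegral_union measurableSet_Ico (Set.Ico_disjoint_Ico_same.mono_left Set.Ioo_subset_Ico_self),
        setLIntegral_congr (Ico_ae_eq_Ioc (μ := volume) (a := x) (b := 1)),
        ← setLIntegral_congr (Ioo_ae_eq_Ioc (μ := volume) (a := x) (b := 1)),
        add_comm]
    rw [hsplit]
    exact ENNReal.lt_add_right ENNReal.ofReal_ne_top (hlow 0 x le_rfl hx hx1.le).ne'
  -- M is the inverse of F; basic consequences
  have hMlt : ∀ s t : ℝ, 0 ≤ t → t < s → ENNReal.ofReal s < Lint I → M s < M t := by
    intro s t ht0 hts hsL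
    have htL : ENNReal.ofReal t < Lint I :=
      lt_of_le_of_lt (ENNReal.ofReal_le_ofReal hts.le) hsL
    obtain ⟨hMs, hFs⟩ := hM s (ht0.trans hts.le) hsL
    obtain ⟨hMt, hFt⟩ := hM t ht0 htL
    have hFs' : F (M s) = s := hFs
    have hFt' : F (M t) = t := hFt
    by_contra h
    push_neg at h
    rcases eq_or_lt_of_le h with h' | h'
    · rw [h'] at hFt'
      rw [hFs'] at hFt'
      linarith
    · have := hFanti hMt hMs h'
      rw [hFs', hFt'] at this
      linarith
  -- the slice volume in `ℝ^{n-1}`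
  haveI : Nonempty (Fin (n - 1)) := ⟨⟨0, by omega⟩⟩
  haveI : Nontrivial (EuclideanSpace ℝ (Fin (n - 1))) := by
    refine ⟨0, WithLp.toLp 2 (fun _ => (1:ℝ)), fun h => ?_⟩
    have := congrArg (fun v : EuclideanSpace ℝ (Fin (n - 1)) => v ⟨0, by omega⟩) h
    simp [EuclideanSpace] at this
  have hballlt : volume (Metric.ball (0 : EuclideanSpace ℝ (Fin (n - 1))) 1) < ⊤ :=
    measure_ball_lt_top
  have hballpos : 0 < volume (Metric.ball (0 : EuclideanSpace ℝ (Fin (n - 1))) 1) :=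
    Metric.measure_ball_pos _ _ one_pos
  have hωpos : 0 < omegaBall (n - 1) := ENNReal.toReal_pos hballpos.ne' hballlt.ne
  have hballω : volume (Metric.ball (0 : EuclideanSpace ℝ (Fin (n - 1))) 1)
      = ENNReal.ofReal (omegaBall (n - 1)) := (ENNReal.ofReal_toReal hballlt.ne).symm
  have hdcast : ((n - 1 : ℕ) : ℝ) = (n : ℝ) - 1 := by
    have : (1:ℕ) ≤ n := by omega
    push_cast [Nat.cast_sub this]
    ring
  have hne : ((n : ℝ) - 1) ≠ 0 := by
    have : (2:ℝ) ≤ n := by exact_mod_cast hn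
    linarith
  have hslice : ∀ s : ℝ, M s ∈ Set.Ioc (0:ℝ) 1 →
      volume (Metric.ball (0 : EuclideanSpace ℝ (Fin (n - 1)))
        ((I (M s) / omegaBall (n - 1)) ^ (1 / ((n : ℝ) - 1))))
      = ENNReal.ofReal (I (M s)) := by
    intro s hMs
    have hIM : 0 < I (M s) := hIpos _ hMs
    have hbase : 0 ≤ I (M s) / omegaBall (n - 1) := (div_pos hIM hωpos).le
    have hge : 0 ≤ (I (M s) / omegaBall (n - 1)) ^ (1 / ((n : ℝ) - 1)) :=
      Real.rpow_nonneg hbase _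
    rw [Measure.addHaar_ball volume _ hge, hballω, finrank_euclideanSpace_fin,
      ← ENNReal.ofReal_mul (by positivity)]
    congr 1
    rw [← Real.rpow_natCast ((I (M s) / omegaBall (n - 1)) ^ (1 / ((n : ℝ) - 1))) (n - 1),
      ← Real.rpow_mul hbase, hdcast, one_div, inv_mul_cancel₀ hne, Real.rpow_one,
      div_mul_cancel₀ _ hωpos.ne']
  -- antitonicity of the slice radius
  set geom : ℝ → ℝ := fun s => (I (M s) / omegaBall (n - 1)) ^ (1 / ((n : ℝ) - 1)) with hgeom
  have hgeom_anti : ∀ s₁ s₂ : ℝ, 0 < s₁ → s₁ ≤ s₂ → ENNReal.ofReal s₂ < Lint I →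
      geom s₂ ≤ geom s₁ := by
    intro s₁ s₂ hs₁ h12 hs₂L
    have hs₁L : ENNReal.ofReal s₁ < Lint I :=
      lt_of_le_of_lt (ENNReal.ofReal_le_ofReal h12) hs₂L
    obtain ⟨hM1, _⟩ := hM s₁ hs₁.le hs₁L
    obtain ⟨hM2, _⟩ := hM s₂ (hs₁.le.trans h12) hs₂L
    have hMle : M s₂ ≤ M s₁ := by
      rcases eq_or_lt_of_le h12 with h' | h'
      · rw [h']
      · exact (hMlt s₂ s₁ hs₁.le h' hs₂L).le
    have hIle : I (M s₂) ≤ I (M s₁) := hImono hM2 hM1 hMle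
    have h2pos : 0 < I (M s₂) := hIpos _ hM2
    have hnpos : (0:ℝ) < (n:ℝ) - 1 := by
      have : (2:ℝ) ≤ n := by exact_mod_cast hn
      linarith
    exact Real.rpow_le_rpow (by positivity) (by gcongr) (le_of_lt (one_div_pos.mpr hnpos))
  -- measurability of the relevant planar sets
  have hmeasSt : ∀ t : ℝ, MeasurableSet {s : ℝ | t < s ∧ ENNReal.ofReal s < Lint I} := by
    intro t
    have : {s : ℝ | t < s ∧ ENNReal.ofReal s < Lint I}
        = Set.Ioi t ∩ (ENNReal.ofReal ⁻¹' Set.Iio (Lint I)) := rfl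
    rw [this]
    exact measurableSet_Ioi.inter
      (ENNReal.continuous_ofReal.measurable measurableSet_Iio)
  have hΩmeas : ∀ t : ℝ, 0 ≤ t → MeasurableSet {p : EuclideanSpace ℝ (Fin (n - 1)) × ℝ |
      (0 < p.2 ∧ ENNReal.ofReal p.2 < Lint I ∧ ‖p.1‖ < geom p.2) ∧ t < p.2} := by
    intro t ht
    have heq : {p : EuclideanSpace ℝ (Fin (n - 1)) × ℝ |
        (0 < p.2 ∧ ENNReal.ofReal p.2 < Lint I ∧ ‖p.1‖ < geom p.2) ∧ t < p.2}
        = ⋃ (q : ℚ), {x : EuclideanSpace ℝ (Fin (n - 1)) | ‖x‖ < (q:ℝ)} ×ˢ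
            {s : ℝ | (t < s ∧ ENNReal.ofReal s < Lint I) ∧ (q:ℝ) ≤ geom s} := by
      ext p
      simp only [Set.mem_setOf_eq, Set.mem_iUnion, Set.mem_prod]
      constructor
      · rintro ⟨⟨hp0, hpL, hpg⟩, hpt⟩
        obtain ⟨q, hq1, hq2⟩ := exists_rat_btwn hpg
        exact ⟨q, hq1, ⟨hpt, hpL⟩, hq2.le⟩
      · rintro ⟨q, hq1, ⟨hpt, hpL⟩, hq2⟩
        exact ⟨⟨ht.trans_lt hpt, hpL, hq1.trans_le hq2⟩, hpt⟩
    rw [heq]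
    refine MeasurableSet.iUnion fun q => MeasurableSet.prod ?_ ?_
    · exact measurableSet_lt measurable_norm measurable_const
    · apply Set.OrdConnected.measurableSet
      constructor
      rintro s₁ ⟨⟨ht1, hL1⟩, hg1⟩ s₂ ⟨⟨ht2, hL2⟩, hg2⟩ s hs
      refine ⟨⟨ht1.trans_le hs.1, lt_of_le_of_lt (ENNReal.ofReal_le_ofReal hs.2) hL2⟩, ?_⟩
      exact hg2.trans (hgeom_anti s s₂ (ht.trans_lt (ht1.trans_le hs.1)) hs.2 hL2)
  -- main computation for each layer
  have main : ∀ t : ℝ, 0 ≤ t → ENNReal.ofReal t < Lint I →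
      volume {p : EuclideanSpace ℝ (Fin (n - 1)) × ℝ |
          (0 < p.2 ∧ ENNReal.ofReal p.2 < Lint I ∧ ‖p.1‖ < geom p.2) ∧ t < p.2}
        = ENNReal.ofReal (M t) := by
    intro t ht0 htL
    obtain ⟨hMt, hFt⟩ := hM t ht0 htL
    have hMt1 : M t ≤ 1 := hMt.2
    -- the image identity
    have himg : F '' Set.Ioo 0 (M t) = {s : ℝ | t < s ∧ ENNReal.ofReal s < Lint I} := by
      have hFt' : F (M t) = t := hFt
      ext s
      simp only [Set.mem_image, Set.mem_Ioo, Set.mem_setOf_eq]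
      constructor
      · rintro ⟨x, hx, rfl⟩
        have hx1 : x < 1 := lt_of_lt_of_le hx.2 hMt1
        have hxm : x ∈ Set.Ioc (0:ℝ) 1 := ⟨hx.1, hx1.le⟩
        have h1 : F (M t) < F x := hFanti hxm hMt hx.2
        rw [hFt'] at h1
        exact ⟨h1, hFlt x hx.1 hx1⟩
      · rintro ⟨hts, hsL⟩
        have hs0 : 0 < s := ht0.trans_lt hts
        obtain ⟨hMs, hFs⟩ := hM s hs0.le hsL
        refine ⟨M s, ⟨hMs.1, hMlt s t ht0 hts hsL⟩, ?_⟩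
        exact hFs
    have hsubset : Set.Ioo (0:ℝ) (M t) ⊆ Set.Ioc (0:ℝ) 1 :=
      fun x hx => ⟨hx.1, hx.2.le.trans hMt1⟩
    have hinj : Set.InjOn F (Set.Ioo 0 (M t)) := hFanti.injOn.mono hsubset
    -- derivative of F
    have hderiv : ∀ x ∈ Set.Ioo (0:ℝ) (M t), HasDerivAt F (-(1 / I x)) x := by
      intro x hx
      have hx1 : x < 1 := lt_of_lt_of_le hx.2 hMt1
      have hnhds : Set.Ioo (0:ℝ) 1 ∈ nhds x := isOpen_Ioo.mem_nhds ⟨hx.1, hx1⟩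
      have hci : ContinuousAt (fun r => 1 / I r) x :=
        (hinvc.mono Set.Ioo_subset_Ioc_self).continuousAt hnhds
      have h1 : HasDerivAt (fun u => ∫ r in (1:ℝ)..u, 1 / I r) (1 / I x) x := by
        apply intervalIntegral.integral_hasDerivAt_right
        · exact (hinv_int x hx.1 hx1.le).symm
        · exact ⟨Set.Ioo 0 1, hnhds,
            ((hinvc.mono Set.Ioo_subset_Ioc_self).aestronglyMeasurable measurableSet_Ioo)⟩
        · exact hci
      have hFneg : F = fun u => -∫ r in (1:ℝ)..u, 1 / I r := by
        funext u
        rw [hFapp, intervalIntegral.integral_symm]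
      rw [hFneg]
      exact h1.neg
    -- change of variables
    have hsub : ∫⁻ s in {s : ℝ | t < s ∧ ENNReal.ofReal s < Lint I},
        ENNReal.ofReal (I (M s)) = ENNReal.ofReal (M t) := by
      rw [← himg, lintegral_image_eq_lintegral_abs_deriv_mul'
        (f' := fun x => -(1 / I x)) measurableSet_Ioo
        (fun x hx => (hderiv x hx).hasDerivWithinAt) hinj
        (fun s => ENNReal.ofReal (I (M s)))]
      have hptwise : ∀ x ∈ Set.Ioo (0:ℝ) (M t),
          ENNReal.ofReal |-(1 / I x)| * ENNReal.ofReal (I (M (F x))) = 1 := by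
        intro x hx
        have hx1 : x < 1 := lt_of_lt_of_le hx.2 hMt1
        have hxm : x ∈ Set.Ioc (0:ℝ) 1 := ⟨hx.1, hx1.le⟩
        have hIx : 0 < I x := hIpos x hxm
        have hFx0 : 0 ≤ F x := by
          have hFt' : F (M t) = t := hFt
          have h1 : F (M t) < F x := hFanti hxm hMt hx.2
          rw [hFt'] at h1
          linarith
        have hMFx : M (F x) = x := by
          obtain ⟨hm, he⟩ := hM (F x) hFx0 (hFlt x hx.1 hx1)
          exact hFanti.injOn hm hxm he
        rw [hMFx, abs_neg, abs_of_pos (one_div_pos.mpr hIx),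
          ← ENNReal.ofReal_mul (by positivity), one_div, inv_mul_cancel₀ hIx.ne',
          ENNReal.ofReal_one]
      rw [setLIntegral_congr_fun measurableSet_Ioo hptwise]
      rw [setLIntegral_one, Real.volume_Ioo, sub_zero]
    -- Fubini
    rw [Measure.volume_eq_prod, Measure.prod_apply_symm (hΩmeas t ht0)]
    have hfun : (fun s => volume ((fun x : EuclideanSpace ℝ (Fin (n - 1)) => (x, s)) ⁻¹'
        {p : EuclideanSpace ℝ (Fin (n - 1)) × ℝ |
          (0 < p.2 ∧ ENNReal.ofReal p.2 < Lint I ∧ ‖p.1‖ < geom p.2) ∧ t < p.2}))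
        = fun s => Set.indicator {s : ℝ | t < s ∧ ENNReal.ofReal s < Lint I}
            (fun s => ENNReal.ofReal (I (M s))) s := by
      funext s
      by_cases hs : t < s ∧ ENNReal.ofReal s < Lint I
      · have h0s : 0 < s := ht0.trans_lt hs.1
        have hpre : ((fun x : EuclideanSpace ℝ (Fin (n - 1)) => (x, s)) ⁻¹'
            {p : EuclideanSpace ℝ (Fin (n - 1)) × ℝ |
              (0 < p.2 ∧ ENNReal.ofReal p.2 < Lint I ∧ ‖p.1‖ < geom p.2) ∧ t < p.2})
            = Metric.ball 0 (geom s) := by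
          ext x
          simp only [Set.mem_preimage, Set.mem_setOf_eq, mem_ball_zero_iff,
            h0s, hs.1, hs.2, true_and, and_true]
        obtain ⟨hMs, _⟩ := hM s h0s.le hs.2
        rw [hpre,
          Set.indicator_of_mem (show s ∈ {s : ℝ | t < s ∧ ENNReal.ofReal s < Lint I} from hs)]
        exact hslice s hMs
      · have hpre : ((fun x : EuclideanSpace ℝ (Fin (n - 1)) => (x, s)) ⁻¹'
            {p : EuclideanSpace ℝ (Fin (n - 1)) × ℝ |
              (0 < p.2 ∧ ENNReal.ofReal p.2 < Lint I ∧ ‖p.1‖ < geom p.2) ∧ t < p.2})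
            = ∅ := by
          ext x
          simp only [Set.mem_preimage, Set.mem_setOf_eq, Set.mem_empty_iff_false, iff_false]
          rintro ⟨⟨h1, h2, h3⟩, h4⟩
          exact hs ⟨h4, h2⟩
        rw [hpre, measure_empty,
          Set.indicator_of_notMem (show s ∉ {s : ℝ | t < s ∧ ENNReal.ofReal s < Lint I} from hs)]
    rw [hfun, lintegral_indicator (hmeasSt t) _]
    exact hsub
  refine ⟨main, ?_⟩
  have h0L : ENNReal.ofReal 0 < Lint I := by simpa using hLpos
  have hΩeq : {p : EuclideanSpace ℝ (Fin (n - 1)) × ℝ |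
      0 < p.2 ∧ ENNReal.ofReal p.2 < Lint I ∧ ‖p.1‖ < geom p.2}
      = {p : EuclideanSpace ℝ (Fin (n - 1)) × ℝ |
      (0 < p.2 ∧ ENNReal.ofReal p.2 < Lint I ∧ ‖p.1‖ < geom p.2) ∧ (0:ℝ) < p.2} :=
    Set.ext fun p => ⟨fun h => ⟨h, h.1⟩, fun h => h.1⟩
  rw [hΩeq, main 0 le_rfl h0L]
  obtain ⟨hM0, hF0⟩ := hM 0 le_rfl h0L
  have hM01 : M 0 = 1 := by
    apply hFanti.injOn hM0 (Set.mem_Ioc.mpr ⟨one_pos, le_rfl⟩)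
    rw [hF1]
    exact hF0
  rw [hM01, ENNReal.ofReal_one]
end
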